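/- arXiv:1103.4198 — 12 statements merged into one kernel-verified Lean document; each statement's English description precedes it below -/
import Mathlib

section
/- The real linear span of the set of functions t ↦ t^k e^{−x t} cos(y t) and t ↦ t^k e^{−x t} sin(y t) on [0,∞), where k ranges over nonnegative integers, x over positive reals, and y over all reals, is dense in C₀(ℝ₊) with respect to the supremum norm. -/
open scoped NNReal

/-- The set of damped sinusoids `t ↦ tᵏ e^{-x t} cos(y t)` and `t ↦ tᵏ e^{-x t} sin(y t)`
on `[0,∞)`, with `k` a nonnegative integer, `x > 0` and `y` real. -/
def dampedSinusoids : Set (ℝ≥0 → ℝ) :=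
  {f | ∃ (k : ℕ) (x y : ℝ), 0 < x ∧
    (f = (fun t : ℝ≥0 => (t : ℝ) ^ k * Real.exp (-x * t) * Real.cos (y * t)) ∨
      f = (fun t : ℝ≥0 => (t : ℝ) ^ k * Real.exp (-x * t) * Real.sin (y * t)))}

/-- The real linear span of the damped sinusoids is dense in `C₀(ℝ₊)` for the
supremum norm: every continuous `e : [0,∞) → ℝ` tending to `0` at infinity can be
uniformly approximated by finite linear combinations of damped sinusoids. -/
theorem dampedSinusoids_span_dense
    (e : ℝ≥0 → ℝ) (he : Continuous e) (he0 : Filter.Tendsto e Filter.atTop (nhds 0))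
    (ε : ℝ) (hε : 0 < ε) :
    ∃ g ∈ Submodule.span ℝ dampedSinusoids, ∀ t : ℝ≥0, |e t - g t| < ε := by
  classical
  set f : ℝ → ℝ := fun u => if u ≤ 0 then 0 else e (Real.toNNReal (-Real.log u)) with hf
  have hcont : ContinuousOn f (Set.Icc 0 1) := by
    intro u hu
    rcases eq_or_lt_of_le hu.1 with h0 | h0
    · subst h0
      have hEv : ∀ v ∈ Set.Ioi (0:ℝ), f v = e (Real.toNNReal (-Real.log v)) := by
        intro v hv; simp [f, not_le.2 (Set.mem_Ioi.1 hv)]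
      have hT : Filter.Tendsto f (nhdsWithin 0 (Set.Ioi 0)) (nhds 0) := by
        have h1 : Filter.Tendsto (fun v : ℝ => Real.toNNReal (-Real.log v))
            (nhdsWithin 0 (Set.Ioi 0)) Filter.atTop :=
          tendsto_real_toNNReal_atTop.comp
            (Filter.tendsto_neg_atTop_iff.2 Real.tendsto_log_nhdsGT_zero)
        refine (he0.comp h1).congr' ?_
        filter_upwards [self_mem_nhdsWithin] with v hv
        exact (hEv v hv).symm
      have hT' : Filter.Tendsto f (nhdsWithin 0 (Set.Icc (0:ℝ) 1)) (nhds 0) := by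
        have hsub : Set.Icc (0:ℝ) 1 ⊆ {0} ∪ Set.Ioi 0 := by
          intro v hv; rcases eq_or_lt_of_le hv.1 with h | h
          · exact Or.inl h.symm
          · exact Or.inr h
        refine Filter.Tendsto.mono_left ?_ (nhdsWithin_mono _ hsub)
        rw [nhdsWithin_union]
        refine Filter.Tendsto.sup ?_ hT
        rw [nhdsWithin_singleton]
        have : f 0 = 0 := by simp [f]
        simpa [this] using tendsto_pure_nhds f 0
      have hf0 : f 0 = 0 := by simp [f]
      rw [ContinuousWithinAt, hf0]; exact hT'
    · have : ContinuousAt f u := by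
        have hcont : ContinuousAt (fun v : ℝ => e (Real.toNNReal (-Real.log v))) u :=
          he.continuousAt.comp <| (continuous_real_toNNReal.continuousAt).comp
            ((Real.continuousAt_log (ne_of_gt h0)).neg)
        refine hcont.congr ?_
        filter_upwards [eventually_gt_nhds h0] with v hv
        simp [f, not_le.2 hv]
      exact this.continuousWithinAt
  obtain ⟨p, hp⟩ := exists_polynomial_near_of_continuousOn 0 1 f hcont (ε/2) (by linarith)
  set q : Polynomial ℝ := p - Polynomial.C (p.eval 0) with hq
  have hq0 : q.coeff 0 = 0 := by simp [hq, Polynomial.coeff_sub, Polynomial.coeff_C, Polynomial.coeff_zero_eq_eval_zero]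
  set g : ℝ≥0 → ℝ := ∑ k ∈ q.support, q.coeff k •
      (fun t : ℝ≥0 => (t : ℝ) ^ (0:ℕ) * Real.exp (-(k:ℝ) * t) * Real.cos (0 * t)) with hg
  refine ⟨g, ?_, ?_⟩
  · refine Submodule.sum_mem _ fun k hk => Submodule.smul_mem _ _ (Submodule.subset_span ?_)
    have hkne : k ≠ 0 := by
      intro h; subst h; exact (Polynomial.mem_support_iff.1 hk) hq0
    exact ⟨0, (k:ℝ), 0, by positivity, Or.inl rfl⟩
  · intro t
    have hgt : g t = q.eval (Real.exp (-(t:ℝ))) := by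
      rw [Polynomial.eval_eq_sum, Polynomial.sum_def]
      simp only [hg, Finset.sum_apply, Pi.smul_apply, smul_eq_mul]
      refine Finset.sum_congr rfl fun k hk => ?_
      have : Real.exp (-(k:ℝ) * t) = Real.exp (-(t:ℝ)) ^ k := by
        rw [← Real.exp_nat_mul]; ring_nf
      rw [neg_mul] at this
      simp [this]
    have hu : Real.exp (-(t:ℝ)) ∈ Set.Icc (0:ℝ) 1 :=
      ⟨(Real.exp_pos _).le, Real.exp_le_one_iff.2 (by simp)⟩
    have hfu : f (Real.exp (-(t:ℝ))) = e t := by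
      have h1 : ¬ Real.exp (-(t:ℝ)) ≤ 0 := not_le.2 (Real.exp_pos _)
      simp [f, h1, Real.log_exp, Real.toNNReal_coe]
    have h1 := hp _ hu
    have h2 := hp 0 ⟨le_refl 0, zero_le_one⟩
    have hf0 : f 0 = 0 := by simp [f]
    rw [hfu] at h1
    rw [hf0, sub_zero] at h2
    have : e t - g t = (e t - p.eval (Real.exp (-(t:ℝ)))) + p.eval 0 := by
      rw [hgt, hq]; simp; ring
    rw [this]
    calc |(e t - p.eval (Real.exp (-(t:ℝ)))) + p.eval 0|
        ≤ |e t - p.eval (Real.exp (-(t:ℝ)))| + |p.eval 0| := abs_add_le _ _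
      _ < ε/2 + ε/2 := by rw [abs_sub_comm]; exact add_lt_add h1 h2
      _ = ε := by ring
end

section
/- Let m ≥ 1 be an integer. The real linear span of the set of functions t ↦ t^k e^{−x t} cos(y t) and t ↦ t^k e^{−x t} sin(y t) on [0,∞), where k ranges over integers with k ≥ m, x over positive reals, and y over all reals, is dense, with respect to the supremum norm, in the subspace {e ∈ C₀(ℝ₊) : e(0) = 0}. -/
open scoped NNReal
open Filter Real

/-- Bound `t^m e^{-t} ≤ m^m` for `t ≥ 0`, `m ≥ 1`. -/
lemma aux_pow_mul_exp_le (m : ℕ) (hm : 1 ≤ m) (t : ℝ) (ht : 0 ≤ t) :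
    t ^ m * Real.exp (-t) ≤ (m : ℝ) ^ m := by
  have hm0 : (0:ℝ) < m := by exact_mod_cast hm
  have hbase : t * Real.exp (-(t / m)) ≤ m := by
    have h1 : t / m ≤ Real.exp (t / m) := by
      have := Real.add_one_le_exp (t / m)
      linarith
    have h2 : t ≤ (m : ℝ) * Real.exp (t / m) := by
      have := mul_le_mul_of_nonneg_left h1 (le_of_lt hm0)
      calc t = (m : ℝ) * (t / m) := by field_simp
        _ ≤ (m : ℝ) * Real.exp (t / m) := this
    rw [Real.exp_neg, mul_inv_le_iff₀ (Real.exp_pos _)]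
    linarith [h2, Real.exp_pos (t / m)]
  have hE : Real.exp (-(t / m)) ^ m = Real.exp (-t) := by
    rw [← Real.exp_nat_mul]
    congr 1
    field_simp
  calc t ^ m * Real.exp (-t) = (t * Real.exp (-(t / m))) ^ m := by
        rw [mul_pow, hE]
    _ ≤ (m : ℝ) ^ m := by
        apply pow_le_pow_left₀ (by positivity) hbase

/-- Approximation of C₀ functions by combinations of exponentials. -/
lemma aux_exp_approx (h : ℝ≥0 → ℝ) (hc : Continuous h)
    (h0 : Filter.Tendsto h Filter.atTop (nhds 0)) (ε : ℝ) (hε : 0 < ε) :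
    ∃ (d : ℕ) (c : ℕ → ℝ), ∀ t : ℝ≥0,
      |h t - ∑ i ∈ Finset.range d, c i * Real.exp (-((i : ℝ) + 1) * t)| ≤ ε := by
  set F : ℝ → ℝ := fun u => if u = 0 then 0 else h (Real.toNNReal (-Real.log u)) with hF
  have hF0 : F 0 = 0 := by simp [hF]
  have hFcomp : ∀ u : ℝ, u ≠ 0 → F u = h (Real.toNNReal (-Real.log u)) := by
    intro u hu; simp [hF, hu]
  have hFcont : ContinuousOn F (Set.Icc 0 1) := by
    intro u hu
    rcases eq_or_lt_of_le hu.1 with h0u | h0u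
    · -- u = 0
      subst h0u
      rw [ContinuousWithinAt]
      rw [hF0]
      have hmono : nhdsWithin (0:ℝ) (Set.Icc 0 1) ≤ nhdsWithin 0 (Set.Ioi 0 ∪ {0}) := by
        apply nhdsWithin_mono
        intro x hx
        rcases eq_or_lt_of_le hx.1 with h | h
        · exact Or.inr (by simp [h.symm])
        · exact Or.inl h
      apply Filter.Tendsto.mono_left _ hmono
      rw [nhdsWithin_union, Filter.tendsto_sup]
      constructor
      · -- on Ioi 0
        have hlog : Filter.Tendsto (fun u : ℝ => -Real.log u) (nhdsWithin 0 (Set.Ioi 0)) Filter.atTop := by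
          have := Real.tendsto_log_nhdsGT_zero
          exact Filter.tendsto_neg_atBot_atTop.comp this
        have hcomp : Filter.Tendsto (fun u : ℝ => h (Real.toNNReal (-Real.log u)))
            (nhdsWithin 0 (Set.Ioi 0)) (nhds 0) :=
          h0.comp (tendsto_real_toNNReal_atTop.comp hlog)
        apply hcomp.congr'
        filter_upwards [self_mem_nhdsWithin] with u hu
        exact (hFcomp u (ne_of_gt hu)).symm
      · -- on {0}
        refine Filter.Tendsto.congr' ?_ tendsto_const_nhds
        filter_upwards [self_mem_nhdsWithin] with x hx
        simp only [Set.mem_singleton_iff] at hx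
        simp [hx, hF0]
    · -- u > 0
      have hCA : ContinuousAt F u := by
        have hc2 : ContinuousAt (fun u : ℝ => h (Real.toNNReal (-Real.log u))) u := by
          apply hc.continuousAt.comp
          apply continuous_real_toNNReal.continuousAt.comp
          exact (Real.continuousAt_log (ne_of_gt h0u)).neg
        apply hc2.congr
        filter_upwards [isOpen_ne.mem_nhds (ne_of_gt h0u : u ≠ 0)] with v hv
        exact (hFcomp v hv).symm
      exact hCA.continuousWithinAt
  obtain ⟨p, hp⟩ := exists_polynomial_near_of_continuousOn 0 1 F hFcont (ε / 2) (by linarith)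
  refine ⟨p.natDegree, fun i => p.coeff (i + 1), fun t => ?_⟩
  set u : ℝ := Real.exp (-(t : ℝ)) with hu
  have hu0 : 0 < u := Real.exp_pos _
  have huI : u ∈ Set.Icc (0:ℝ) 1 := ⟨le_of_lt hu0, Real.exp_le_one_iff.mpr (neg_nonpos.mpr t.coe_nonneg)⟩
  have hFu : F u = h t := by
    rw [hFcomp u (ne_of_gt hu0), hu, Real.log_exp, neg_neg, Real.toNNReal_coe]
  have hsum : ∑ i ∈ Finset.range p.natDegree, p.coeff (i + 1) * Real.exp (-((i : ℝ) + 1) * t)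
      = p.eval u - p.coeff 0 := by
    have hpow : ∀ i : ℕ, Real.exp (-((i : ℝ) + 1) * t) = u ^ (i + 1) := by
      intro i
      rw [hu, ← Real.exp_nat_mul]
      congr 1
      push_cast
      ring
    have heval : p.eval u = ∑ i ∈ Finset.range (p.natDegree + 1), p.coeff i * u ^ i :=
      p.eval_eq_sum_range u
    rw [heval, Finset.sum_range_succ']
    simp only [pow_zero, mul_one]
    rw [add_sub_cancel_right]
    apply Finset.sum_congr rfl
    intro i _
    rw [hpow i]
  rw [hsum]
  have h1 : |p.eval u - F u| < ε / 2 := hp u huI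
  have h2 : |p.eval 0 - F 0| < ε / 2 := hp 0 (by norm_num)
  have hc0 : p.coeff 0 = p.eval 0 := Polynomial.coeff_zero_eq_eval_zero p
  have key : h ↑t - (p.eval u - p.coeff 0) = -(p.eval u - F u) + (p.eval 0 - F 0) := by
    rw [hFu.symm, hc0, hF0]
    ring
  rw [key]
  calc |-(p.eval u - F u) + (p.eval 0 - F 0)| ≤ |-(p.eval u - F u)| + |p.eval 0 - F 0| := abs_add_le _ _
    _ = |p.eval u - F u| + |p.eval 0 - F 0| := by rw [abs_neg]
    _ ≤ ε := by linarith

/-- The set of damped sinusoids `t ↦ tᵏ e^{-x t} cos(y t)` and `t ↦ tᵏ e^{-x t} sin(y t)`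
on `[0,∞)`, with `k ≥ m` an integer, `x > 0` and `y` real. -/
def dampedSinusoidsFrom (m : ℕ) : Set (ℝ≥0 → ℝ) :=
  {f | ∃ (k : ℕ) (x y : ℝ), m ≤ k ∧ 0 < x ∧
    (f = (fun t : ℝ≥0 => (t : ℝ) ^ k * Real.exp (-x * t) * Real.cos (y * t)) ∨
      f = (fun t : ℝ≥0 => (t : ℝ) ^ k * Real.exp (-x * t) * Real.sin (y * t)))}

/-- For `m ≥ 1`, the real linear span of the damped sinusoids `tᵏ e^{-x t} cos(y t)`,
`tᵏ e^{-x t} sin(y t)` with `k ≥ m`, `x > 0`, `y ∈ ℝ` is dense, for the supremum norm,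
in the subspace `{e ∈ C₀(ℝ₊) : e 0 = 0}`. -/
theorem dampedSinusoidsFrom_span_dense
    (m : ℕ) (hm : 1 ≤ m)
    (e : ℝ≥0 → ℝ) (he : Continuous e) (he0 : Filter.Tendsto e Filter.atTop (nhds 0))
    (he00 : e 0 = 0) (ε : ℝ) (hε : 0 < ε) :
    ∃ g ∈ Submodule.span ℝ (dampedSinusoidsFrom m), ∀ t : ℝ≥0, |e t - g t| < ε := by
  have hε3 : 0 < ε / 3 := by linarith
  -- choose δ from continuity at 0
  have hcont : Filter.Tendsto e (nhds 0) (nhds 0) := by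
    simpa [he00] using he.tendsto 0
  rw [Metric.tendsto_nhds_nhds] at hcont
  obtain ⟨δ, hδ0, hδ⟩ := hcont (ε / 3) hε3
  -- choose N from the behaviour at infinity
  obtain ⟨N, hN⟩ := Metric.tendsto_atTop.mp he0 (ε / 3) hε3
  set R : ℝ := max (N : ℝ) δ with hRdef
  have hR0 : 0 < R := lt_of_lt_of_le hδ0 (le_max_right _ _)
  have hδR : δ ≤ R := le_max_right _ _
  have hsmall : ∀ t : ℝ≥0, ((t : ℝ) < δ ∨ R < (t : ℝ)) → |e t| ≤ ε / 3 := by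
    intro t ht
    rcases ht with h | h
    · have hd : dist t 0 < δ := by
        rw [NNReal.dist_eq]
        simpa using (abs_of_nonneg t.coe_nonneg ▸ (by simpa using h : |(t:ℝ)| < δ))
      have := hδ hd
      rw [dist_zero_right, Real.norm_eq_abs] at this
      exact le_of_lt this
    · have hNt : N ≤ t := by
        rw [← NNReal.coe_le_coe]
        exact le_of_lt (lt_of_le_of_lt (le_max_left _ _) h)
      have := hN t hNt
      rw [dist_zero_right, Real.norm_eq_abs] at this
      exact le_of_lt this
  -- the cutoff functions
  set w : ℝ≥0 → ℝ := fun t => max 0 (min 1 (2 - (t : ℝ) / R)) with hwdef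
  set q : ℝ≥0 → ℝ := fun t => (t : ℝ) * (max δ (t : ℝ))⁻¹ with hqdef
  have hmaxpos : ∀ t : ℝ≥0, 0 < max δ (t : ℝ) := fun t =>
    lt_of_lt_of_le hδ0 (le_max_left _ _)
  have hw0 : ∀ t, 0 ≤ w t := fun t => le_max_left _ _
  have hw1 : ∀ t, w t ≤ 1 := fun t => max_le zero_le_one (min_le_left _ _)
  have hq0 : ∀ t, 0 ≤ q t := fun t => mul_nonneg t.coe_nonneg (le_of_lt (inv_pos.mpr (hmaxpos t)))
  have hq1 : ∀ t, q t ≤ 1 := by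
    intro t
    rw [hqdef]
    simp only
    rw [← div_eq_mul_inv, div_le_one (hmaxpos t)]
    exact le_max_right _ _
  -- the auxiliary C₀ function g₀
  set g₀ : ℝ≥0 → ℝ := fun t => e t * Real.exp t * ((max δ (t : ℝ))⁻¹) ^ m * w t with hg₀def
  have hg₀c : Continuous g₀ := by
    refine ((he.mul (Real.continuous_exp.comp NNReal.continuous_coe)).mul ?_).mul ?_
    · exact ((continuous_const.max NNReal.continuous_coe).inv₀
        (fun t => ne_of_gt (hmaxpos t))).pow m
    · exact continuous_const.max (continuous_const.min
        (continuous_const.sub (NNReal.continuous_coe.div_const R)))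
  have hg₀0 : Filter.Tendsto g₀ Filter.atTop (nhds 0) := by
    refine Filter.Tendsto.congr' ?_ tendsto_const_nhds
    filter_upwards [Filter.eventually_ge_atTop (Real.toNNReal (2 * R))] with t ht
    have h2R : 2 * R ≤ (t : ℝ) := by
      rwa [Real.toNNReal_le_iff_le_coe] at ht
    have hwt : w t = 0 := by
      have hle : min 1 (2 - (t : ℝ) / R) ≤ 0 := by
        refine le_trans (min_le_right _ _) ?_
        rw [sub_nonpos, le_div_iff₀ hR0]
        linarith
      exact (max_eq_left hle)
    simp [hg₀def, hwt]
  -- key algebraic identity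
  have hkey : ∀ t : ℝ≥0, (t : ℝ) ^ m * Real.exp (-(t : ℝ)) * g₀ t
      = e t * ((q t) ^ m * w t) := by
    intro t
    have hexp : Real.exp (-(t : ℝ)) * Real.exp (t : ℝ) = 1 := by
      rw [← Real.exp_add]; simp
    rw [hg₀def, hqdef]
    simp only
    rw [mul_pow]
    linear_combination (e t * (t : ℝ) ^ m * ((max δ (t : ℝ))⁻¹) ^ m * w t) * hexp
  -- approximation of e by t^m e^{-t} g₀
  have hA : ∀ t : ℝ≥0, |e t - (t : ℝ) ^ m * Real.exp (-(t : ℝ)) * g₀ t| ≤ ε / 3 := by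
    intro t
    rw [hkey t]
    by_cases hcase : δ ≤ (t : ℝ) ∧ (t : ℝ) ≤ R
    · have hqt : q t = 1 := by
        rw [hqdef]
        simp only
        rw [max_eq_right hcase.1]
        exact mul_inv_cancel₀ (ne_of_gt (lt_of_lt_of_le hδ0 hcase.1))
      have hwt : w t = 1 := by
        have h1 : (1 : ℝ) ≤ 2 - (t : ℝ) / R := by
          have : (t : ℝ) / R ≤ 1 := (div_le_one hR0).mpr hcase.2
          linarith
        rw [hwdef]
        simp only
        rw [min_eq_left h1, max_eq_right zero_le_one]
      rw [hqt, hwt]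
      simp [hε3.le]
    · push_neg at hcase
      have hsm : |e t| ≤ ε / 3 := by
        apply hsmall t
        rcases lt_or_ge (t : ℝ) δ with h | h
        · exact Or.inl h
        · exact Or.inr (hcase h)
      have hf0 : 0 ≤ (q t) ^ m * w t := mul_nonneg (pow_nonneg (hq0 t) m) (hw0 t)
      have hf1 : (q t) ^ m * w t ≤ 1 :=
        mul_le_one₀ (pow_le_one₀ (hq0 t) (hq1 t)) (hw0 t) (hw1 t)
      calc |e t - e t * ((q t) ^ m * w t)| = |e t| * |1 - (q t) ^ m * w t| := by
            rw [← abs_mul]; ring_nf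
        _ ≤ |e t| * 1 := by
            apply mul_le_mul_of_nonneg_left _ (abs_nonneg _)
            exact abs_le.mpr ⟨by linarith, by linarith⟩
        _ ≤ ε / 3 := by rwa [mul_one]
  -- exponential approximation of g₀
  have hCm : (0 : ℝ) < (m : ℝ) ^ m := by
    have : (0 : ℝ) < (m : ℝ) := by exact_mod_cast hm
    positivity
  obtain ⟨d, c, hc⟩ := aux_exp_approx g₀ hg₀c hg₀0 ((ε / 3) / (m : ℝ) ^ m)
    (by positivity)
  -- the final approximant
  refine ⟨∑ i ∈ Finset.range d, c i •
      (fun t : ℝ≥0 => (t : ℝ) ^ m * Real.exp (-((i : ℝ) + 2) * t) * Real.cos (0 * t)),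
    ?_, ?_⟩
  · apply Submodule.sum_mem
    intro i _
    apply Submodule.smul_mem
    apply Submodule.subset_span
    exact ⟨m, (i : ℝ) + 2, 0, le_refl m, by positivity, Or.inl rfl⟩
  · intro t
    have hGt : (∑ i ∈ Finset.range d, c i •
        (fun t : ℝ≥0 => (t : ℝ) ^ m * Real.exp (-((i : ℝ) + 2) * t) * Real.cos (0 * t))) t
        = ∑ i ∈ Finset.range d, c i * ((t : ℝ) ^ m * Real.exp (-((i : ℝ) + 2) * t)) := by
      rw [Finset.sum_apply]
      apply Finset.sum_congr rfl
      intro i _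
      simp [Real.cos_zero]
    have hsum : ∑ i ∈ Finset.range d, c i * ((t : ℝ) ^ m * Real.exp (-((i : ℝ) + 2) * t))
        = (t : ℝ) ^ m * Real.exp (-(t : ℝ)) *
          ∑ i ∈ Finset.range d, c i * Real.exp (-((i : ℝ) + 1) * t) := by
      rw [Finset.mul_sum]
      apply Finset.sum_congr rfl
      intro i _
      rw [show -((i : ℝ) + 2) * (t : ℝ) = -(t : ℝ) + -((i : ℝ) + 1) * (t : ℝ) by ring,
        Real.exp_add]
      ring
    rw [hGt, hsum]
    set S := ∑ i ∈ Finset.range d, c i * Real.exp (-((i : ℝ) + 1) * t) with hS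
    have h1 := hA t
    have h2 := hc t
    have hb := aux_pow_mul_exp_le m hm (t : ℝ) t.coe_nonneg
    have hnn : 0 ≤ (t : ℝ) ^ m * Real.exp (-(t : ℝ)) := by positivity
    have h3 : |(t : ℝ) ^ m * Real.exp (-(t : ℝ)) * g₀ t
        - (t : ℝ) ^ m * Real.exp (-(t : ℝ)) * S| ≤ (m : ℝ) ^ m * ((ε / 3) / (m : ℝ) ^ m) := by
      rw [← mul_sub, abs_mul, abs_of_nonneg hnn]
      exact mul_le_mul hb h2 (abs_nonneg _) (le_of_lt hCm)
    have hcc : (m : ℝ) ^ m * ((ε / 3) / (m : ℝ) ^ m) = ε / 3 := by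
      field_simp
    calc |e t - (t : ℝ) ^ m * Real.exp (-(t : ℝ)) * S|
        ≤ |e t - (t : ℝ) ^ m * Real.exp (-(t : ℝ)) * g₀ t|
          + |(t : ℝ) ^ m * Real.exp (-(t : ℝ)) * g₀ t
            - (t : ℝ) ^ m * Real.exp (-(t : ℝ)) * S| := abs_sub_le _ _ _
      _ ≤ ε / 3 + ε / 3 := add_le_add h1 (h3.trans_eq hcc)
      _ < ε := by linarith
end

section
/- Let y₁, …, y_N be nonzero real numbers with y_i ≠ y_j and y_i ≠ −y_j whenever i ≠ j, and let α₁, …, α_N and β₁, …, β_N be real scalars. Suppose there exist constants C > 0, ρ > 0 and T ≥ 0 such that ∑_{i=1}^N (α_i cos(y_i t) + β_i sin(y_i t)) ≥ −C e^{−ρ t} for all t ≥ T. Then α_i = 0 and β_i = 0 for every i = 1, …, N. -/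
open scoped BigOperators
open Filter MeasureTheory intervalIntegral

/-- Average of a boundedly-integrated function tends to 0. -/
lemma avg_tendsto_zero {G : ℝ → ℝ} {M : ℝ} (h : ∀ R, |G R| ≤ M) :
    Tendsto (fun R => G R / R) atTop (nhds 0) := by
  refine squeeze_zero_norm' ?_ (by simpa using tendsto_inv_atTop_zero.const_mul M :
    Tendsto (fun R : ℝ => M * R⁻¹) atTop (nhds 0))
  filter_upwards [eventually_gt_atTop (0:ℝ)] with R hR
  have h2 : |G R / R| = |G R| / R := by rw [abs_div, abs_of_pos hR]
  rw [Real.norm_eq_abs, h2, div_eq_mul_inv]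
  exact mul_le_mul_of_nonneg_right (h R) (by positivity)

lemma integral_cos_freq (u T R : ℝ) (hu : u ≠ 0) :
    ∫ t in T..R, Real.cos (u * t) = (Real.sin (u * R) - Real.sin (u * T)) / u := by
  rw [show (fun t => Real.cos (u * t)) = fun t => (fun x => Real.cos x) (u * t) from rfl,
    integral_comp_mul_left (fun x => Real.cos x) hu, integral_cos]
  rw [smul_eq_mul]; ring

lemma integral_sin_freq (u T R : ℝ) (hu : u ≠ 0) :
    ∫ t in T..R, Real.sin (u * t) = (Real.cos (u * T) - Real.cos (u * R)) / u := by
  rw [show (fun t => Real.sin (u * t)) = fun t => (fun x => Real.sin x) (u * t) from rfl,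
    integral_comp_mul_left (fun x => Real.sin x) hu, integral_sin]
  rw [smul_eq_mul]; ring

lemma avg_cos (u T : ℝ) :
    Tendsto (fun R => (∫ t in T..R, Real.cos (u * t)) / R) atTop
      (nhds (if u = 0 then 1 else 0)) := by
  rcases eq_or_ne u 0 with hu | hu
  · simp only [hu, if_pos rfl, zero_mul, Real.cos_zero]
    have h1 : Tendsto (fun R : ℝ => 1 - T / R) atTop (nhds 1) := by
      have := (tendsto_const_nhds (α := ℝ) (x := T)).div_atTop (tendsto_id (α := ℝ))
      simpa using tendsto_const_nhds.sub this
    apply h1.congr'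
    filter_upwards [eventually_gt_atTop (0:ℝ)] with R hR
    have h2 : (∫ _t in T..R, (1:ℝ)) = R - T := by simp
    rw [h2, sub_div, div_self hR.ne']
  · rw [if_neg hu]
    apply avg_tendsto_zero (M := 2 / |u|)
    intro R
    rw [integral_cos_freq u T R hu, abs_div]
    apply div_le_div_of_nonneg_right ?_ (abs_nonneg u) |>.trans_eq rfl
    calc |Real.sin (u*R) - Real.sin (u*T)| ≤ |Real.sin (u*R)| + |Real.sin (u*T)| := abs_sub _ _
      _ ≤ 1 + 1 := add_le_add (Real.abs_sin_le_one _) (Real.abs_sin_le_one _)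
      _ = 2 := by norm_num

lemma avg_sin (u T : ℝ) :
    Tendsto (fun R => (∫ t in T..R, Real.sin (u * t)) / R) atTop (nhds 0) := by
  rcases eq_or_ne u 0 with rfl | hu
  · simp
  · apply avg_tendsto_zero (M := 2 / |u|)
    intro R
    rw [integral_sin_freq u T R hu, abs_div]
    apply div_le_div_of_nonneg_right ?_ (abs_nonneg u) |>.trans_eq rfl
    calc |Real.cos (u*T) - Real.cos (u*R)| ≤ |Real.cos (u*T)| + |Real.cos (u*R)| := abs_sub _ _
      _ ≤ 1 + 1 := add_le_add (Real.abs_cos_le_one _) (Real.abs_cos_le_one _)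
      _ = 2 := by norm_num

lemma avg_block_cos (T c u : ℝ) :
    Tendsto (fun R => (∫ t in T..R, c * Real.cos (u * t)) / R) atTop
      (nhds (if u = 0 then c else 0)) := by
  have h1 := (avg_cos u T).const_mul c
  have h2 : (fun R => c * ((∫ t in T..R, Real.cos (u * t)) / R))
      = fun R => (∫ t in T..R, c * Real.cos (u * t)) / R := by
    funext R
    rw [intervalIntegral.integral_const_mul, mul_div_assoc]
  rw [h2] at h1
  convert h1 using 2
  split_ifs <;> ring

lemma avg_block_sin (T c u : ℝ) :
    Tendsto (fun R => (∫ t in T..R, c * Real.sin (u * t)) / R) atTop (nhds 0) := by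
  have h1 := (avg_sin u T).const_mul c
  have h2 : (fun R => c * ((∫ t in T..R, Real.sin (u * t)) / R))
      = fun R => (∫ t in T..R, c * Real.sin (u * t)) / R := by
    funext R
    rw [intervalIntegral.integral_const_mul, mul_div_assoc]
  rw [h2] at h1
  simpa using h1

lemma avg_sum {ι : Type*} [Fintype ι] (c u d v : ι → ℝ) (T : ℝ) :
    Tendsto (fun R => (∫ t in T..R,
        ∑ k, (c k * Real.cos (u k * t) + d k * Real.sin (v k * t))) / R) atTop
      (nhds (∑ k, if u k = 0 then c k else 0)) := by
  have key : ∀ R, (∫ t in T..R, ∑ k, (c k * Real.cos (u k * t) + d k * Real.sin (v k * t)))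
      = ∑ k, ((∫ t in T..R, c k * Real.cos (u k * t)) + ∫ t in T..R, d k * Real.sin (v k * t)) := by
    intro R
    rw [intervalIntegral.integral_finset_sum]
    · refine Finset.sum_congr rfl fun k _ => ?_
      exact intervalIntegral.integral_add
        ((by fun_prop : Continuous fun t => c k * Real.cos (u k * t)).intervalIntegrable _ _)
        ((by fun_prop : Continuous fun t => d k * Real.sin (v k * t)).intervalIntegrable _ _)
    · intro k _
      exact (by fun_prop :
        Continuous fun t => c k * Real.cos (u k * t) + d k * Real.sin (v k * t)).intervalIntegrable _ _
  simp only [key, Finset.sum_div]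
  apply tendsto_finset_sum
  intro k _
  have := (avg_block_cos T (c k) (u k)).add (avg_block_sin T (d k) (v k))
  simp only [add_zero] at this
  simp only [add_div]
  exact this
lemma integral_exp_neg_freq (ρ T R : ℝ) (hρ : ρ ≠ 0) :
    ∫ t in T..R, Real.exp (-ρ * t) = (Real.exp (-ρ*T) - Real.exp (-ρ*R)) / ρ := by
  rw [show (fun t : ℝ => Real.exp (-ρ * t)) = fun t => (fun x => Real.exp x) (-ρ * t) from rfl,
    integral_comp_mul_left (fun x => Real.exp x) (neg_ne_zero.mpr hρ), integral_exp]
  rw [smul_eq_mul, inv_neg]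
  ring

/-- If a finite real trigonometric sum `∑ᵢ (αᵢ cos(yᵢ t) + βᵢ sin(yᵢ t))`, with nonzero
frequencies `yᵢ` that are pairwise distinct up to sign, satisfies
`∑ᵢ (αᵢ cos(yᵢ t) + βᵢ sin(yᵢ t)) ≥ -C e^{-ρ t}` for all `t ≥ T` (with `C > 0`, `ρ > 0`,
`T ≥ 0`), then all the coefficients `αᵢ`, `βᵢ` vanish. -/
theorem trig_sum_eventually_bounded_below_eq_zero
    (N : ℕ) (y α β : Fin N → ℝ)
    (hy : ∀ i, y i ≠ 0)
    (hy' : ∀ i j, i ≠ j → y i ≠ y j ∧ y i ≠ -y j)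
    (C ρ T : ℝ) (hC : 0 < C) (hρ : 0 < ρ) (hT : 0 ≤ T)
    (h : ∀ t : ℝ, T ≤ t →
      -(C * Real.exp (-ρ * t)) ≤ ∑ i, (α i * Real.cos (y i * t) + β i * Real.sin (y i * t))) :
    ∀ i, α i = 0 ∧ β i = 0 := by
  set f : ℝ → ℝ := fun t => ∑ i, (α i * Real.cos (y i * t) + β i * Real.sin (y i * t)) with hfdef
  have hfc : Continuous f := by
    apply continuous_finset_sum
    intro i _
    fun_prop
  -- average of f tends to 0
  have havg0 : Tendsto (fun R => (∫ t in T..R, f t) / R) atTop (nhds 0) := by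
    have := avg_sum α y β y T
    have hz : (∑ i, if y i = 0 then α i else 0) = 0 :=
      Finset.sum_eq_zero fun i _ => if_neg (hy i)
    rw [hz] at this
    exact this
  -- average of f * cos(y j t) tends to α j / 2
  have havgc : ∀ j, Tendsto (fun R => (∫ t in T..R, f t * Real.cos (y j * t)) / R) atTop
      (nhds (α j / 2)) := by
    intro j
    set c : Fin N × Fin 2 → ℝ := fun p => α p.1 / 2 with hc
    set d : Fin N × Fin 2 → ℝ := fun p => β p.1 / 2 with hd
    set u : Fin N × Fin 2 → ℝ := fun p => if p.2 = 0 then y p.1 - y j else y p.1 + y j with hu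
    set v : Fin N × Fin 2 → ℝ := fun p => if p.2 = 0 then y p.1 + y j else y p.1 - y j with hv
    have hpt : ∀ t : ℝ, f t * Real.cos (y j * t)
        = ∑ p : Fin N × Fin 2, (c p * Real.cos (u p * t) + d p * Real.sin (v p * t)) := by
      intro t
      rw [Fintype.sum_prod_type, hfdef]
      simp only [Finset.sum_mul]
      refine Finset.sum_congr rfl fun i _ => ?_
      rw [Fin.sum_univ_two]
      simp only [hc, hd, hu, hv]
      norm_num [sub_mul, add_mul, Real.cos_sub, Real.cos_add, Real.sin_add, Real.sin_sub]
      ring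
    have hrw : (fun R => (∫ t in T..R, f t * Real.cos (y j * t)) / R)
        = fun R => (∫ t in T..R,
            ∑ p : Fin N × Fin 2, (c p * Real.cos (u p * t) + d p * Real.sin (v p * t))) / R := by
      funext R
      congr 1
      exact intervalIntegral.integral_congr fun t _ => hpt t
    rw [hrw]
    have hsum : (∑ p : Fin N × Fin 2, if u p = 0 then c p else 0) = α j / 2 := by
      rw [Finset.sum_eq_single (⟨j, 0⟩ : Fin N × Fin 2)]
      · simp [hu, hc]
      · rintro ⟨i, k⟩ _ hne
        apply if_neg
        fin_cases k
        · have hij : i ≠ j := by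
            intro hij; exact hne (by simp [hij])
          have h0 : u (i, (0 : Fin 2)) = y i - y j := by simp [hu]
          show ¬ u (i, (0 : Fin 2)) = 0
          rw [h0]
          exact sub_ne_zero.mpr ((hy' i j hij).1)
        · have h0 : u (i, (1 : Fin 2)) = y i + y j := by simp [hu]
          show ¬ u (i, (1 : Fin 2)) = 0
          rw [h0]
          rcases eq_or_ne i j with rfl | hij
          · intro hcon
            exact hy i (by linarith)
          · intro hcon
            exact (hy' i j hij).2 (by linarith)
      · intro hmem
        exact absurd (Finset.mem_univ _) hmem
    rw [← hsum]
    exact avg_sum c u d v T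
  -- average of f * sin(y j t) tends to β j / 2
  have havgs : ∀ j, Tendsto (fun R => (∫ t in T..R, f t * Real.sin (y j * t)) / R) atTop
      (nhds (β j / 2)) := by
    intro j
    set c : Fin N × Fin 2 → ℝ := fun p => if p.2 = 0 then β p.1 / 2 else -(β p.1 / 2) with hc
    set d : Fin N × Fin 2 → ℝ := fun p => if p.2 = 0 then -(α p.1 / 2) else α p.1 / 2 with hd
    set u : Fin N × Fin 2 → ℝ := fun p => if p.2 = 0 then y p.1 - y j else y p.1 + y j with hu
    have hpt : ∀ t : ℝ, f t * Real.sin (y j * t)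
        = ∑ p : Fin N × Fin 2, (c p * Real.cos (u p * t) + d p * Real.sin (u p * t)) := by
      intro t
      rw [Fintype.sum_prod_type, hfdef]
      simp only [Finset.sum_mul]
      refine Finset.sum_congr rfl fun i _ => ?_
      rw [Fin.sum_univ_two]
      simp only [hc, hd, hu]
      norm_num [sub_mul, add_mul, Real.cos_sub, Real.cos_add, Real.sin_add, Real.sin_sub]
      ring
    have hrw : (fun R => (∫ t in T..R, f t * Real.sin (y j * t)) / R)
        = fun R => (∫ t in T..R,
            ∑ p : Fin N × Fin 2, (c p * Real.cos (u p * t) + d p * Real.sin (u p * t))) / R := by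
      funext R
      congr 1
      exact intervalIntegral.integral_congr fun t _ => hpt t
    rw [hrw]
    have hsum : (∑ p : Fin N × Fin 2, if u p = 0 then c p else 0) = β j / 2 := by
      rw [Finset.sum_eq_single (⟨j, 0⟩ : Fin N × Fin 2)]
      · simp [hu, hc]
      · rintro ⟨i, k⟩ _ hne
        apply if_neg
        fin_cases k
        · have hij : i ≠ j := by
            intro hij; exact hne (by simp [hij])
          have h0 : u (i, (0 : Fin 2)) = y i - y j := by simp [hu]
          show ¬ u (i, (0 : Fin 2)) = 0
          rw [h0]
          exact sub_ne_zero.mpr ((hy' i j hij).1)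
        · have h0 : u (i, (1 : Fin 2)) = y i + y j := by simp [hu]
          show ¬ u (i, (1 : Fin 2)) = 0
          rw [h0]
          rcases eq_or_ne i j with rfl | hij
          · intro hcon
            exact hy i (by linarith)
          · intro hcon
            exact (hy' i j hij).2 (by linarith)
      · intro hmem
        exact absurd (Finset.mem_univ _) hmem
    rw [← hsum]
    exact avg_sum c u d u T
  -- key positivity lemma
  have key : ∀ w : ℝ → ℝ, Continuous w → (∀ t, 0 ≤ w t) → (∀ t, w t ≤ 2) → ∀ L : ℝ,
      Tendsto (fun R => (∫ t in T..R, f t * w t) / R) atTop (nhds L) → 0 ≤ L := by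
    intro w hwc hw0 hw2 L hL
    have hbound : ∀ R : ℝ, max T 1 ≤ R → -(2 * C / ρ) ≤ ∫ t in T..R, f t * w t := by
      intro R hR
      have hTR : T ≤ R := le_trans (le_max_left _ _) hR
      have h1 : (∫ t in T..R, -(2 * C * Real.exp (-ρ * t))) ≤ ∫ t in T..R, f t * w t := by
        apply intervalIntegral.integral_mono_on hTR
          ((by fun_prop : Continuous fun t => -(2 * C * Real.exp (-ρ * t))).intervalIntegrable _ _)
          ((hfc.mul hwc).intervalIntegrable _ _) 
        intro t ht
        have hf := h t ht.1
        calc -(2 * C * Real.exp (-ρ * t)) = -(C * Real.exp (-ρ * t)) * 2 := by ring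
          _ ≤ -(C * Real.exp (-ρ * t)) * w t :=
              mul_le_mul_of_nonpos_left (hw2 t) (neg_nonpos.mpr (by positivity))
          _ ≤ f t * w t := mul_le_mul_of_nonneg_right hf (hw0 t)
      have h2 : (∫ t in T..R, -(2 * C * Real.exp (-ρ * t)))
          = -(2 * C) * ((Real.exp (-ρ*T) - Real.exp (-ρ*R)) / ρ) := by
        rw [intervalIntegral.integral_neg]
        rw [show (fun t : ℝ => 2 * C * Real.exp (-ρ * t)) = fun t => 2 * C * Real.exp (-ρ * t) from rfl]
        rw [intervalIntegral.integral_const_mul, integral_exp_neg_freq ρ T R hρ.ne']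
        ring
      refine le_trans ?_ h1
      rw [h2]
      have he1 : Real.exp (-ρ * T) ≤ 1 := Real.exp_le_one_iff.mpr (by nlinarith)
      have he2 : 0 ≤ Real.exp (-ρ * R) := (Real.exp_pos _).le
      have hX : (Real.exp (-ρ*T) - Real.exp (-ρ*R)) / ρ ≤ 1 / ρ :=
        div_le_div_of_nonneg_right (by nlinarith) hρ.le
      calc -(2 * C / ρ) = -(2 * C) * (1 / ρ) := by ring
        _ ≤ -(2 * C) * ((Real.exp (-ρ*T) - Real.exp (-ρ*R)) / ρ) :=
            mul_le_mul_of_nonpos_left hX (by nlinarith)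
    have hev : ∀ᶠ R in atTop, (-(2 * C / ρ)) / R ≤ (∫ t in T..R, f t * w t) / R := by
      filter_upwards [eventually_ge_atTop (max T 1)] with R hR
      have hRpos : (0:ℝ) < R := lt_of_lt_of_le one_pos (le_trans (le_max_right _ _) hR)
      exact div_le_div_of_nonneg_right (hbound R hR) hRpos.le
    have hlim0 : Tendsto (fun R : ℝ => (-(2 * C / ρ)) / R) atTop (nhds 0) :=
      tendsto_const_nhds.div_atTop tendsto_id
    exact le_of_tendsto_of_tendsto hlim0 hL hev
  -- assemble
  intro i
  have hwcos1 : ∀ s : ℝ, s = 1 ∨ s = -1 → True := fun _ _ => trivial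
  have hA : ∀ s : ℝ, s = 1 ∨ s = -1 → 0 ≤ 0 + s * (α i / 2) := by
    intro s hs
    apply key (fun t => 1 + s * Real.cos (y i * t)) (by fun_prop)
      (fun t => by
        show (0:ℝ) ≤ 1 + s * Real.cos (y i * t)
        rcases hs with rfl | rfl <;>
          nlinarith [Real.neg_one_le_cos (y i * t), Real.cos_le_one (y i * t)])
      (fun t => by
        show 1 + s * Real.cos (y i * t) ≤ 2
        rcases hs with rfl | rfl <;>
          nlinarith [Real.neg_one_le_cos (y i * t), Real.cos_le_one (y i * t)])
    have hrw : ∀ R : ℝ, (∫ t in T..R, f t * (1 + s * Real.cos (y i * t)))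
        = (∫ t in T..R, f t) + s * ∫ t in T..R, f t * Real.cos (y i * t) := by
      intro R
      rw [← intervalIntegral.integral_const_mul, ← intervalIntegral.integral_add
        (hfc.intervalIntegrable _ _)
        ((by fun_prop : Continuous fun t => s * (f t * Real.cos (y i * t))).intervalIntegrable _ _)]
      apply intervalIntegral.integral_congr
      intro t _
      ring
    simp only [hrw, add_div, mul_div_assoc]
    exact havg0.add (((havgc i).const_mul s).congr (fun R => by ring))
  have hB : ∀ s : ℝ, s = 1 ∨ s = -1 → 0 ≤ 0 + s * (β i / 2) := by
    intro s hs
    apply key (fun t => 1 + s * Real.sin (y i * t)) (by fun_prop)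
      (fun t => by
        show (0:ℝ) ≤ 1 + s * Real.sin (y i * t)
        rcases hs with rfl | rfl <;>
          nlinarith [Real.neg_one_le_sin (y i * t), Real.sin_le_one (y i * t)])
      (fun t => by
        show 1 + s * Real.sin (y i * t) ≤ 2
        rcases hs with rfl | rfl <;>
          nlinarith [Real.neg_one_le_sin (y i * t), Real.sin_le_one (y i * t)])
    have hrw : ∀ R : ℝ, (∫ t in T..R, f t * (1 + s * Real.sin (y i * t)))
        = (∫ t in T..R, f t) + s * ∫ t in T..R, f t * Real.sin (y i * t) := by
      intro R
      rw [← intervalIntegral.integral_const_mul, ← intervalIntegral.integral_add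
        (hfc.intervalIntegrable _ _)
        ((by fun_prop : Continuous fun t => s * (f t * Real.sin (y i * t))).intervalIntegrable _ _)]
      apply intervalIntegral.integral_congr
      intro t _
      ring
    simp only [hrw, add_div, mul_div_assoc]
    exact havg0.add (((havgs i).const_mul s).congr (fun R => by ring))
  have h1 := hA 1 (Or.inl rfl)
  have h2 := hA (-1) (Or.inr rfl)
  have h3 := hB 1 (Or.inl rfl)
  have h4 := hB (-1) (Or.inr rfl)
  constructor <;> linarith
end

section
/- Let 0 < ρ₁ < ρ₂ < … < ρ_K be real numbers and for each j let T_j(t) = ∑_{i=1}^{N_j} (α_i^{(j)} cos(y_i^{(j)} t) + β_i^{(j)} sin(y_i^{(j)} t)) be a finite real trigonometric polynomial, where the frequencies y_1^{(1)}, …, y_{N_1}^{(1)} of T₁ are all nonzero and satisfy y_i^{(1)} ≠ ± y_j^{(1)} for i ≠ j. If the function e*(t) = ∑_{j=1}^K e^{−ρ_j t} T_j(t) satisfies e*(t) ≥ 0 for all t ≥ 0, then T₁ is identically zero (all α_i^{(1)} and β_i^{(1)} vanish). -/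
open scoped BigOperators
open Filter Real intervalIntegral

namespace LeadingTrigAux

/-- `F` has Cesàro mean zero on `[0,∞)`. -/
def mz (F : ℝ → ℝ) : Prop :=
  Tendsto (fun T => (∫ t in (0:ℝ)..T, F t) / T) atTop (nhds 0)

lemma mz_of_bdd {F : ℝ → ℝ} {M : ℝ}
    (h : ∀ T, 0 ≤ T → |∫ t in (0:ℝ)..T, F t| ≤ M) : mz F := by
  apply squeeze_zero_norm' (a := fun T => M / T)
  · filter_upwards [eventually_ge_atTop (1:ℝ)] with T hT
    have hT0 : (0:ℝ) < T := lt_of_lt_of_le one_pos hT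
    rw [Real.norm_eq_abs, abs_div, abs_of_pos hT0]
    gcongr
    exact h T hT0.le
  · simpa [div_eq_mul_inv] using tendsto_inv_atTop_zero.const_mul M

lemma mz_zero : mz (fun _ => (0:ℝ)) := by
  apply mz_of_bdd (M := 0); intro T _; simp

lemma mz_congr {F G : ℝ → ℝ} (h : ∀ t, F t = G t) (hF : mz F) : mz G := by
  have : F = G := funext h
  rwa [this] at hF

lemma mz_cos {ω : ℝ} (hω : ω ≠ 0) : mz (fun t => Real.cos (ω * t)) := by
  apply mz_of_bdd (M := |ω⁻¹| * 2)
  intro T _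
  rw [intervalIntegral.integral_comp_mul_left (fun x => Real.cos x) hω, mul_zero,
    integral_cos, smul_eq_mul, abs_mul]
  gcongr
  have h1 := Real.abs_sin_le_one (ω * T)
  have h2 := Real.abs_sin_le_one (0 : ℝ)
  calc |Real.sin (ω * T) - Real.sin 0| ≤ |Real.sin (ω*T)| + |Real.sin 0| := abs_sub _ _
    _ ≤ 2 := by linarith [abs_nonneg (Real.sin (ω*T))]

lemma mz_sin (ω : ℝ) : mz (fun t => Real.sin (ω * t)) := by
  rcases eq_or_ne ω 0 with h | h
  · subst h; simpa using mz_zero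
  · apply mz_of_bdd (M := |ω⁻¹| * 2)
    intro T _
    rw [intervalIntegral.integral_comp_mul_left (fun x => Real.sin x) h, mul_zero,
      integral_sin, smul_eq_mul, abs_mul]
    gcongr
    have h1 := Real.abs_cos_le_one (ω * T)
    have h2 := Real.abs_cos_le_one (0 : ℝ)
    calc |Real.cos 0 - Real.cos (ω * T)| ≤ |Real.cos 0| + |Real.cos (ω*T)| := abs_sub _ _
      _ ≤ 2 := by linarith

lemma mz_const_mul {F : ℝ → ℝ} (c : ℝ) (h : mz F) : mz (fun t => c * F t) := by
  have e : (fun T => (∫ t in (0:ℝ)..T, c * F t) / T)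
      = fun T => c * ((∫ t in (0:ℝ)..T, F t) / T) := by
    funext T; rw [intervalIntegral.integral_const_mul]; ring
  unfold mz
  rw [e]
  simpa using h.const_mul c

lemma mz_add {F G : ℝ → ℝ} (hF : Continuous F) (hG : Continuous G)
    (h1 : mz F) (h2 : mz G) : mz (fun t => F t + G t) := by
  have e : (fun T => (∫ t in (0:ℝ)..T, (F t + G t)) / T)
      = fun T => (∫ t in (0:ℝ)..T, F t) / T + (∫ t in (0:ℝ)..T, G t) / T := by
    funext T
    rw [intervalIntegral.integral_add (hF.intervalIntegrable _ _) (hG.intervalIntegrable _ _),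
      add_div]
  unfold mz
  rw [e]
  simpa using h1.add h2

lemma mz_sum {ι : Type*} (s : Finset ι) (F : ι → ℝ → ℝ)
    (hc : ∀ i ∈ s, Continuous (F i)) (h : ∀ i ∈ s, mz (F i)) :
    mz (fun t => ∑ i ∈ s, F i t) := by
  classical
  induction s using Finset.induction_on with
  | empty => simpa using mz_zero
  | insert a s' hnotmem ih =>
    have := mz_add (hc a (Finset.mem_insert_self a s'))
      (continuous_finset_sum s' fun i hi => hc i (Finset.mem_insert_of_mem hi))
      (h a (Finset.mem_insert_self a s'))
      (ih (fun i hi => hc i (Finset.mem_insert_of_mem hi))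
          (fun i hi => h i (Finset.mem_insert_of_mem hi)))
    apply mz_congr (F := fun t => F a t + ∑ i ∈ s', F i t) _ this
    intro t
    rw [Finset.sum_insert hnotmem]

lemma mz_exp_mul {δ M : ℝ} (hδ : 0 < δ) {B : ℝ → ℝ} (hB : Continuous B)
    (hM : ∀ t, |B t| ≤ M) : mz (fun t => Real.exp (-δ * t) * B t) := by
  have hM0 : 0 ≤ M := (abs_nonneg _).trans (hM 0)
  apply mz_of_bdd (M := M / δ)
  intro T hT
  have h1 : |∫ t in (0:ℝ)..T, Real.exp (-δ * t) * B t|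
      ≤ ∫ t in (0:ℝ)..T, |Real.exp (-δ * t) * B t| :=
    intervalIntegral.abs_integral_le_integral_abs hT
  have h2 : (∫ t in (0:ℝ)..T, |Real.exp (-δ * t) * B t|)
      ≤ ∫ t in (0:ℝ)..T, M * Real.exp (-δ * t) := by
    apply intervalIntegral.integral_mono_on hT
    · exact (((Real.continuous_exp.comp (continuous_const.mul continuous_id)).mul hB).abs).intervalIntegrable _ _
    · exact (continuous_const.mul (Real.continuous_exp.comp (continuous_const.mul continuous_id))).intervalIntegrable _ _
    · intro t _
      rw [abs_mul, abs_of_pos (Real.exp_pos _), mul_comm]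
      exact mul_le_mul_of_nonneg_right (hM t) (Real.exp_pos _).le
  have h3 : (∫ t in (0:ℝ)..T, M * Real.exp (-δ * t))
      = M * ((1 - Real.exp (-δ * T)) / δ) := by
    rw [intervalIntegral.integral_const_mul]
    congr 1
    rw [intervalIntegral.integral_comp_mul_left (fun x => Real.exp x) (neg_ne_zero.mpr hδ.ne'),
      mul_zero, integral_exp, smul_eq_mul]
    rw [Real.exp_zero]
    ring
  have h4 : M * ((1 - Real.exp (-δ * T)) / δ) ≤ M / δ := by
    have he : 0 ≤ Real.exp (-δ * T) := (Real.exp_pos _).le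
    calc M * ((1 - Real.exp (-δ * T)) / δ) ≤ M * (1 / δ) := by gcongr; linarith
      _ = M / δ := by ring
  calc |∫ t in (0:ℝ)..T, Real.exp (-δ * t) * B t| ≤ _ := h1
    _ ≤ _ := h2
    _ = _ := h3
    _ ≤ M / δ := h4

end LeadingTrigAux

open LeadingTrigAux

/-- Let `0 < ρ₁ < ρ₂ < … < ρ_K` and, for each `j`, let
`T_j(t) = ∑ᵢ (α_i⁽ʲ⁾ cos(y_i⁽ʲ⁾ t) + β_i⁽ʲ⁾ sin(y_i⁽ʲ⁾ t))` be a finite trigonometric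
polynomial, where the frequencies of `T₁` are nonzero and pairwise distinct up to sign.
If `e*(t) = ∑ⱼ e^{-ρⱼ t} T_j(t)` is nonnegative for all `t ≥ 0`, then `T₁` is identically
zero, i.e. all the coefficients `α_i⁽¹⁾`, `β_i⁽¹⁾` vanish. -/
theorem leading_trig_block_of_nonneg_sum_eq_zero
    (K : ℕ) (hK : 0 < K) (ρ : Fin K → ℝ) (hρpos : ∀ j, 0 < ρ j) (hρmono : StrictMono ρ)
    (N : Fin K → ℕ) (y α β : (j : Fin K) → Fin (N j) → ℝ)
    (hy : ∀ i, y ⟨0, hK⟩ i ≠ 0)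
    (hy' : ∀ i j, i ≠ j → y ⟨0, hK⟩ i ≠ y ⟨0, hK⟩ j ∧ y ⟨0, hK⟩ i ≠ -(y ⟨0, hK⟩ j))
    (hpos : ∀ t : ℝ, 0 ≤ t →
      0 ≤ ∑ j, Real.exp (-(ρ j) * t) *
        ∑ i, (α j i * Real.cos (y j i * t) + β j i * Real.sin (y j i * t))) :
    ∀ i, α ⟨0, hK⟩ i = 0 ∧ β ⟨0, hK⟩ i = 0 := by
  classical
  set j₀ : Fin K := ⟨0, hK⟩ with hj₀
  set TT : Fin K → ℝ → ℝ :=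
    fun j t => ∑ i, (α j i * Real.cos (y j i * t) + β j i * Real.sin (y j i * t)) with hTT
  have contTT : ∀ j, Continuous (TT j) := by
    intro j
    rw [hTT]
    apply continuous_finset_sum
    intro i _
    fun_prop
  set Cb : Fin K → ℝ := fun j => ∑ i, (|α j i| + |β j i|) with hCb
  have hCb0 : ∀ j, 0 ≤ Cb j := by
    intro j; rw [hCb]
    exact Finset.sum_nonneg fun i _ => by positivity
  have hTb : ∀ j t, |TT j t| ≤ Cb j := by
    intro j t
    rw [hTT, hCb]
    refine (Finset.abs_sum_le_sum_abs _ _).trans ?_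
    apply Finset.sum_le_sum
    intro i _
    have h1 := Real.abs_cos_le_one (y j i * t)
    have h2 := Real.abs_sin_le_one (y j i * t)
    have h3 := abs_nonneg (α j i)
    have h4 := abs_nonneg (β j i)
    calc |α j i * Real.cos (y j i * t) + β j i * Real.sin (y j i * t)|
        ≤ |α j i * Real.cos (y j i * t)| + |β j i * Real.sin (y j i * t)| := abs_add_le _ _
      _ = |α j i| * |Real.cos (y j i * t)| + |β j i| * |Real.sin (y j i * t)| := by
          rw [abs_mul, abs_mul]
      _ ≤ |α j i| + |β j i| := by nlinarith
  set tl : ℝ → ℝ :=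
    fun t => ∑ j ∈ Finset.univ.erase j₀, Real.exp (-(ρ j - ρ j₀) * t) * TT j t with htl
  have conttl : Continuous tl := by
    rw [htl]
    exact continuous_finset_sum _ fun j _ =>
      ((Real.continuous_exp.comp (by fun_prop)).mul (contTT j))
  have hlt : ∀ j : Fin K, j ∈ Finset.univ.erase j₀ → 0 < ρ j - ρ j₀ := by
    intro j hj
    have hjne : j ≠ j₀ := Finset.ne_of_mem_erase hj
    have hv : (j : ℕ) ≠ 0 := by
      intro h0
      exact hjne (Fin.ext (by rw [h0, hj₀]))
    refine sub_pos.mpr (hρmono ?_)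
    rw [Fin.lt_def, hj₀]
    exact Nat.pos_of_ne_zero hv
  have hg : ∀ t, TT j₀ t + tl t = Real.exp (ρ j₀ * t) * ∑ j, Real.exp (-(ρ j) * t) * TT j t := by
    intro t
    rw [Finset.mul_sum,
      ← Finset.add_sum_erase Finset.univ
        (fun j => Real.exp (ρ j₀ * t) * (Real.exp (-(ρ j) * t) * TT j t)) (Finset.mem_univ j₀)]
    congr 1
    · rw [← mul_assoc, ← Real.exp_add, show ρ j₀ * t + -(ρ j₀) * t = 0 by ring,
        Real.exp_zero, one_mul]
    · rw [htl]
      apply Finset.sum_congr rfl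
      intro j _
      rw [← mul_assoc, ← Real.exp_add]
      congr 2
      ring
  have hgpos : ∀ t, 0 ≤ t → 0 ≤ TT j₀ t + tl t := by
    intro t ht
    rw [hg t]
    refine mul_nonneg (Real.exp_pos _).le ?_
    have h0 := hpos t ht
    simpa only [hTT] using h0
  set S : ℝ := ∑ i, (α j₀ i ^ 2 + β j₀ i ^ 2) / 2 with hS
  -- mean-zero facts
  have mzT1 : mz (TT j₀) := by
    have : mz (fun t => ∑ i,
        (fun (i : Fin (N j₀)) (t : ℝ) =>
          α j₀ i * Real.cos (y j₀ i * t) + β j₀ i * Real.sin (y j₀ i * t)) i t) := by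
      apply mz_sum
      · intro i _; fun_prop
      · intro i _
        exact mz_add (by fun_prop) (by fun_prop)
          (mz_const_mul _ (mz_cos (hy i))) (mz_const_mul _ (mz_sin _))
    exact mz_congr (fun t => by rw [hTT]) this
  have mztail : mz tl := by
    rw [htl]
    apply mz_sum (Finset.univ.erase j₀) (fun j t => Real.exp (-(ρ j - ρ j₀) * t) * TT j t)
    · intro j _
      exact (Real.continuous_exp.comp (by fun_prop)).mul (contTT j)
    · intro j hj
      exact mz_exp_mul (hlt j hj) (contTT j) (hTb j)
  have mztailT1 : mz (fun t => tl t * TT j₀ t) := by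
    have : mz (fun t => ∑ j ∈ Finset.univ.erase j₀,
        (fun (j : Fin K) (t : ℝ) => Real.exp (-(ρ j - ρ j₀) * t) * (TT j t * TT j₀ t)) j t) := by
      apply mz_sum
      · intro j _
        exact (Real.continuous_exp.comp (by fun_prop)).mul ((contTT j).mul (contTT j₀))
      · intro j hj
        refine mz_exp_mul (M := Cb j * Cb j₀) (hlt j hj) ((contTT j).mul (contTT j₀)) ?_
        intro t
        rw [abs_mul]
        exact mul_le_mul (hTb j t) (hTb j₀ t) (abs_nonneg _) (hCb0 j)
    refine mz_congr (fun t => ?_) this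
    rw [htl, Finset.sum_mul]
    exact Finset.sum_congr rfl fun j _ => (mul_assoc _ _ _).symm
  have mzsq : mz (fun t => TT j₀ t * TT j₀ t - S) := by
    have key : mz (fun t => ∑ i, ∑ k,
        ((α j₀ i * Real.cos (y j₀ i * t) + β j₀ i * Real.sin (y j₀ i * t)) *
         (α j₀ k * Real.cos (y j₀ k * t) + β j₀ k * Real.sin (y j₀ k * t))
          - if k = i then (α j₀ i ^ 2 + β j₀ i ^ 2) / 2 else 0)) := by
      apply mz_sum Finset.univ (fun i t => ∑ k,
        ((α j₀ i * Real.cos (y j₀ i * t) + β j₀ i * Real.sin (y j₀ i * t)) *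
         (α j₀ k * Real.cos (y j₀ k * t) + β j₀ k * Real.sin (y j₀ k * t))
          - if k = i then (α j₀ i ^ 2 + β j₀ i ^ 2) / 2 else 0))
      · intro i _
        apply continuous_finset_sum
        intro k _
        fun_prop
      · intro i _
        apply mz_sum Finset.univ (fun k t =>
          (α j₀ i * Real.cos (y j₀ i * t) + β j₀ i * Real.sin (y j₀ i * t)) *
          (α j₀ k * Real.cos (y j₀ k * t) + β j₀ k * Real.sin (y j₀ k * t))
            - if k = i then (α j₀ i ^ 2 + β j₀ i ^ 2) / 2 else 0)
        · intro k _; fun_prop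
        · intro k _
          by_cases hik : k = i
          · subst hik
            simp only [if_pos rfl]
            have base : mz (fun t =>
                ((α j₀ k ^ 2 - β j₀ k ^ 2) / 2) * Real.cos ((2 * y j₀ k) * t)
                + (α j₀ k * β j₀ k) * Real.sin ((2 * y j₀ k) * t)) :=
              mz_add (by fun_prop) (by fun_prop)
                (mz_const_mul _ (mz_cos (by simpa using hy k)))
                (mz_const_mul _ (mz_sin _))
            refine mz_congr (fun t => ?_) base
            rw [if_true]
            rw [show (2 * y j₀ k) * t = 2 * (y j₀ k * t) by ring, Real.cos_two_mul,
              Real.sin_two_mul]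
            linear_combination (-(β j₀ k ^ 2)) * Real.sin_sq_add_cos_sq (y j₀ k * t)
          · simp only [if_neg hik, sub_zero]
            have hne : i ≠ k := fun h => hik h.symm
            have hd : y j₀ i - y j₀ k ≠ 0 := sub_ne_zero.mpr (hy' i k hne).1
            have hs : y j₀ i + y j₀ k ≠ 0 := by
              intro h
              exact (hy' i k hne).2 (eq_neg_of_add_eq_zero_left h)
            have base : mz (fun t =>
                ((α j₀ i * α j₀ k + β j₀ i * β j₀ k) / 2) * Real.cos ((y j₀ i - y j₀ k) * t)
                + ((α j₀ i * α j₀ k - β j₀ i * β j₀ k) / 2) * Real.cos ((y j₀ i + y j₀ k) * t)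
                + ((β j₀ i * α j₀ k - α j₀ i * β j₀ k) / 2) * Real.sin ((y j₀ i - y j₀ k) * t)
                + ((β j₀ i * α j₀ k + α j₀ i * β j₀ k) / 2) * Real.sin ((y j₀ i + y j₀ k) * t)) := by
              refine mz_add (by fun_prop) (by fun_prop) ?_ (mz_const_mul _ (mz_sin _))
              refine mz_add (by fun_prop) (by fun_prop) ?_ (mz_const_mul _ (mz_sin _))
              exact mz_add (by fun_prop) (by fun_prop)
                (mz_const_mul _ (mz_cos hd)) (mz_const_mul _ (mz_cos hs))
            refine mz_congr (fun t => ?_) base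
            rw [show (y j₀ i - y j₀ k) * t = y j₀ i * t - y j₀ k * t by ring,
              show (y j₀ i + y j₀ k) * t = y j₀ i * t + y j₀ k * t by ring,
              Real.cos_sub, Real.cos_add, Real.sin_sub, Real.sin_add]
            ring
    refine mz_congr (fun t => ?_) key
    have e1 : (∑ i, ∑ k,
        (α j₀ i * Real.cos (y j₀ i * t) + β j₀ i * Real.sin (y j₀ i * t)) *
        (α j₀ k * Real.cos (y j₀ k * t) + β j₀ k * Real.sin (y j₀ k * t)))
        = TT j₀ t * TT j₀ t := by
      rw [hTT, ← Finset.sum_mul_sum]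
    have e2 : (∑ i : Fin (N j₀), ∑ k : Fin (N j₀),
        (if k = i then (α j₀ i ^ 2 + β j₀ i ^ 2) / 2 else 0)) = S := by
      rw [hS]
      apply Finset.sum_congr rfl
      intro i _
      simp [Finset.sum_ite_eq']
    calc (∑ i, ∑ k,
        ((α j₀ i * Real.cos (y j₀ i * t) + β j₀ i * Real.sin (y j₀ i * t)) *
         (α j₀ k * Real.cos (y j₀ k * t) + β j₀ k * Real.sin (y j₀ k * t))
          - if k = i then (α j₀ i ^ 2 + β j₀ i ^ 2) / 2 else 0))
        = (∑ i, ∑ k,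
        (α j₀ i * Real.cos (y j₀ i * t) + β j₀ i * Real.sin (y j₀ i * t)) *
        (α j₀ k * Real.cos (y j₀ k * t) + β j₀ k * Real.sin (y j₀ k * t)))
          - ∑ i : Fin (N j₀), ∑ k : Fin (N j₀),
            (if k = i then (α j₀ i ^ 2 + β j₀ i ^ 2) / 2 else 0) := by
          simp [Finset.sum_sub_distrib]
      _ = TT j₀ t * TT j₀ t - S := by rw [e1, e2]
  -- assembling the limit
  have conth : Continuous (fun t => (TT j₀ t + tl t) * (Cb j₀ - TT j₀ t)) :=
    ((contTT j₀).add conttl).mul (continuous_const.sub (contTT j₀))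
  have mzbig : mz (fun t => (TT j₀ t + tl t) * (Cb j₀ - TT j₀ t) + S) := by
    have base : mz (fun t =>
        (Cb j₀ * TT j₀ t + Cb j₀ * tl t) +
        ((-1) * (tl t * TT j₀ t) + (-1) * (TT j₀ t * TT j₀ t - S))) := by
      refine mz_add ?_ ?_ (mz_add ?_ ?_ (mz_const_mul _ mzT1) (mz_const_mul _ mztail))
        (mz_add ?_ ?_ (mz_const_mul _ mztailT1) (mz_const_mul _ mzsq))
      · exact (continuous_const.mul (contTT j₀)).add (continuous_const.mul conttl)
      · exact (continuous_const.mul (conttl.mul (contTT j₀))).add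
          (continuous_const.mul (((contTT j₀).mul (contTT j₀)).sub continuous_const))
      · exact continuous_const.mul (contTT j₀)
      · exact continuous_const.mul conttl
      · exact continuous_const.mul (conttl.mul (contTT j₀))
      · exact continuous_const.mul (((contTT j₀).mul (contTT j₀)).sub continuous_const)
    refine mz_congr (fun t => ?_) base
    ring
  have key : Filter.Tendsto
      (fun T => (∫ t in (0:ℝ)..T, (TT j₀ t + tl t) * (Cb j₀ - TT j₀ t)) / T)
      Filter.atTop (nhds (-S)) := by
    have h1 := mzbig.sub_const S
    rw [zero_sub] at h1
    refine h1.congr' ?_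
    filter_upwards [Filter.eventually_ge_atTop (1:ℝ)] with T hT
    have hT0 : T ≠ 0 := by linarith
    rw [intervalIntegral.integral_add (conth.intervalIntegrable _ _)
      (intervalIntegrable_const), intervalIntegral.integral_const, smul_eq_mul, sub_zero]
    field_simp
    ring
  have evnonneg : ∀ᶠ T in Filter.atTop,
      0 ≤ (∫ t in (0:ℝ)..T, (TT j₀ t + tl t) * (Cb j₀ - TT j₀ t)) / T := by
    filter_upwards [Filter.eventually_ge_atTop (0:ℝ)] with T hT
    refine div_nonneg ?_ hT
    refine intervalIntegral.integral_nonneg hT ?_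
    intro u hu
    have h1 := hgpos u hu.1
    have h2 : TT j₀ u ≤ Cb j₀ := (le_abs_self _).trans (hTb j₀ u)
    exact mul_nonneg h1 (by linarith)
  have hSneg : 0 ≤ -S := ge_of_tendsto key evnonneg
  have hS0 : S = 0 := by
    refine le_antisymm (by linarith) ?_
    rw [hS]
    exact Finset.sum_nonneg fun i _ => by positivity
  intro i
  have hterm : (α j₀ i ^ 2 + β j₀ i ^ 2) / 2 = 0 := by
    have h := (Finset.sum_eq_zero_iff_of_nonneg
      (fun k (_ : k ∈ Finset.univ) => by positivity : ∀ k ∈ Finset.univ,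
        0 ≤ (α j₀ k ^ 2 + β j₀ k ^ 2) / 2)).mp (hS ▸ hS0) i (Finset.mem_univ i)
    exact h
  constructor <;> nlinarith [sq_nonneg (α j₀ i), sq_nonneg (β j₀ i)]
end

section
/- Let μ be a finite signed regular Borel measure on [0,∞). Then sup_{e ∈ C₀(ℝ₊)} ( ∫₀^∞ e dμ − sup_{t≥0} max(−e(t),0) ) equals 0 if μ is a nonpositive measure with ‖μ‖ ≤ 1, and equals +∞ otherwise. Equivalently, the Young–Fenchel conjugate of f_os(e) = sup_{t≥0} max(−e(t),0) on C₀(ℝ₊) is the indicator function of {μ : μ ≤ 0 and ‖μ‖ ≤ 1}. -/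
open MeasureTheory
open scoped NNReal

/-- The space `C₀(ℝ₊)` of continuous functions on `[0,∞)` vanishing at infinity. -/
def CZero : Type := {e : ℝ≥0 → ℝ // Continuous e ∧ Filter.Tendsto e Filter.atTop (nhds 0)}

/-- The pairing `∫₀^∞ e dμ` of a bounded measurable function with a finite signed
measure `μ = μ₊ + μ₋` (with `μ₋ ≤ 0`), computed via the Jordan decomposition. -/
noncomputable def pairing (μ : SignedMeasure ℝ≥0) (e : ℝ≥0 → ℝ) : ℝ :=
  (∫ t, e t ∂μ.toJordanDecomposition.posPart) - ∫ t, e t ∂μ.toJordanDecomposition.negPart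

namespace ConjAux

open Filter Set

/-- Elements of `CZero` are bounded. -/
lemma czero_bound {e : ℝ≥0 → ℝ} (hc : Continuous e)
    (ht : Filter.Tendsto e Filter.atTop (nhds 0)) : ∃ C : ℝ, 0 ≤ C ∧ ∀ t, |e t| ≤ C := by
  obtain ⟨T, hT⟩ := Filter.eventually_atTop.mp (Metric.tendsto_nhds.mp ht 1 one_pos)
  obtain ⟨C, hC⟩ := (isCompact_Icc : IsCompact (Icc (0:ℝ≥0) T)).exists_bound_of_continuousOn
    hc.continuousOn
  refine ⟨max C 1, le_trans zero_le_one (le_max_right _ _), fun t => ?_⟩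
  by_cases h : t ≤ T
  · exact le_trans (by simpa [Real.norm_eq_abs] using hC t ⟨zero_le, h⟩) (le_max_left _ _)
  · have h2 := hT t (le_of_not_ge h)
    rw [dist_zero_right, Real.norm_eq_abs] at h2
    exact le_trans h2.le (le_max_right _ _)

/-- Compactly supported functions on `ℝ≥0` tend to zero at infinity. -/
lemma tendsto_of_compactSupport {g : ℝ≥0 → ℝ} (hg : HasCompactSupport g) :
    Filter.Tendsto g Filter.atTop (nhds 0) := by
  obtain ⟨T, hT⟩ := hg.isCompact.bddAbove
  have hev : g =ᶠ[Filter.atTop] (fun _ => (0:ℝ)) := by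
    rw [Filter.EventuallyEq, Filter.eventually_atTop]
    refine ⟨T + 1, fun t ht => ?_⟩
    apply image_eq_zero_of_notMem_tsupport
    intro hmem
    exact absurd (le_trans ht (hT hmem)) (by simpa using (lt_add_one T).not_ge)
  exact (Filter.tendsto_congr' hev).mpr tendsto_const_nhds

/-- A bounded continuous function is integrable w.r.t. a finite measure. -/
lemma integrable_of_bound {e : ℝ≥0 → ℝ} (hc : Continuous e) {C : ℝ}
    (hb : ∀ t, |e t| ≤ C) (ν : Measure ℝ≥0) [IsFiniteMeasure ν] : Integrable e ν :=
  Integrable.mono' (integrable_const C) hc.aestronglyMeasurable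
    (Filter.Eventually.of_forall fun t => by simpa [Real.norm_eq_abs] using hb t)

lemma integral_indicator_le {g : ℝ≥0 → ℝ} (hc : Continuous g) (hcs : HasCompactSupport g)
    (hg0 : ∀ t, 0 ≤ g t) {K : Set ℝ≥0} (hK : IsCompact K) (hg1 : ∀ t ∈ K, g t = 1)
    (ν : Measure ℝ≥0) [IsFiniteMeasure ν] : (ν K).toReal ≤ ∫ t, g t ∂ν := by
  have hind : Integrable (K.indicator (fun _ => (1:ℝ))) ν :=
    (integrable_const (1:ℝ)).indicator hK.measurableSet
  have hgint : Integrable g ν := hc.integrable_of_hasCompactSupport hcs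
  have hle : ∀ t, K.indicator (fun _ => (1:ℝ)) t ≤ g t := by
    intro t
    by_cases htK : t ∈ K
    · simp [Set.indicator_of_mem htK, hg1 t htK]
    · simp [Set.indicator_of_notMem htK, hg0 t]
  calc (ν K).toReal = ∫ t, K.indicator (fun _ => (1:ℝ)) t ∂ν := by
        rw [MeasureTheory.integral_indicator_const (1:ℝ) hK.measurableSet]; simp; rfl
    _ ≤ ∫ t, g t ∂ν := integral_mono hind hgint hle

lemma integral_le_indicator {g : ℝ≥0 → ℝ} (hc : Continuous g) (hcs : HasCompactSupport g)
    (hg1 : ∀ t, g t ≤ 1) {U : Set ℝ≥0} (hU : IsOpen U) (hg0 : ∀ t ∉ U, g t = 0)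
    (ν : Measure ℝ≥0) [IsFiniteMeasure ν] : ∫ t, g t ∂ν ≤ (ν U).toReal := by
  have hind : Integrable (U.indicator (fun _ => (1:ℝ))) ν :=
    (integrable_const (1:ℝ)).indicator hU.measurableSet
  have hgint : Integrable g ν := hc.integrable_of_hasCompactSupport hcs
  have hle : ∀ t, g t ≤ U.indicator (fun _ => (1:ℝ)) t := by
    intro t
    by_cases htU : t ∈ U
    · simpa [Set.indicator_of_mem htU] using hg1 t
    · simp [Set.indicator_of_notMem htU, hg0 t htU]
  calc ∫ t, g t ∂ν ≤ ∫ t, U.indicator (fun _ => (1:ℝ)) t ∂ν := integral_mono hgint hind hle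
    _ = (ν U).toReal := by rw [MeasureTheory.integral_indicator_const (1:ℝ) hU.measurableSet]; simp; rfl

end ConjAux

open Filter Set ConjAux

/-- The Young–Fenchel conjugate of the overshoot functional
`f_os(e) = sup_{t≥0} max(-e t, 0)` on `C₀(ℝ₊)` is the indicator function of
`{μ : μ ≤ 0, ‖μ‖ ≤ 1}`: the supremum `sup_{e ∈ C₀} (∫₀^∞ e dμ - f_os(e))`
is `0` when `μ ≤ 0` and `‖μ‖ ≤ 1` (variation norm), and `+∞` otherwise. -/
theorem conjugate_overshoot
    (μ : SignedMeasure ℝ≥0) (hreg : μ.totalVariation.Regular) :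
    ((μ ≤ 0 ∧ μ.totalVariation Set.univ ≤ 1) →
      (⨆ e : CZero, ((pairing μ e.1 - ⨆ t, max (-e.1 t) 0 : ℝ) : EReal)) = 0) ∧
    (¬(μ ≤ 0 ∧ μ.totalVariation Set.univ ≤ 1) →
      (⨆ e : CZero, ((pairing μ e.1 - ⨆ t, max (-e.1 t) 0 : ℝ) : EReal)) = ⊤) := by
  classical
  haveI hregI : μ.totalVariation.Regular := hreg
  set p := μ.toJordanDecomposition.posPart with hp
  set n := μ.toJordanDecomposition.negPart with hn
  haveI : IsFiniteMeasure p := μ.toJordanDecomposition.posPart_finite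
  haveI : IsFiniteMeasure n := μ.toJordanDecomposition.negPart_finite
  have htveq : μ.totalVariation = p + n := rfl
  haveI : IsFiniteMeasure μ.totalVariation := by rw [htveq]; infer_instance
  obtain ⟨S, hSm, hpS, hnSc⟩ := μ.toJordanDecomposition.mutuallySingular
  have happly : ∀ s : Set ℝ≥0, MeasurableSet s → μ s = (p s).toReal - (n s).toReal := by
    intro s hs
    conv_lhs => rw [← μ.toSignedMeasure_toJordanDecomposition]
    rw [JordanDecomposition.toSignedMeasure, Measure.toSignedMeasure_sub_apply hs]; rfl
  -- the zero element of CZero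
  let e0 : CZero := ⟨fun _ => 0, continuous_const, tendsto_const_nhds⟩
  have hval0 : ((pairing μ e0.1 - ⨆ t, max (-e0.1 t) 0 : ℝ) : EReal) = 0 := by
    have h1 : pairing μ e0.1 = 0 := by simp [pairing, e0]
    have h2 : (⨆ t : ℝ≥0, max (-e0.1 t) 0) = 0 := by
      simp only [e0, neg_zero, max_self]
      exact ciSup_const
    rw [h1, h2, sub_zero]; rfl
  -- μ ≤ 0 implies posPart = 0
  have hpzero : μ ≤ 0 → p = 0 := by
    intro hle
    have h1 : μ Sᶜ ≤ 0 := by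
      have := (MeasureTheory.VectorMeasure.le_iff.mp hle) Sᶜ hSm.compl
      simpa using this
    rw [happly Sᶜ hSm.compl, hnSc] at h1
    simp only [ENNReal.toReal_zero, sub_zero] at h1
    have hpSc : p Sᶜ = 0 := by
      have := le_antisymm h1 ENNReal.toReal_nonneg
      rwa [ENNReal.toReal_eq_zero_iff, or_iff_left (measure_ne_top p Sᶜ)] at this
    have huniv : p Set.univ = 0 := by
      have h2 : p Set.univ ≤ p S + p Sᶜ := by
        rw [← Set.union_compl_self S]; exact measure_union_le _ _
      rw [hpS, hpSc] at h2; simpa using h2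
    exact Measure.measure_univ_eq_zero.mp huniv
  constructor
  · -- the indicator-set case : the supremum is 0
    rintro ⟨hle, htv⟩
    have hpz : p = 0 := hpzero hle
    have hn1 : n Set.univ ≤ 1 := by
      rw [htveq] at htv
      simpa [hpz] using htv
    apply le_antisymm
    · apply iSup_le
      intro e
      obtain ⟨hec, het⟩ := e.2
      obtain ⟨C, hC0, hCb⟩ := czero_bound hec het
      have hbddM : BddAbove (Set.range fun t => max (-e.1 t) 0) := by
        refine ⟨C, ?_⟩
        rintro x ⟨t, rfl⟩
        exact max_le (le_trans (neg_le_abs _) (hCb t)) hC0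
      set M := ⨆ t, max (-e.1 t) 0 with hM
      have hM0 : 0 ≤ M := le_trans (le_max_right _ _) (le_ciSup hbddM 0)
      have hMt : ∀ t, -e.1 t ≤ M := fun t => le_trans (le_max_left _ _) (le_ciSup hbddM t)
      have hint : Integrable e.1 n := integrable_of_bound hec hCb n
      have hkey : pairing μ e.1 ≤ M := by
        have h1 : pairing μ e.1 = -∫ t, e.1 t ∂n := by
          simp only [pairing, ← hp, ← hn, hpz, integral_zero_measure, zero_sub]
        have h2 : ∫ t, -e.1 t ∂n ≤ ∫ _, M ∂n :=
          integral_mono hint.neg (integrable_const M) hMt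
        rw [h1, ← integral_neg]
        refine le_trans h2 ?_
        rw [integral_const, smul_eq_mul, mul_comm]
        exact mul_le_of_le_one_right hM0
          (le_trans (ENNReal.toReal_mono ENNReal.one_ne_top hn1) (by simp))
      have : ((pairing μ e.1 - M : ℝ) : EReal) ≤ ((0:ℝ) : EReal) := by
        rw [EReal.coe_le_coe_iff]; linarith
      simpa using this
    · rw [← hval0]
      exact le_iSup (fun e : CZero => ((pairing μ e.1 - ⨆ t, max (-e.1 t) 0 : ℝ) : EReal)) e0
  · -- outside the indicator set : the supremum is ⊤
    intro hns
    -- it suffices to produce δ > 0 and, for each c ≥ 0, an element with value ≥ c * δ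
    suffices h : ∃ δ : ℝ, 0 < δ ∧ ∀ c : ℝ, 0 ≤ c → ∃ e : CZero,
        c * δ ≤ pairing μ e.1 - ⨆ t, max (-e.1 t) 0 by
      obtain ⟨δ, hδ, hall⟩ := h
      rw [iSup_eq_top]
      intro b hb
      set c := max (b.toReal + 1) 1 / δ with hc
      have hc0 : 0 ≤ c := div_nonneg (le_trans zero_le_one (le_max_right _ _)) hδ.le
      obtain ⟨e, he⟩ := hall c hc0
      refine ⟨e, lt_of_le_of_lt (EReal.le_coe_toReal hb.ne) ?_⟩
      have hlt : b.toReal < c * δ := by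
        rw [hc, div_mul_cancel₀ _ hδ.ne']
        exact lt_of_lt_of_le (lt_add_one _) (le_max_left _ _)
      exact_mod_cast lt_of_lt_of_le hlt he
    by_cases hle : μ ≤ 0
    · -- μ ≤ 0 but total variation exceeds 1
      have hpz : p = 0 := hpzero hle
      have h1lt : 1 < μ.totalVariation Set.univ := not_le.mp fun h => hns ⟨hle, h⟩
      -- inner regularity : compact K with totalVariation K > 1
      have hε0 : μ.totalVariation Set.univ - 1 ≠ 0 := by
        rw [Ne, tsub_eq_zero_iff_le]; exact not_le.mpr h1lt
      obtain ⟨K, -, hKc, hKlt⟩ := MeasurableSet.univ.exists_isCompact_lt_add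
        (μ := μ.totalVariation) (measure_ne_top _ _) hε0
      have h1K : 1 < μ.totalVariation K := by
        by_contra h
        push_neg at h
        have h2 : μ.totalVariation K + (μ.totalVariation Set.univ - 1)
            ≤ 1 + (μ.totalVariation Set.univ - 1) := add_le_add_left h _
        rw [add_tsub_cancel_of_le h1lt.le] at h2
        exact absurd (lt_of_lt_of_le hKlt h2) (lt_irrefl _)
      have hnK : 1 < n K := by
        rw [htveq] at h1K; simpa [hpz] using h1K
      have hnKtop : n K ≠ ⊤ := measure_ne_top n K
      have hnKr : 1 < (n K).toReal := by
        rw [show (1:ℝ) = (1:ENNReal).toReal by simp]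
        exact (ENNReal.toReal_lt_toReal ENNReal.one_ne_top hnKtop).mpr hnK
      obtain ⟨k, hk⟩ : K.Nonempty := by
        rw [Set.nonempty_iff_ne_empty]
        rintro rfl
        simp at hnK
      obtain ⟨g, hg1, -, hgcs, hgmem⟩ := exists_continuous_one_zero_of_isCompact hKc
        isClosed_empty (Set.disjoint_empty K)
      refine ⟨(n K).toReal - 1, by linarith, fun c hc0 => ?_⟩
      set e : ℝ≥0 → ℝ := fun t => -(c * g t) with he
      have hecont : Continuous e := (continuous_const.mul g.continuous).neg
      have hecs : HasCompactSupport e := by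
        apply HasCompactSupport.neg (f := fun t => c * g t)
        exact hgcs.mul_left
      refine ⟨⟨e, hecont, tendsto_of_compactSupport hecs⟩, ?_⟩
      have hgint : Integrable (fun t => g t) n := g.continuous.integrable_of_hasCompactSupport hgcs
      have hpair : pairing μ e = c * ∫ t, g t ∂n := by
        simp only [pairing, ← hp, ← hn, hpz, integral_zero_measure, zero_sub, he]
        rw [integral_neg, integral_const_mul, neg_neg]
      have hsup : (⨆ t, max (-e t) 0) = c := by
        apply le_antisymm
        · apply ciSup_le
          intro t
          refine max_le ?_ hc0
          simp only [he, neg_neg]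
          calc c * g t ≤ c * 1 := mul_le_mul_of_nonneg_left (hgmem t).2 hc0
            _ = c := mul_one c
        · have hbdd : BddAbove (Set.range fun t => max (-e t) 0) := by
            refine ⟨c, ?_⟩
            rintro x ⟨t, rfl⟩
            refine max_le ?_ hc0
            simp only [he, neg_neg]
            calc c * g t ≤ c * 1 := mul_le_mul_of_nonneg_left (hgmem t).2 hc0
              _ = c := mul_one c
          refine le_trans ?_ (le_ciSup hbdd k)
          simp only [he, neg_neg, hg1 hk, Pi.one_apply, mul_one]
          exact le_max_left _ _
      have hintK : (n K).toReal ≤ ∫ t, g t ∂n :=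
        integral_indicator_le g.continuous hgcs (fun t => (hgmem t).1) hKc
          (fun t ht => by simpa using hg1 ht) n
      rw [hpair, hsup]
      have : c * (n K).toReal ≤ c * ∫ t, g t ∂n := mul_le_mul_of_nonneg_left hintK hc0
      nlinarith
    · -- μ is not nonpositive : posPart charges some set away from negPart
      rw [MeasureTheory.VectorMeasure.le_iff] at hle
      push_neg at hle
      obtain ⟨s, hsm, hs⟩ := hle
      rw [MeasureTheory.VectorMeasure.zero_apply] at hs
      have hps : 0 < (p s).toReal := by
        have h1 := happly s hsm
        have h2 := ENNReal.toReal_nonneg (a := n s)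
        rw [h1] at hs; linarith
      set A := s ∩ Sᶜ with hA
      have hAm : MeasurableSet A := hsm.inter hSm.compl
      have hnA : n A = 0 :=
        le_antisymm (le_trans (measure_mono Set.inter_subset_right) hnSc.le) zero_le
      have hpA : 0 < p A := by
        rcases eq_or_lt_of_le (zero_le : 0 ≤ p A) with h | h
        · exfalso
          have h2 : p s ≤ p (s ∩ S) + p (s ∩ Sᶜ) := by
            conv_lhs => rw [← Set.inter_union_compl s S]
            exact measure_union_le _ _
          rw [← hA, ← h] at h2
          have h3 : p (s ∩ S) ≤ p S := measure_mono Set.inter_subset_right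
          rw [hpS] at h3
          have : p s = 0 := by
            have h5 : p (s ∩ S) = 0 := le_antisymm h3 zero_le
            rw [h5, add_zero] at h2
            exact le_antisymm h2 zero_le
          rw [this] at hps; simp at hps
        · exact h
      -- inner regularity : compact K ⊆ A with p K > p A / 2
      have htvA : μ.totalVariation A = p A := by
        rw [htveq]; simp [hnA]
      obtain ⟨K, hKA, hKc, hKlt⟩ := hAm.exists_isCompact_lt_add
        (μ := μ.totalVariation) (measure_ne_top _ _) (ε := p A / 2)
        (by simpa using (ENNReal.half_pos hpA.ne').ne')
      have hnK : n K = 0 := le_antisymm (le_trans (measure_mono hKA) hnA.le) zero_le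
      have htvK : μ.totalVariation K = p K := by rw [htveq]; simp [hnK]
      have hpKhalf : p A / 2 < p K := by
        by_contra hcon
        push_neg at hcon
        have h4 : p K + p A / 2 ≤ p A / 2 + p A / 2 := add_le_add_left hcon _
        rw [ENNReal.add_halves] at h4
        rw [htvA, htvK] at hKlt
        exact absurd (lt_of_lt_of_le hKlt h4) (lt_irrefl _)
      have hpK : 0 < p K := lt_of_le_of_lt zero_le hpKhalf
      -- outer regularity : open U ⊇ K with n U < p K
      obtain ⟨U, hKU, hUo, hUlt⟩ := Set.exists_isOpen_lt_add K
        (μ := μ.totalVariation) (measure_ne_top _ _) (ε := p K) hpK.ne'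
      have hnU : n U < p K := by
        have h1 : n U + p U ≤ μ.totalVariation U := by rw [htveq]; simp [add_comm]
        have h2 : μ.totalVariation K + p K ≤ p U + p K := by
          rw [htvK]
          exact add_le_add_left (measure_mono hKU) _
        have h3 : n U + p U < p U + p K := lt_of_le_of_lt h1 (lt_of_lt_of_le hUlt h2)
        rw [add_comm (p U) (p K)] at h3
        exact lt_of_add_lt_add_right (by rwa [add_comm (p K) (p U)] at h3)
      have hδpos : 0 < (p K).toReal - (n U).toReal := by
        have := (ENNReal.toReal_lt_toReal (measure_ne_top n U) (measure_ne_top p K)).mpr hnU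
        linarith
      obtain ⟨g, hg1, hg0, hgcs, hgmem⟩ := exists_continuous_one_zero_of_isCompact hKc
        hUo.isClosed_compl (disjoint_compl_right_iff_subset.mpr hKU)
      refine ⟨(p K).toReal - (n U).toReal, hδpos, fun c hc0 => ?_⟩
      set e : ℝ≥0 → ℝ := fun t => c * g t with he
      have hecont : Continuous e := continuous_const.mul g.continuous
      have hecs : HasCompactSupport e := hgcs.mul_left
      refine ⟨⟨e, hecont, tendsto_of_compactSupport hecs⟩, ?_⟩
      have hsup : (⨆ t, max (-e t) 0) = 0 := by
        have heq : (fun t => max (-e t) 0) = fun _ => (0:ℝ) := by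
          funext t
          exact max_eq_right (neg_nonpos.mpr (mul_nonneg hc0 (hgmem t).1))
        rw [heq]; exact ciSup_const
      have hpair : pairing μ e = c * ∫ t, g t ∂p - c * ∫ t, g t ∂n := by
        simp only [pairing, ← hp, ← hn, he, integral_const_mul]
      have hintp : (p K).toReal ≤ ∫ t, g t ∂p :=
        integral_indicator_le g.continuous hgcs (fun t => (hgmem t).1) hKc
          (fun t ht => by simpa using hg1 ht) p
      have hintn : ∫ t, g t ∂n ≤ (n U).toReal :=
        integral_le_indicator g.continuous hgcs (fun t => (hgmem t).2) hUo
          (fun t ht => by simpa using hg0 ht) n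
      rw [hsup, hpair, sub_zero]
      have h1 : c * (p K).toReal ≤ c * ∫ t, g t ∂p := mul_le_mul_of_nonneg_left hintp hc0
      have h2 : c * ∫ t, g t ∂n ≤ c * (n U).toReal := mul_le_mul_of_nonneg_left hintn hc0
      nlinarith
end

section
/- Let μ be a finite signed regular Borel measure on [0,∞). Then sup_{e ∈ C₀(ℝ₊)} ( ∫₀^∞ e dμ − (1/2)(sup_{t≥0} e(t) − inf_{t≥0} e(t)) ) equals 0 if μ₊([0,∞)) ≤ 1/2 and μ₋([0,∞)) ≥ −1/2, and equals +∞ otherwise. Equivalently, the Young–Fenchel conjugate of the fluctuation functional f_fl(e) = (1/2)(sup e − inf e) on C₀(ℝ₊) is the indicator function of {μ : μ₊([0,∞)) ≤ 1/2, μ₋([0,∞)) ≥ −1/2}. -/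
open MeasureTheory
open scoped NNReal

lemma czero_bounded {e : ℝ≥0 → ℝ} (hc : Continuous e)
    (h0 : Filter.Tendsto e Filter.atTop (nhds 0)) : ∃ C, ∀ x, |e x| ≤ C := by
  have h1 : ∀ᶠ x in Filter.atTop, dist (e x) 0 < 1 := Metric.tendsto_nhds.1 h0 1 one_pos
  obtain ⟨b, hb⟩ := Filter.eventually_atTop.1 h1
  obtain ⟨C₁, hC₁⟩ := (isCompact_Icc (a := (0:ℝ≥0)) (b := b)).exists_bound_of_continuousOn
    hc.continuousOn
  refine ⟨max C₁ 1, fun x => ?_⟩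
  rcases le_or_gt x b with h | h
  · simpa [Real.norm_eq_abs] using (hC₁ x ⟨(zero_le : (0:ℝ≥0) ≤ x), h⟩).trans (le_max_left _ _)
  · have := hb x h.le
    rw [Real.dist_eq, sub_zero] at this
    exact this.le.trans (le_max_right _ _)

lemma czero_integrable {e : ℝ≥0 → ℝ} (hc : Continuous e)
    (h0 : Filter.Tendsto e Filter.atTop (nhds 0)) (P : Measure ℝ≥0) [IsFiniteMeasure P] :
    Integrable e P := by
  obtain ⟨C, hC⟩ := czero_bounded hc h0
  exact ⟨hc.aestronglyMeasurable,
    HasFiniteIntegral.of_bounded (C := C)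
      (Filter.Eventually.of_forall fun x => by simpa [Real.norm_eq_abs] using hC x)⟩

lemma sup_of_Icc {e : ℝ≥0 → ℝ} {a b : ℝ} (h : ∀ x, e x ∈ Set.Icc a b)
    (hb : ∃ x, e x = b) : (⨆ t, e t) = b := by
  obtain ⟨x, hx⟩ := hb
  refine le_antisymm (ciSup_le fun t => (h t).2) ?_
  calc b = e x := hx.symm
    _ ≤ ⨆ t, e t := le_ciSup ⟨b, fun y ⟨t, ht⟩ => ht ▸ (h t).2⟩ x

lemma inf_of_Icc {e : ℝ≥0 → ℝ} {a b : ℝ} (h : ∀ x, e x ∈ Set.Icc a b)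
    (ha : ∃ x, e x = a) : (⨅ t, e t) = a := by
  obtain ⟨x, hx⟩ := ha
  refine le_antisymm ?_ (le_ciInf fun t => (h t).1)
  calc (⨅ t, e t) ≤ e x := ciInf_le ⟨a, fun y ⟨t, ht⟩ => ht ▸ (h t).1⟩ x
    _ = a := hx

lemma key (P N : Measure ℝ≥0) [IsFiniteMeasure P] [IsFiniteMeasure N]
    (hs : ∃ S, MeasurableSet S ∧ P Sᶜ = 0 ∧ N S = 0)
    (h : 1 / 2 < (P Set.univ).toReal) (M : ℝ) :
    ∃ (e : ℝ≥0 → ℝ) (c : ℝ), 0 ≤ c ∧ Continuous e ∧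
      Filter.Tendsto e Filter.atTop (nhds 0) ∧
      (∀ x, e x ∈ Set.Icc 0 c) ∧ (∃ x, e x = c) ∧ (∃ x, e x = 0) ∧
      M + c / 2 ≤ (∫ t, e t ∂P) - ∫ t, e t ∂N := by
  obtain ⟨S, hSm, hPSc, hNS⟩ := hs
  set pT := (P Set.univ).toReal with hpT
  set ε := pT - 1 / 2 with hε
  have hε0 : 0 < ε := by simp only [hε]; linarith
  have hPS : P S = P Set.univ := by
    have h' := measure_add_measure_compl (μ := P) hSm
    rw [hPSc, add_zero] at h'; exact h'
  have hε' : (ENNReal.ofReal (ε / 4)) ≠ 0 := by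
    simp only [ne_eq, ENNReal.ofReal_eq_zero, not_le]; linarith
  obtain ⟨K, hKS, hKc, hPK⟩ := hSm.exists_isCompact_lt_add (measure_ne_top P S) hε'
  have hNK : N K < ENNReal.ofReal (ε / 4) := by
    have hle : N K ≤ N S := measure_mono hKS
    rw [hNS] at hle
    exact lt_of_le_of_lt hle (by simpa [pos_iff_ne_zero] using hε')
  obtain ⟨U, hKU, hUopen, hNU⟩ := Set.exists_isOpen_lt_of_lt K _ hNK
  obtain ⟨b, hKb⟩ := hKc.bddAbove
  set U' := U ∩ Set.Iio (b + 1) with hU'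
  have hU'open : IsOpen U' := hUopen.inter isOpen_Iio
  have hKU' : K ⊆ U' := fun x hx => ⟨hKU hx, lt_of_le_of_lt (hKb hx) (lt_add_one b)⟩
  have hNU' : N U' < ENNReal.ofReal (ε / 4) :=
    lt_of_le_of_lt (measure_mono Set.inter_subset_left) hNU
  obtain ⟨f, hf0, hf1, hf01⟩ := exists_continuous_zero_one_of_isCompact hKc
    hU'open.isClosed_compl (Set.disjoint_left.2 fun x hx hx' => hx' (hKU' hx))
  set c := max 0 (2 * M / ε) with hcdef
  have hc0 : 0 ≤ c := le_max_left _ _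
  set e : ℝ≥0 → ℝ := fun x => c * (1 - f x) with he
  have heIcc : ∀ x, e x ∈ Set.Icc 0 c := by
    intro x
    obtain ⟨h1, h2⟩ := hf01 x
    refine ⟨mul_nonneg hc0 (by linarith), ?_⟩
    calc c * (1 - f x) ≤ c * 1 := mul_le_mul_of_nonneg_left (by linarith) hc0
      _ = c := mul_one c
  have hPK' : P Set.univ ≤ P K + ENNReal.ofReal (ε / 4) := by
    rw [← hPS]; exact hPK.le
  have hPKtoReal : pT ≤ (P K).toReal + ε / 4 := by
    have hne : P K + ENNReal.ofReal (ε / 4) ≠ ⊤ :=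
      ENNReal.add_ne_top.2 ⟨measure_ne_top P K, ENNReal.ofReal_ne_top⟩
    have h' := ENNReal.toReal_mono hne hPK'
    rwa [ENNReal.toReal_add (measure_ne_top P K) ENNReal.ofReal_ne_top,
      ENNReal.toReal_ofReal (by linarith)] at h'
  have hKne : K.Nonempty := by
    rcases K.eq_empty_or_nonempty with h' | h'
    · exfalso
      rw [h'] at hPKtoReal
      simp only [measure_empty, ENNReal.toReal_zero, zero_add] at hPKtoReal
      simp only [hε] at hε0 hPKtoReal
      linarith
    · exact h'
  obtain ⟨x₁, hx₁⟩ := hKne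
  have he₁ : e x₁ = c := by
    rw [he]; simp only [hf0 hx₁]
    simp
  have hx₀ : ((b + 1 : ℝ≥0)) ∈ U'ᶜ := by
    intro hmem
    exact absurd hmem.2 (by simp)
  have he₀ : e (b + 1) = 0 := by
    rw [he]; simp only []
    have : f (b + 1) = 1 := hf1 hx₀
    simp [this]
  have hcont : Continuous e := continuous_const.mul (continuous_const.sub f.continuous)
  have htend : Filter.Tendsto e Filter.atTop (nhds 0) := by
    have hev : e =ᶠ[Filter.atTop] fun _ => 0 := by
      refine Filter.eventually_atTop.2 ⟨b + 1, fun x hx => ?_⟩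
      have hxU' : x ∈ U'ᶜ := by
        intro hmem
        exact absurd hmem.2 (by simp; exact hx)
      have : f x = 1 := hf1 hxU'
      rw [he]; simp [this]
    exact tendsto_const_nhds.congr' hev.symm
  have hintP : Integrable e P := czero_integrable hcont htend P
  have hintN : Integrable e N := czero_integrable hcont htend N
  have h1 : (P K).toReal * c ≤ ∫ t, e t ∂P := by
    have hind : ∀ x, K.indicator (fun _ => c) x ≤ e x := by
      intro x
      by_cases hx : x ∈ K
      · rw [Set.indicator_of_mem hx]
        rw [he]; simp [hf0 hx]
      · rw [Set.indicator_of_notMem hx]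
        exact (heIcc x).1
    have := integral_mono ((integrable_const c).indicator hKc.measurableSet) hintP hind
    rwa [integral_indicator_const c hKc.measurableSet, smul_eq_mul] at this
  have h2 : ∫ t, e t ∂N ≤ (N U').toReal * c := by
    have hind : ∀ x, e x ≤ U'.indicator (fun _ => c) x := by
      intro x
      by_cases hx : x ∈ U'
      · rw [Set.indicator_of_mem hx]
        exact (heIcc x).2
      · rw [Set.indicator_of_notMem hx]
        have : f x = 1 := hf1 hx
        rw [he]; simp [this]
    have := integral_mono hintN ((integrable_const c).indicator hU'open.measurableSet) hind
    rwa [integral_indicator_const c hU'open.measurableSet, smul_eq_mul] at this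
  have hNUr : (N U').toReal ≤ ε / 4 := by
    have := ENNReal.toReal_mono ENNReal.ofReal_ne_top hNU'.le
    rwa [ENNReal.toReal_ofReal (by linarith)] at this
  have hcM : 2 * M ≤ c * ε := by
    have := le_max_right 0 (2 * M / ε)
    calc 2 * M = (2 * M / ε) * ε := by field_simp
      _ ≤ c * ε := mul_le_mul_of_nonneg_right this hε0.le
  refine ⟨e, c, hc0, hcont, htend, heIcc, ⟨x₁, he₁⟩, ⟨b + 1, he₀⟩, ?_⟩
  have e1 : (pT - ε / 4) * c ≤ (P K).toReal * c :=
    mul_le_mul_of_nonneg_right (by linarith) hc0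
  have e2 : (N U').toReal * c ≤ (ε / 4) * c := mul_le_mul_of_nonneg_right hNUr hc0
  have hpT' : pT = 1 / 2 + ε := by rw [hε]; ring
  have e3 : (pT - ε / 4) * c - (ε / 4) * c = c / 2 + (c * ε) / 2 := by rw [hpT']; ring
  clear_value pT ε c e U'
  linarith [h1, h2, e1, e2, hcM, e3]

/-- The Young–Fenchel conjugate of the fluctuation functional
`f_fl(e) = (1/2)(sup_{t≥0} e t - inf_{t≥0} e t)` on `C₀(ℝ₊)` is the indicator function of
`{μ : μ₊([0,∞)) ≤ 1/2, μ₋([0,∞)) ≥ -1/2}` (with the convention `μ = μ₊ + μ₋`, `μ₊ ≥ 0`,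
`μ₋ ≤ 0`, so that `μ₋` is minus the Mathlib Jordan negative part): the supremum
`sup_{e ∈ C₀} (∫₀^∞ e dμ - f_fl(e))` is `0` on that set and `+∞` otherwise. -/
theorem conjugate_fluctuation
    (μ : SignedMeasure ℝ≥0) (hreg : μ.totalVariation.Regular) :
    (((μ.toJordanDecomposition.posPart Set.univ).toReal ≤ 1 / 2 ∧
        -(1 / 2 : ℝ) ≤ -(μ.toJordanDecomposition.negPart Set.univ).toReal) →
      (⨆ e : CZero,
        ((pairing μ e.1 - (1 / 2) * ((⨆ t, e.1 t) - ⨅ t, e.1 t) : ℝ) : EReal)) = 0) ∧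
    (¬((μ.toJordanDecomposition.posPart Set.univ).toReal ≤ 1 / 2 ∧
        -(1 / 2 : ℝ) ≤ -(μ.toJordanDecomposition.negPart Set.univ).toReal) →
      (⨆ e : CZero,
        ((pairing μ e.1 - (1 / 2) * ((⨆ t, e.1 t) - ⨅ t, e.1 t) : ℝ) : EReal)) = ⊤) := by
  classical
  constructor
  · rintro ⟨hP, hN'⟩
    have hN : (μ.toJordanDecomposition.negPart Set.univ).toReal ≤ 1 / 2 := by linarith
    refine le_antisymm (iSup_le fun e => ?_) ?_
    · obtain ⟨f, hc, h0⟩ := e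
      obtain ⟨C, hC⟩ := czero_bounded hc h0
      have hbddA : BddAbove (Set.range f) :=
        ⟨C, fun y ⟨t, ht⟩ => ht ▸ (abs_le.1 (hC t)).2⟩
      have hbddB : BddBelow (Set.range f) :=
        ⟨-C, fun y ⟨t, ht⟩ => ht ▸ (abs_le.1 (hC t)).1⟩
      have hS0 : 0 ≤ ⨆ t, f t := by
        by_contra hS
        push_neg at hS
        obtain ⟨x, hx⟩ := (h0.eventually (eventually_gt_nhds hS)).exists
        exact absurd (le_ciSup hbddA x) (not_le.2 hx)
      have hI0 : (⨅ t, f t) ≤ 0 := by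
        by_contra hI
        push_neg at hI
        obtain ⟨x, hx⟩ := (h0.eventually (eventually_lt_nhds hI)).exists
        exact absurd (ciInf_le hbddB x) (not_le.2 hx)
      have hintP := czero_integrable hc h0 μ.toJordanDecomposition.posPart
      have hintN := czero_integrable hc h0 μ.toJordanDecomposition.negPart
      have hIP : ∫ t, f t ∂μ.toJordanDecomposition.posPart ≤
          (μ.toJordanDecomposition.posPart Set.univ).toReal * (⨆ t, f t) := by
        have := integral_mono hintP (integrable_const (⨆ t, f t))
          (fun x => le_ciSup hbddA x)
        rwa [integral_const, smul_eq_mul] at this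
      have hIN : (μ.toJordanDecomposition.negPart Set.univ).toReal * (⨅ t, f t) ≤
          ∫ t, f t ∂μ.toJordanDecomposition.negPart := by
        have := integral_mono (integrable_const (⨅ t, f t)) hintN
          (fun x => ciInf_le hbddB x)
        rwa [integral_const, smul_eq_mul] at this
      rw [show (0 : EReal) = ((0 : ℝ) : EReal) by norm_num, EReal.coe_le_coe_iff]
      have hP0 : 0 ≤ (μ.toJordanDecomposition.posPart Set.univ).toReal :=
        ENNReal.toReal_nonneg
      have hN0 : 0 ≤ (μ.toJordanDecomposition.negPart Set.univ).toReal :=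
        ENNReal.toReal_nonneg
      simp only [pairing]
      nlinarith [mul_le_mul_of_nonneg_right hP hS0,
        mul_le_mul_of_nonneg_left hI0 hN0,
        mul_le_mul_of_nonneg_right hN (neg_nonneg.2 hI0)]
    · rw [show (0 : EReal) = ((0 : ℝ) : EReal) by norm_num]
      refine le_iSup_of_le (⟨fun _ => 0, continuous_const, tendsto_const_nhds⟩ : CZero) ?_
      rw [EReal.coe_le_coe_iff]
      simp [pairing, ciSup_const, ciInf_const]
  · intro hcond
    obtain ⟨s, hsm, hs1, hs2⟩ := μ.toJordanDecomposition.mutuallySingular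
    rw [iSup_eq_top]
    intro bnd hbnd
    have hM : ∃ M : ℝ, bnd < (M : EReal) := by
      induction bnd with
      | bot => exact ⟨0, EReal.bot_lt_coe 0⟩
      | coe x => exact ⟨x + 1, EReal.coe_lt_coe_iff.2 (lt_add_one x)⟩
      | top => exact absurd hbnd (lt_irrefl ⊤)
    obtain ⟨M, hMlt⟩ := hM
    by_cases hA : (μ.toJordanDecomposition.posPart Set.univ).toReal ≤ 1 / 2
    · -- negative part case
      have hB : 1 / 2 < (μ.toJordanDecomposition.negPart Set.univ).toReal := by
        by_contra hB'
        push_neg at hB'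
        exact hcond ⟨hA, by linarith⟩
      obtain ⟨e, c, hc0, hcont, htend, hIcc, hattc, hatt0, hint⟩ :=
        key μ.toJordanDecomposition.negPart μ.toJordanDecomposition.posPart
          ⟨s, hsm, hs2, hs1⟩ hB M
      refine ⟨⟨fun x => -(e x), hcont.neg, by simpa using htend.neg⟩, ?_⟩
      have hIcc' : ∀ x, -(e x) ∈ Set.Icc (-c) 0 := fun x =>
        ⟨neg_le_neg (hIcc x).2, neg_nonpos.2 (hIcc x).1⟩
      have hsup : (⨆ t, -(e t)) = 0 := sup_of_Icc hIcc'
        (hatt0.imp fun x hx => by rw [hx, neg_zero])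
      have hinf : (⨅ t, -(e t)) = -c := inf_of_Icc hIcc'
        (hattc.imp fun x hx => by rw [hx])
      refine lt_of_lt_of_le hMlt (EReal.coe_le_coe_iff.2 ?_)
      simp only [pairing, hsup, hinf]
      rw [integral_neg, integral_neg]
      linarith
    · push_neg at hA
      obtain ⟨e, c, hc0, hcont, htend, hIcc, hattc, hatt0, hint⟩ :=
        key μ.toJordanDecomposition.posPart μ.toJordanDecomposition.negPart
          ⟨sᶜ, hsm.compl, by rwa [compl_compl], hs2⟩ hA M
      refine ⟨⟨e, hcont, htend⟩, ?_⟩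
      have hsup : (⨆ t, e t) = c := sup_of_Icc hIcc hattc
      have hinf : (⨅ t, e t) = 0 := inf_of_Icc hIcc hatt0
      refine lt_of_lt_of_le hMlt (EReal.coe_le_coe_iff.2 ?_)
      simp only [pairing, hsup, hinf]
      linarith
end

section
/- Let w : [0,∞) → ℝ be continuous with w(t) ≥ 0 for all t, and define the undershoot functional f_us on C₀(ℝ₊) by f_us(e) = sup_{t≥0} max(e(t) − w(t), 0). Let μ be a finite signed regular Borel measure on [0,∞). If μ is not a nonnegative measure, or if μ([0,∞)) > 1, then f_us*(μ) = sup_{e ∈ C₀(ℝ₊)} ( ∫₀^∞ e dμ − f_us(e) ) = +∞; and if μ ≥ 0 with μ([0,∞)) ≤ 1, then f_us*(μ) = ∫₀^∞ w dμ (a value in [0,+∞]). -/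
open MeasureTheory
open scoped NNReal ENNReal

namespace ConjAux

open Filter Set

/-- Trapezoidal bump: equals 1 on `[0,n]`, vanishes beyond `n+1`. -/
noncomputable def bump (n : ℕ) (t : ℝ≥0) : ℝ := max 0 (min 1 ((n : ℝ) + 1 - (t : ℝ)))

lemma bump_cont (n : ℕ) : Continuous (bump n) := by
  unfold bump; fun_prop

lemma bump_nonneg (n : ℕ) (t : ℝ≥0) : 0 ≤ bump n t := le_max_left _ _

lemma bump_le_one (n : ℕ) (t : ℝ≥0) : bump n t ≤ 1 :=
  max_le zero_le_one (min_le_left _ _)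

lemma bump_eq_one {n : ℕ} {t : ℝ≥0} (h : (t : ℝ) ≤ n) : bump n t = 1 := by
  have h1 : (1 : ℝ) ≤ (n : ℝ) + 1 - (t : ℝ) := by linarith
  rw [bump, min_eq_left h1, max_eq_right zero_le_one]

lemma bump_eq_zero {n : ℕ} {t : ℝ≥0} (h : (n : ℝ) + 1 ≤ (t : ℝ)) : bump n t = 0 := by
  have h1 : (n : ℝ) + 1 - (t : ℝ) ≤ 0 := by linarith
  rw [bump, max_eq_left ((min_le_right _ _).trans h1)]

lemma bump_mono {m n : ℕ} (h : m ≤ n) (t : ℝ≥0) : bump m t ≤ bump n t := by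
  refine max_le_max le_rfl (min_le_min le_rfl ?_)
  have : (m : ℝ) ≤ n := Nat.cast_le.2 h
  linarith

lemma bump_hcs (n : ℕ) : HasCompactSupport (bump n) := by
  refine HasCompactSupport.intro (isCompact_Icc (a := (0 : ℝ≥0)) (b := (n + 1 : ℝ≥0)))
    (fun x hx => bump_eq_zero ?_)
  have : ¬ x ≤ ((n : ℝ≥0) + 1) := fun hxx => hx ⟨(zero_le : (0:ℝ≥0) ≤ x), hxx⟩
  have h2 : ((n : ℝ≥0) + 1 : ℝ≥0) ≤ x := le_of_lt (not_le.1 this)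
  have := NNReal.coe_le_coe.2 h2
  push_cast at this ⊢
  linarith

lemma tendsto_zero_of_hcs {g : ℝ≥0 → ℝ} (h : HasCompactSupport g) :
    Tendsto g atTop (nhds 0) := by
  obtain ⟨B, hB⟩ := h.isCompact.bddAbove
  refine tendsto_const_nhds.congr' ?_
  filter_upwards [eventually_ge_atTop (B + 1)] with t ht
  refine (image_eq_zero_of_notMem_tsupport fun hmem => ?_).symm
  have h1 : t ≤ B := hB hmem
  have h2 : B < B + 1 := lt_add_of_pos_right B one_pos
  exact absurd (h2.trans_le ht) (not_lt.2 h1)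

/-- Build an element of `CZero` from a compactly supported continuous function. -/
noncomputable def czMk (g : ℝ≥0 → ℝ) (hc : Continuous g) (h : HasCompactSupport g) : CZero :=
  ⟨g, hc, tendsto_zero_of_hcs h⟩

lemma bdd_of_tendsto {e : ℝ≥0 → ℝ} (hc : Continuous e)
    (h0 : Tendsto e atTop (nhds 0)) : ∃ C, ∀ t, |e t| ≤ C := by
  obtain ⟨N, hN⟩ := eventually_atTop.1 (Metric.tendsto_nhds.1 h0 1 one_pos)
  obtain ⟨C, hC⟩ := (isCompact_Icc (a := (0:ℝ≥0)) (b := N)).exists_bound_of_continuousOn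
    hc.continuousOn
  refine ⟨max C 1, fun t => ?_⟩
  rcases le_total t N with h | h
  · exact le_max_of_le_left (by simpa [Real.norm_eq_abs] using hC t ⟨(zero_le : (0:ℝ≥0) ≤ t), h⟩)
  · have := hN t h
    rw [Real.dist_eq, sub_zero] at this
    exact le_max_of_le_right this.le

lemma integrable_of_bdd {e : ℝ≥0 → ℝ} (hc : Continuous e) {C : ℝ} (hC : ∀ t, |e t| ≤ C)
    (ν : Measure ℝ≥0) [IsFiniteMeasure ν] : Integrable e ν :=
  Integrable.mono' (integrable_const C) hc.aestronglyMeasurable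
    (ae_of_all _ fun t => by simpa [Real.norm_eq_abs] using hC t)

lemma fus_eq_zero {w e : ℝ≥0 → ℝ} (h : ∀ t, e t ≤ w t) :
    (⨆ t, max (e t - w t) 0) = 0 := by
  have heq : (fun t => max (e t - w t) 0) = fun _ => (0 : ℝ) :=
    funext fun t => max_eq_right (sub_nonpos.2 (h t))
  calc (⨆ t, max (e t - w t) 0) = ⨆ _ : ℝ≥0, (0:ℝ) := by rw [heq]
    _ = 0 := ciSup_const

lemma fus_bdd {w e : ℝ≥0 → ℝ} (hw0 : ∀ t, 0 ≤ w t) {C : ℝ} (hC : ∀ t, e t ≤ C) :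
    BddAbove (Set.range fun t => max (e t - w t) 0) := by
  refine ⟨max C 0, fun x hx => ?_⟩
  obtain ⟨t, rfl⟩ := hx
  exact max_le_max (by linarith [hw0 t, hC t]) le_rfl

lemma fus_nonneg {w e : ℝ≥0 → ℝ} (hb : BddAbove (Set.range fun t => max (e t - w t) 0)) :
    0 ≤ ⨆ t, max (e t - w t) 0 :=
  (le_max_right (e 0 - w 0) 0).trans (le_ciSup hb 0)

lemma fus_le {w e : ℝ≥0 → ℝ} (hw0 : ∀ t, 0 ≤ w t) {c : ℝ} (hc : 0 ≤ c)
    (hC : ∀ t, e t ≤ c) : (⨆ t, max (e t - w t) 0) ≤ c :=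
  ciSup_le fun t => max_le (by linarith [hw0 t, hC t]) hc

lemma le_fus {w e : ℝ≥0 → ℝ} (hb : BddAbove (Set.range fun t => max (e t - w t) 0)) (t : ℝ≥0) :
    e t - w t ≤ ⨆ t, max (e t - w t) 0 :=
  (le_max_left _ _).trans (le_ciSup hb t)

lemma measReal_le_integral {ν : Measure ℝ≥0} [IsFiniteMeasure ν] {g : ℝ≥0 → ℝ}
    (hg : Continuous g) (hgc : HasCompactSupport g) {s : Set ℝ≥0} (hs : MeasurableSet s)
    (h1 : ∀ t ∈ s, 1 ≤ g t) (h0 : ∀ t, 0 ≤ g t) : (ν s).toReal ≤ ∫ t, g t ∂ν := by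
  have heq : (ν s).toReal = ∫ t, s.indicator (fun _ => (1:ℝ)) t ∂ν := by
    rw [integral_indicator_const (1:ℝ) hs]; simp [measureReal_def]
  rw [heq]
  refine integral_mono ((integrable_const 1).indicator hs)
    (hg.integrable_of_hasCompactSupport hgc) (fun t => ?_)
  by_cases ht : t ∈ s
  · simpa [Set.indicator_of_mem ht] using h1 t ht
  · simpa [Set.indicator_of_notMem ht] using h0 t

lemma integral_le_measReal {ν : Measure ℝ≥0} [IsFiniteMeasure ν] {g : ℝ≥0 → ℝ}
    (hg : Continuous g) (hgc : HasCompactSupport g) {s : Set ℝ≥0} (hs : MeasurableSet s)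
    (h0 : ∀ t, 0 ≤ g t) (h1 : ∀ t, g t ≤ 1) (hsupp : ∀ t ∉ s, g t = 0) :
    ∫ t, g t ∂ν ≤ (ν s).toReal := by
  have heq : (ν s).toReal = ∫ t, s.indicator (fun _ => (1:ℝ)) t ∂ν := by
    rw [integral_indicator_const (1:ℝ) hs]; simp [measureReal_def]
  rw [heq]
  refine integral_mono (hg.integrable_of_hasCompactSupport hgc)
    ((integrable_const 1).indicator hs) (fun t => ?_)
  by_cases ht : t ∈ s
  · simpa [Set.indicator_of_mem ht] using h1 t
  · simp [Set.indicator_of_notMem ht, hsupp t ht]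

lemma sup_eq_top {F : CZero → ℝ} (h : ∀ M : ℝ, ∃ e, M ≤ F e) :
    (⨆ e : CZero, (F e : EReal)) = ⊤ := by
  rw [iSup_eq_top]
  intro b hb
  obtain ⟨y, hby, -⟩ := EReal.exists_between_coe_real hb
  obtain ⟨e, he⟩ := h y
  exact ⟨e, hby.trans_le (EReal.coe_le_coe_iff.2 he)⟩

end ConjAux

open ConjAux Filter Set

/-- Let `w ≥ 0` be continuous on `[0,∞)` and let
`f_us(e) = sup_{t≥0} max(e t - w t, 0)` be the undershoot functional on `C₀(ℝ₊)`.
For a finite signed regular Borel measure `μ` on `[0,∞)`: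
if `μ` is not nonnegative or `μ([0,∞)) > 1`, then
`f_us*(μ) = sup_{e ∈ C₀} (∫₀^∞ e dμ - f_us(e)) = +∞`; and if `μ ≥ 0` with
`μ([0,∞)) ≤ 1`, then `f_us*(μ) = ∫₀^∞ w dμ`, a value in `[0,+∞]`. -/
theorem conjugate_undershoot
    (w : ℝ≥0 → ℝ) (hw : Continuous w) (hw0 : ∀ t, 0 ≤ w t)
    (μ : SignedMeasure ℝ≥0) (hreg : μ.totalVariation.Regular) :
    ((¬0 ≤ μ ∨ 1 < μ Set.univ) →
      (⨆ e : CZero, ((pairing μ e.1 - ⨆ t, max (e.1 t - w t) 0 : ℝ) : EReal)) = ⊤) ∧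
    ((0 ≤ μ ∧ μ Set.univ ≤ 1) →
      (⨆ e : CZero, ((pairing μ e.1 - ⨆ t, max (e.1 t - w t) 0 : ℝ) : EReal))
        = ((∫⁻ t, ENNReal.ofReal (w t) ∂μ.toJordanDecomposition.posPart : ℝ≥0∞) : EReal)) := by
  classical
  set P := μ.toJordanDecomposition.posPart with hP
  set N := μ.toJordanDecomposition.negPart with hN
  have happly : ∀ s : Set ℝ≥0, MeasurableSet s → μ s = (P s).toReal - (N s).toReal := by
    intro s hs
    conv_lhs => rw [← μ.toSignedMeasure_toJordanDecomposition]
    rw [MeasureTheory.JordanDecomposition.toSignedMeasure,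
      Measure.toSignedMeasure_sub_apply hs]; rfl
  -- If `0 ≤ μ` then the negative part vanishes.
  have hnegzero : 0 ≤ μ → N = 0 := by
    intro hpos
    obtain ⟨i, hi₁, hi₂, hi₃, hposPart, hnegPart⟩ := μ.toJordanDecomposition_spec
    rw [hN, hnegPart]
    ext s hs
    rw [MeasureTheory.SignedMeasure.toMeasureOfLEZero_apply _ hi₃ hi₁.compl hs]
    have h1 : 0 ≤ μ (iᶜ ∩ s) := by
      have := (MeasureTheory.VectorMeasure.le_iff'.1 hpos) (iᶜ ∩ s)
      simpa using this
    have h2 : μ (iᶜ ∩ s) ≤ 0 :=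
      MeasureTheory.VectorMeasure.nonpos_of_restrict_le_zero _
        (MeasureTheory.VectorMeasure.restrict_le_zero_subset _ hi₁.compl
          Set.inter_subset_left hi₃)
    simp only [Measure.coe_zero, Pi.zero_apply, ENNReal.coe_eq_zero]
    ext
    simpa using le_antisymm (by linarith) (by positivity)
  -- conversely if the negative part vanishes
  have hofnegzero : N = 0 → 0 ≤ μ := by
    intro hN0
    rw [MeasureTheory.VectorMeasure.le_iff]
    intro i hi
    have h := happly i hi
    rw [hN0] at h
    simp only [Measure.coe_zero, Pi.zero_apply, ENNReal.toReal_zero, sub_zero] at h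
    rw [MeasureTheory.VectorMeasure.coe_zero, Pi.zero_apply, h]
    positivity
  constructor
  · -- Part 1: the conjugate is `⊤`.
    intro hcase
    apply sup_eq_top
    intro M
    by_cases hpos : 0 ≤ μ
    · -- then `1 < μ(univ)`, use large positive bumps
      have h1 : (1 : ℝ) < μ Set.univ := hcase.resolve_left (not_not_intro hpos)
      have hN0 : N = 0 := hnegzero hpos
      clear hcase
      have hμuniv : μ Set.univ = (P Set.univ).toReal := by
        rw [happly _ MeasurableSet.univ, hN0]; simp
      have hPuniv : (1 : ℝ≥0∞) < P Set.univ := by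
        rw [← ENNReal.toReal_one] at *
        exact (ENNReal.toReal_lt_toReal ENNReal.one_ne_top (measure_ne_top P _)).1
          (by rw [ENNReal.toReal_one]; exact hμuniv ▸ h1)
      have hU : (⋃ n : ℕ, Icc (0:ℝ≥0) n) = Set.univ := by
        ext t
        simp only [mem_iUnion, mem_Icc, mem_univ, iff_true]
        obtain ⟨n, hn⟩ := exists_nat_ge t
        exact ⟨n, (zero_le : (0:ℝ≥0) ≤ t), hn⟩
      have hdir : Directed (fun x1 x2 : Set ℝ≥0 => x1 ⊆ x2) (fun n : ℕ => Icc (0:ℝ≥0) n) :=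
        Monotone.directed_le (fun m n hmn => Icc_subset_Icc le_rfl (by exact_mod_cast hmn))
      have hiSup : P Set.univ = ⨆ n : ℕ, P (Icc (0:ℝ≥0) n) := by
        rw [← hU]; exact hdir.measure_iUnion
      rw [hiSup] at hPuniv
      obtain ⟨n, hn⟩ := lt_iSup_iff.1 hPuniv
      set m : ℝ := (P (Icc (0:ℝ≥0) n)).toReal with hm
      have hm1 : 1 < m := by
        rw [← ENNReal.toReal_one]
        exact (ENNReal.toReal_lt_toReal ENNReal.one_ne_top (measure_ne_top P _)).2 hn
      set k : ℕ := ⌈max 0 (M / (m - 1))⌉₊ with hk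
      have hk0 : (0:ℝ) ≤ k := Nat.cast_nonneg k
      have hkM : M ≤ k * (m - 1) := by
        have h2 : M / (m - 1) ≤ k := (le_max_right _ _).trans (Nat.le_ceil _)
        have h3 : (0:ℝ) < m - 1 := by linarith
        calc M = (M / (m-1)) * (m-1) := by field_simp
        _ ≤ k * (m - 1) := by nlinarith
      -- the test function
      set g : ℝ≥0 → ℝ := fun t => (k:ℝ) * bump n t with hg
      have hgc : Continuous g := continuous_const.mul (bump_cont n)
      have hgcs : HasCompactSupport g := by
        have := (bump_hcs n).mul_left (f := fun _ => (k:ℝ))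
        exact this
      refine ⟨czMk g hgc hgcs, ?_⟩
      have hfus : (⨆ t, max (g t - w t) 0) ≤ k :=
        fus_le hw0 hk0 (fun t => by
          have := bump_le_one n t
          have h0 := bump_nonneg n t
          calc g t ≤ (k:ℝ) * 1 := by
                exact mul_le_mul_of_nonneg_left this hk0
            _ = k := mul_one _)
      have hint : m ≤ ∫ t, bump n t ∂P :=
        measReal_le_integral (bump_cont n) (bump_hcs n) measurableSet_Icc
          (fun t ht => le_of_eq (bump_eq_one (by exact_mod_cast NNReal.coe_le_coe.2 ht.2)).symm)
          (bump_nonneg n)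
      have hpair : pairing μ g = (k:ℝ) * ∫ t, bump n t ∂P := by
        have hd : pairing μ g = (∫ t, g t ∂P) - ∫ t, g t ∂N := rfl
        rw [hd, hN0, integral_zero_measure, sub_zero, hg]
        exact integral_const_mul _ _
      have hpair_ge : (k:ℝ) * m ≤ pairing μ g := by
        rw [hpair]
        exact mul_le_mul_of_nonneg_left hint hk0
      show M ≤ pairing μ g - ⨆ t, max (g t - w t) 0
      have : (k:ℝ) * (m - 1) ≤ pairing μ g - ⨆ t, max (g t - w t) 0 := by
        have h4 : (k:ℝ) * (m-1) = k * m - k := by ring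
        linarith
      linarith
    · -- `μ` is not nonnegative: use large negative bumps on the negative part
      have hN_ne : N ≠ 0 := fun h => hpos (hofnegzero h)
      clear hcase hpos
      have hNuniv : N Set.univ ≠ 0 := fun h => hN_ne (Measure.measure_univ_eq_zero.1 h)
      obtain ⟨B, hBm, hPB, hNBc⟩ :
          ∃ B, MeasurableSet B ∧ P B = 0 ∧ N Bᶜ = 0 := by
        have h := μ.toJordanDecomposition.mutuallySingular
        exact ⟨h.nullSet, h.measurableSet_nullSet, h.measure_nullSet, h.measure_compl_nullSet⟩
      have hNB : N B = N Set.univ := by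
        rw [← measure_add_measure_compl hBm, hNBc, add_zero]
      have hNB0 : N B ≠ 0 := hNB ▸ hNuniv
      have hhalf : N B / 2 < N B := ENNReal.half_lt_self hNB0 (measure_ne_top N B)
      obtain ⟨K, hKB, hKcomp, hK⟩ :=
        hBm.exists_lt_isCompact_of_ne_top (μ := N) (measure_ne_top N B) hhalf
      have hPK : P K = 0 := measure_mono_null hKB hPB
      obtain ⟨U, hKU, hUo, hU⟩ := Set.exists_isOpen_lt_of_lt (μ := P) K (N B / 2)
        (by rw [hPK]; exact ENNReal.half_pos hNB0)
      obtain ⟨g, hgK, hgUc, hgcs, hg01⟩ :=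
        exists_continuous_one_zero_of_isCompact hKcomp hUo.isClosed_compl
          (disjoint_compl_right_iff_subset.mpr hKU)
      set a : ℝ := (N K).toReal with ha
      set b : ℝ := (P U).toReal with hb
      have hba : b < a :=
        (ENNReal.toReal_lt_toReal (measure_ne_top P U) (measure_ne_top N K)).2 (hU.trans hK)
      have hYa : a ≤ ∫ t, g t ∂N :=
        measReal_le_integral g.continuous hgcs hKcomp.measurableSet
          (fun t ht => le_of_eq (hgK ht).symm) (fun t => (hg01 t).1)
      have hXb : ∫ t, g t ∂P ≤ b :=
        integral_le_measReal g.continuous hgcs hUo.measurableSet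
          (fun t => (hg01 t).1) (fun t => (hg01 t).2) (fun t ht => hgUc ht)
      set k : ℕ := ⌈max 0 (M / (a - b))⌉₊ with hk
      have hk0 : (0:ℝ) ≤ k := Nat.cast_nonneg k
      have hkM : M ≤ k * (a - b) := by
        have h2 : M / (a - b) ≤ k := (le_max_right _ _).trans (Nat.le_ceil _)
        have h3 : (0:ℝ) < a - b := by linarith
        calc M = (M / (a-b)) * (a-b) := by field_simp
        _ ≤ k * (a - b) := by nlinarith
      set e : ℝ≥0 → ℝ := fun t => (-(k:ℝ)) * g t with he
      have hec : Continuous e := continuous_const.mul g.continuous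
      have hecs : HasCompactSupport e := by
        have := hgcs.mul_left (f := fun _ => (-(k:ℝ)))
        exact this
      refine ⟨czMk e hec hecs, ?_⟩
      have hfus : (⨆ t, max (e t - w t) 0) = 0 :=
        fus_eq_zero (fun t => le_trans
          (mul_nonpos_of_nonpos_of_nonneg (by linarith) (hg01 t).1) (hw0 t))
      have hpair : pairing μ e = (-(k:ℝ)) * ∫ t, g t ∂P - (-(k:ℝ)) * ∫ t, g t ∂N := by
        have hd : pairing μ e = (∫ t, e t ∂P) - ∫ t, e t ∂N := rfl
        rw [hd, he]
        rw [integral_const_mul, integral_const_mul]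
      show M ≤ pairing μ e - ⨆ t, max (e t - w t) 0
      rw [hfus, sub_zero, hpair]
      have hX : -(k:ℝ) * ∫ t, g t ∂P ≥ -(k:ℝ) * b := by
        have := mul_le_mul_of_nonneg_left hXb hk0
        linarith
      have hY : -(k:ℝ) * ∫ t, g t ∂N ≤ -(k:ℝ) * a := by
        have := mul_le_mul_of_nonneg_left hYa hk0
        linarith
      have hkab : (k:ℝ) * (a - b) = -(k:ℝ) * b - (-(k:ℝ) * a) := by ring
      linarith
  · -- Part 2: the conjugate equals `∫ w dμ`.
    rintro ⟨hpos, hle⟩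
    have hN0 : N = 0 := hnegzero hpos
    have hpair : ∀ e : ℝ≥0 → ℝ, pairing μ e = ∫ t, e t ∂P := by
      intro e
      have hd : pairing μ e = (∫ t, e t ∂P) - ∫ t, e t ∂N := rfl
      rw [hd, hN0, integral_zero_measure, sub_zero]
    have hm1 : (P Set.univ).toReal ≤ 1 := by
      have h := happly Set.univ MeasurableSet.univ
      rw [hN0] at h
      simp at h
      rw [← h]; exact hle
    set W : ℝ≥0∞ := ∫⁻ t, ENNReal.ofReal (w t) ∂P with hW
    -- approximating sequence
    set en : ℕ → ℝ≥0 → ℝ := fun n t => min (w t) n * bump n t with hen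
    have hcont : ∀ n, Continuous (en n) := fun n =>
      (hw.min continuous_const).mul (bump_cont n)
    have hhcs : ∀ n, HasCompactSupport (en n) := fun n => by
      have := (bump_hcs n).mul_left (f := fun t => min (w t) n)
      exact this
    have h0n : ∀ n t, 0 ≤ en n t := fun n t =>
      mul_nonneg (le_min (hw0 t) (Nat.cast_nonneg n)) (bump_nonneg n t)
    have hle_w : ∀ n t, en n t ≤ w t := fun n t =>
      le_trans (mul_le_of_le_one_right (le_min (hw0 t) (Nat.cast_nonneg n)) (bump_le_one n t))
        (min_le_left _ _)
    set aseq : ℕ → ℝ≥0∞ := fun n => ∫⁻ t, ENNReal.ofReal (en n t) ∂P with haseq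
    have hWsup : W = ⨆ n, aseq n := by
      have hmono : Monotone (fun n : ℕ => fun t => ENNReal.ofReal (en n t)) := by
        intro m n hmn
        intro t
        refine ENNReal.ofReal_le_ofReal ?_
        exact mul_le_mul (min_le_min le_rfl (by exact_mod_cast hmn)) (bump_mono hmn t)
          (bump_nonneg m t) (le_min (hw0 t) (Nat.cast_nonneg n))
      have hptsup : ∀ t, (⨆ n, ENNReal.ofReal (en n t)) = ENNReal.ofReal (w t) := by
        intro t
        refine le_antisymm (iSup_le fun n => ENNReal.ofReal_le_ofReal (hle_w n t)) ?_
        obtain ⟨n, hn⟩ := exists_nat_ge (max (t:ℝ) (w t))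
        have h1 : (t:ℝ) ≤ n := le_trans (le_max_left _ _) hn
        have h2 : w t ≤ n := le_trans (le_max_right _ _) hn
        have h3 : en n t = w t := by
          rw [hen]; simp only
          rw [bump_eq_one h1, min_eq_left h2, mul_one]
        exact le_trans (le_of_eq (by rw [h3])) (le_iSup (fun n => ENNReal.ofReal (en n t)) n)
      rw [hW, haseq, ← lintegral_iSup (fun n => ((hcont n).measurable).ennreal_ofReal) hmono]
      exact lintegral_congr fun t => (hptsup t).symm
    have ha_fin : ∀ n, aseq n ≠ ⊤ := by
      intro n
      have hint := (hcont n).integrable_of_hasCompactSupport (hhcs n) (μ := P)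
      have h1 : aseq n = ∫⁻ t, ‖en n t‖ₑ ∂P :=
        lintegral_congr fun t => (Real.enorm_eq_ofReal (h0n n t)).symm
      rw [h1]
      exact hint.hasFiniteIntegral.ne
    have hInt_eq : ∀ n, ∫ t, en n t ∂P = (aseq n).toReal := fun n =>
      integral_eq_lintegral_of_nonneg_ae (ae_of_all _ (h0n n)) (hcont n).aestronglyMeasurable
    -- value of the functional at `en n`
    have hFn : ∀ n, pairing μ (en n) - (⨆ t, max (en n t - w t) 0) = (aseq n).toReal := by
      intro n
      rw [hpair, fus_eq_zero (hle_w n), sub_zero, hInt_eq]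
    refine le_antisymm ?_ ?_
    · -- upper bound
      by_cases hWtop : W = ⊤
      · rw [hWtop]; exact le_top
      refine iSup_le ?_
      rintro ⟨e, hec, he0⟩
      obtain ⟨C, hC⟩ := bdd_of_tendsto hec he0
      have hCb : ∀ t, e t ≤ C := fun t => (le_abs_self _).trans (hC t)
      have hbdd : BddAbove (Set.range fun t => max (e t - w t) 0) := fus_bdd hw0 hCb
      set f : ℝ := ⨆ t, max (e t - w t) 0 with hf
      have hf0 : 0 ≤ f := fus_nonneg hbdd
      have hwint : Integrable w P := by
        refine ⟨hw.aestronglyMeasurable, ?_⟩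
        rw [hasFiniteIntegral_iff_ofReal (ae_of_all _ hw0)]
        exact lt_top_iff_ne_top.2 hWtop
      have heint : Integrable e P := integrable_of_bdd hec hC P
      have hwf : Integrable (fun t => w t + f) P := hwint.add (integrable_const f)
      have hmono : ∫ t, e t ∂P ≤ ∫ t, (w t + f) ∂P :=
        integral_mono heint hwf (fun t => by
          have := le_fus hbdd t
          rw [← hf] at this
          linarith)
      have hsplit : ∫ t, (w t + f) ∂P = (∫ t, w t ∂P) + f * (P Set.univ).toReal := by
        rw [integral_add hwint (integrable_const f), integral_const]
        simp [mul_comm, measureReal_def]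
      have hWreal : ∫ t, w t ∂P = W.toReal := by
        rw [hW]
        exact integral_eq_lintegral_of_nonneg_ae (ae_of_all _ hw0) hw.aestronglyMeasurable
      have hkey : pairing μ e - f ≤ W.toReal := by
        rw [hpair]
        have h2 : f * (P Set.univ).toReal ≤ f := by
          have := mul_le_mul_of_nonneg_left hm1 hf0
          linarith
        rw [hsplit, hWreal] at hmono
        linarith
      have hcoe : ((W.toReal : ℝ) : EReal) = (W : EReal) := by
        rw [← EReal.toReal_coe_ennreal]
        exact EReal.coe_toReal (by simp [hWtop]) (by simp)
      calc ((pairing μ e - f : ℝ) : EReal) ≤ ((W.toReal : ℝ) : EReal) :=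
            EReal.coe_le_coe_iff.2 hkey
        _ = (W : EReal) := hcoe
    · -- lower bound
      rw [← EReal.ge_of_forall_gt_iff_ge]
      intro z hz
      rcases le_or_gt 0 z with hz0 | hz0
      · have hofz : ENNReal.ofReal z < W := by
          by_contra hcon
          push_neg at hcon
          have h1 : (W : EReal) ≤ ((ENNReal.ofReal z : ℝ≥0∞) : EReal) :=
            EReal.coe_ennreal_le_coe_ennreal_iff.2 hcon
          rw [EReal.coe_ennreal_ofReal, max_eq_left hz0] at h1
          exact absurd (hz.trans_le h1) (lt_irrefl _)
        rw [hWsup] at hofz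
        obtain ⟨n, hn⟩ := lt_iSup_iff.1 hofz
        have hzan : z < (aseq n).toReal :=
          (ENNReal.ofReal_lt_iff_lt_toReal hz0 (ha_fin n)).1 hn
        refine le_trans ?_ (le_iSup (fun e : CZero =>
          ((pairing μ e.1 - ⨆ t, max (e.1 t - w t) 0 : ℝ) : EReal))
          (czMk (en n) (hcont n) (hhcs n)))
        have : z ≤ pairing μ (en n) - (⨆ t, max (en n t - w t) 0) := by
          rw [hFn n]; exact hzan.le
        exact EReal.coe_le_coe_iff.2 this
      · refine le_trans ?_ (le_iSup (fun e : CZero =>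
          ((pairing μ e.1 - ⨆ t, max (e.1 t - w t) 0 : ℝ) : EReal))
          (czMk (en 0) (hcont 0) (hhcs 0)))
        have h0 : (0:ℝ) ≤ pairing μ (en 0) - (⨆ t, max (en 0 t - w t) 0) := by
          rw [hFn 0]; exact ENNReal.toReal_nonneg
        exact EReal.coe_le_coe_iff.2 (hz0.le.trans h0)
end

section
/- Let 0 < p₁ < z₁ be real numbers and set h = p₁/(z₁ − p₁). Then the supremum of a/z₁ over all pairs (a, b) of real numbers such that a e^{−z₁ t} − b e^{−p₁ t} ≤ 0 for all t ≥ 0 and ∫₀^∞ |a e^{−z₁ t} − b e^{−p₁ t}| dt ≤ 1, equals h. -/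
open MeasureTheory

lemma os_dual_exp_int (c : ℝ) (hc : 0 < c) :
    ∫ t in Set.Ici (0:ℝ), Real.exp (-c * t) = 1 / c := by
  rw [MeasureTheory.integral_Ici_eq_integral_Ioi]
  have hderiv : ∀ x ∈ Set.Ici (0:ℝ),
      HasDerivAt (fun x => -Real.exp (-c * x) / c) (Real.exp (-c * x)) x := by
    intro x _
    have h1 : HasDerivAt (fun x : ℝ => -c * x) (-c) x := by
      simpa using (hasDerivAt_id x).const_mul (-c)
    have h2 : HasDerivAt (fun x => -Real.exp (-c * x) / c)
        (-(Real.exp (-c * x) * (-c)) / c) x := (h1.exp.neg).div_const c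
    convert h2 using 1
    field_simp
  have htend : Filter.Tendsto (fun x => -Real.exp (-c * x) / c) Filter.atTop (nhds 0) := by
    have h1 : Filter.Tendsto (fun x : ℝ => c * x) Filter.atTop Filter.atTop :=
      Filter.Tendsto.const_mul_atTop hc Filter.tendsto_id
    have h2 : Filter.Tendsto (fun x : ℝ => Real.exp (-(c * x))) Filter.atTop (nhds 0) :=
      Real.tendsto_exp_neg_atTop_nhds_zero.comp h1
    have h3 : Filter.Tendsto (fun x : ℝ => -Real.exp (-(c * x)) / c) Filter.atTop
        (nhds (-(0:ℝ) / c)) := (h2.neg).div_const c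
    simpa [neg_mul] using h3
  have := integral_Ioi_of_hasDerivAt_of_tendsto' hderiv (exp_neg_integrableOn_Ioi 0 hc) htend
  rw [this]
  field_simp
  simp

lemma os_dual_integrableOn (c r : ℝ) (hc : 0 < c) :
    IntegrableOn (fun t : ℝ => r * Real.exp (-c * t)) (Set.Ici (0:ℝ)) := by
  rw [integrableOn_Ici_iff_integrableOn_Ioi]
  exact (exp_neg_integrableOn_Ioi 0 hc).const_mul r

lemma os_dual_integral_eval (p₁ z₁ a b : ℝ) (hp : 0 < p₁) (hz : p₁ < z₁)
    (hpt : ∀ t : ℝ, 0 ≤ t → a * Real.exp (-z₁ * t) - b * Real.exp (-p₁ * t) ≤ 0) :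
    (∫ t in Set.Ici (0 : ℝ), |a * Real.exp (-z₁ * t) - b * Real.exp (-p₁ * t)|)
      = b / p₁ - a / z₁ := by
  have hz' : 0 < z₁ := hp.trans hz
  have hcong : ∀ t ∈ Set.Ici (0:ℝ),
      |a * Real.exp (-z₁ * t) - b * Real.exp (-p₁ * t)|
        = b * Real.exp (-p₁ * t) - a * Real.exp (-z₁ * t) := by
    intro t ht
    rw [abs_of_nonpos (hpt t ht)]
    ring
  rw [MeasureTheory.setIntegral_congr_fun measurableSet_Ici hcong,
    MeasureTheory.integral_sub (os_dual_integrableOn p₁ b hp) (os_dual_integrableOn z₁ a hz'),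
    MeasureTheory.integral_const_mul, MeasureTheory.integral_const_mul,
    os_dual_exp_int p₁ hp, os_dual_exp_int z₁ hz']
  ring

/-- (OS DUAL for a first-order plant.) Let `0 < p₁ < z₁` and `h = p₁/(z₁ - p₁)`.  The
supremum of `a/z₁` over all real pairs `(a, b)` such that
`a e^{-z₁ t} - b e^{-p₁ t} ≤ 0` for all `t ≥ 0` and
`∫₀^∞ |a e^{-z₁ t} - b e^{-p₁ t}| dt ≤ 1`, equals `h`. -/
theorem os_dual_first_order (p₁ z₁ : ℝ) (hp : 0 < p₁) (hz : p₁ < z₁) :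
    sSup {v : ℝ | ∃ a b : ℝ,
        (∀ t : ℝ, 0 ≤ t → a * Real.exp (-z₁ * t) - b * Real.exp (-p₁ * t) ≤ 0) ∧
        (∫ t in Set.Ici (0 : ℝ), |a * Real.exp (-z₁ * t) - b * Real.exp (-p₁ * t)|) ≤ 1 ∧
        v = a / z₁} = p₁ / (z₁ - p₁) := by
  have hz' : 0 < z₁ := hp.trans hz
  have hzp : 0 < z₁ - p₁ := by linarith
  have hh : 0 < p₁ / (z₁ - p₁) := div_pos hp hzp
  -- the maximizing element
  set A : ℝ := p₁ * z₁ / (z₁ - p₁) with hA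
  have hA0 : 0 < A := div_pos (mul_pos hp hz') hzp
  have hmem : p₁ / (z₁ - p₁) ∈ {v : ℝ | ∃ a b : ℝ,
      (∀ t : ℝ, 0 ≤ t → a * Real.exp (-z₁ * t) - b * Real.exp (-p₁ * t) ≤ 0) ∧
      (∫ t in Set.Ici (0 : ℝ), |a * Real.exp (-z₁ * t) - b * Real.exp (-p₁ * t)|) ≤ 1 ∧
      v = a / z₁} := by
    refine ⟨A, A, fun t ht => ?_, ?_, by rw [hA]; field_simp⟩
    · have : Real.exp (-z₁ * t) ≤ Real.exp (-p₁ * t) :=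
        Real.exp_le_exp.mpr (by nlinarith)
      nlinarith
    · rw [os_dual_integral_eval p₁ z₁ A A hp hz (fun t ht => by
        have : Real.exp (-z₁ * t) ≤ Real.exp (-p₁ * t) :=
          Real.exp_le_exp.mpr (by nlinarith)
        nlinarith)]
      have : A / p₁ - A / z₁ = 1 := by
        rw [hA]; field_simp
      linarith
  apply le_antisymm
  · apply csSup_le ⟨_, hmem⟩
    rintro v ⟨a, b, hpt, hint, rfl⟩
    rw [os_dual_integral_eval p₁ z₁ a b hp hz hpt] at hint
    rcases le_or_gt a 0 with ha | ha
    · have : a / z₁ ≤ 0 := div_nonpos_iff.mpr (Or.inr ⟨ha, hz'.le⟩)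
      linarith
    · have hab : a ≤ b := by simpa using hpt 0 le_rfl
      rw [div_sub_div _ _ hp.ne' hz'.ne', div_le_one (by positivity)] at hint
      rw [div_le_div_iff₀ hz' hzp]
      nlinarith
  · exact le_csSup ⟨p₁ / (z₁ - p₁), by
      rintro v ⟨a, b, hpt, hint, rfl⟩
      rw [os_dual_integral_eval p₁ z₁ a b hp hz hpt] at hint
      rcases le_or_gt a 0 with ha | ha
      · have : a / z₁ ≤ 0 := div_nonpos_iff.mpr (Or.inr ⟨ha, hz'.le⟩)
        linarith
      · have hab : a ≤ b := by simpa using hpt 0 le_rfl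
        rw [div_sub_div _ _ hp.ne' hz'.ne', div_le_one (by positivity)] at hint
        rw [div_le_div_iff₀ hz' hzp]
        nlinarith⟩ hmem
end

section
/- Let 0 < p₁ < z₁ be real numbers and set h = p₁/(z₁ − p₁). Then the supremum of a/z₁ over all pairs (a, b) of real numbers such that ∫₀^∞ |a e^{−z₁ t} − b e^{−p₁ t}| dt ≤ 1, equals 1/(1 − 2^{−1/h}). -/
open MeasureTheory Set

lemma intExpIoi {k : ℝ} (hk : 0 < k) (T : ℝ) :
    ∫ t in Set.Ioi T, Real.exp (-k * t) = Real.exp (-k * T) / k := by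
  have hd : ∀ x ∈ Set.Ici T, HasDerivAt (fun t => -Real.exp (-k * t) / k)
      (Real.exp (-k * x)) x := by
    intro x _
    have h1 : HasDerivAt (fun t : ℝ => -k * t) (-k) x := by
      simpa using (hasDerivAt_id x).const_mul (-k)
    have h2 := (h1.exp).neg.div_const k
    refine h2.congr_deriv ?_
    rw [div_eq_iff hk.ne']; ring
  have hint : IntegrableOn (fun t => Real.exp (-k * t)) (Set.Ioi T) :=
    exp_neg_integrableOn_Ioi T hk
  have htend : Filter.Tendsto (fun t => -Real.exp (-k * t) / k) Filter.atTop (nhds 0) := by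
    have : Filter.Tendsto (fun t : ℝ => Real.exp (-k * t)) Filter.atTop (nhds 0) := by
      simp only [neg_mul, Real.exp_neg]; exact
        (Real.tendsto_exp_atTop.comp (Filter.tendsto_id.const_mul_atTop hk)).inv_tendsto_atTop
    simpa using (this.neg.div_const k)
  have := integral_Ioi_of_hasDerivAt_of_tendsto' hd hint htend
  rw [this]
  field_simp
  ring

lemma intgOn {p₁ z₁ : ℝ} (hp : 0 < p₁) (hz : p₁ < z₁) (a b x : ℝ) :
    IntegrableOn (fun t => a * Real.exp (-z₁ * t) - b * Real.exp (-p₁ * t)) (Set.Ioi x) := by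
  exact ((exp_neg_integrableOn_Ioi x (hp.trans hz)).const_mul a).sub
    ((exp_neg_integrableOn_Ioi x hp).const_mul b)

lemma intPiece {p₁ z₁ : ℝ} (hp : 0 < p₁) (hz : p₁ < z₁) (a b x : ℝ) :
    ∫ t in Set.Ioi x, (a * Real.exp (-z₁ * t) - b * Real.exp (-p₁ * t))
      = a * Real.exp (-z₁ * x) / z₁ - b * Real.exp (-p₁ * x) / p₁ := by
  rw [integral_sub (((exp_neg_integrableOn_Ioi x (hp.trans hz)).const_mul a))
      ((exp_neg_integrableOn_Ioi x hp).const_mul b),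
    MeasureTheory.integral_const_mul, MeasureTheory.integral_const_mul, intExpIoi (hp.trans hz), intExpIoi hp]
  ring

lemma splitInt {p₁ z₁ : ℝ} (hp : 0 < p₁) (hz : p₁ < z₁) (a b T : ℝ) (hT : 0 ≤ T) :
    ∫ t in Set.Ioc 0 T, (a * Real.exp (-z₁ * t) - b * Real.exp (-p₁ * t))
      = (∫ t in Set.Ioi (0:ℝ), (a * Real.exp (-z₁ * t) - b * Real.exp (-p₁ * t)))
        - ∫ t in Set.Ioi T, (a * Real.exp (-z₁ * t) - b * Real.exp (-p₁ * t)) := by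
  have hu : Set.Ioc (0:ℝ) T ∪ Set.Ioi T = Set.Ioi 0 := Set.Ioc_union_Ioi_eq_Ioi hT
  have hd : Disjoint (Set.Ioc (0:ℝ) T) (Set.Ioi T) := by
    rw [Set.disjoint_left]
    rintro x ⟨_, h2⟩ h3
    exact absurd h3 (not_lt.mpr h2)
  rw [← hu, setIntegral_union hd measurableSet_Ioi
    ((intgOn hp hz a b 0).mono_set (by rw [← hu]; exact Set.subset_union_left))
    (intgOn hp hz a b T)]
  ring

lemma splitAbs {p₁ z₁ : ℝ} (hp : 0 < p₁) (hz : p₁ < z₁) (a b T : ℝ) (hT : 0 ≤ T) :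
    ∫ t in Set.Ioi (0:ℝ), |a * Real.exp (-z₁ * t) - b * Real.exp (-p₁ * t)|
      = (∫ t in Set.Ioc (0:ℝ) T, |a * Real.exp (-z₁ * t) - b * Real.exp (-p₁ * t)|)
        + ∫ t in Set.Ioi T, |a * Real.exp (-z₁ * t) - b * Real.exp (-p₁ * t)| := by
  have hu : Set.Ioc (0:ℝ) T ∪ Set.Ioi T = Set.Ioi 0 := Set.Ioc_union_Ioi_eq_Ioi hT
  have hd : Disjoint (Set.Ioc (0:ℝ) T) (Set.Ioi T) := by
    rw [Set.disjoint_left]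
    rintro x ⟨_, h2⟩ h3
    exact absurd h3 (not_lt.mpr h2)
  rw [← hu, setIntegral_union hd measurableSet_Ioi
    (((intgOn hp hz a b 0).mono_set (by rw [← hu]; exact Set.subset_union_left)).abs)
    ((intgOn hp hz a b T).abs)]

/-- (MA DUAL for a first-order plant.) Let `0 < p₁ < z₁` and `h = p₁/(z₁ - p₁)`.  The
supremum of `a/z₁` over all real pairs `(a, b)` such that
`∫₀^∞ |a e^{-z₁ t} - b e^{-p₁ t}| dt ≤ 1`, equals `1/(1 - 2^{-1/h})`. -/
theorem ma_dual_first_order (p₁ z₁ : ℝ) (hp : 0 < p₁) (hz : p₁ < z₁) :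
    sSup {v : ℝ | ∃ a b : ℝ,
        (∫ t in Set.Ici (0 : ℝ), |a * Real.exp (-z₁ * t) - b * Real.exp (-p₁ * t)|) ≤ 1 ∧
        v = a / z₁}
      = 1 / (1 - (2 : ℝ) ^ (-1 / (p₁ / (z₁ - p₁)))) := by
  have hz0 : 0 < z₁ := hp.trans hz
  have hzp : 0 < z₁ - p₁ := by linarith
  set T : ℝ := Real.log 2 / p₁ with hTdef
  have hT0 : 0 < T := div_pos (Real.log_pos one_lt_two) hp
  have hepT : Real.exp (-p₁ * T) = 1 / 2 := by
    rw [hTdef, show -p₁ * (Real.log 2 / p₁) = -Real.log 2 by field_simp,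
      Real.exp_neg, Real.exp_log two_pos]
    norm_num
  set c : ℝ := Real.exp (-(z₁ - p₁) * T) with hcdef
  have hc0 : 0 < c := Real.exp_pos _
  have hc1 : c < 1 := by
    rw [hcdef]
    apply Real.exp_lt_one_iff.mpr
    nlinarith
  have hzT : Real.exp (-z₁ * T) = c / 2 := by
    rw [show -z₁ * T = -(z₁ - p₁) * T + -p₁ * T by ring, Real.exp_add, hepT, ← hcdef]
    ring
  have hcform : c = (2:ℝ) ^ (-1 / (p₁ / (z₁ - p₁))) := by
    rw [Real.rpow_def_of_pos (by norm_num : (0:ℝ) < 2), hcdef]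
    congr 1
    rw [hTdef]
    field_simp
  set M : ℝ := 1 / (1 - c) with hMdef
  have h1c : 0 < 1 - c := by linarith
  set S := {v : ℝ | ∃ a b : ℝ,
      (∫ t in Set.Ici (0 : ℝ), |a * Real.exp (-z₁ * t) - b * Real.exp (-p₁ * t)|) ≤ 1 ∧
      v = a / z₁} with hS
  have key : ∀ a b : ℝ,
      (∫ t in Set.Ioc (0:ℝ) T, (a * Real.exp (-z₁ * t) - b * Real.exp (-p₁ * t)))
        - (∫ t in Set.Ioi T, (a * Real.exp (-z₁ * t) - b * Real.exp (-p₁ * t)))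
      = a / z₁ * (1 - c) := by
    intro a b
    rw [splitInt hp hz a b T hT0.le, intPiece hp hz a b 0, intPiece hp hz a b T, hzT, hepT]
    rw [show -z₁ * 0 = 0 by ring, show -p₁ * 0 = 0 by ring, Real.exp_zero]
    field_simp
    ring
  -- upper bound
  have ub : ∀ v ∈ S, v ≤ M := by
    rintro v ⟨a, b, hab, rfl⟩
    rw [integral_Ici_eq_integral_Ioi] at hab
    have hIoc : (∫ t in Set.Ioc (0:ℝ) T, (a * Real.exp (-z₁ * t) - b * Real.exp (-p₁ * t)))
        ≤ ∫ t in Set.Ioc (0:ℝ) T, |a * Real.exp (-z₁ * t) - b * Real.exp (-p₁ * t)| := by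
      apply setIntegral_mono_on
        ((intgOn hp hz a b 0).mono_set Set.Ioc_subset_Ioi_self)
        (((intgOn hp hz a b 0).mono_set Set.Ioc_subset_Ioi_self).abs)
        measurableSet_Ioc
      exact fun x _ => le_abs_self _
    have hIoi : -(∫ t in Set.Ioi T, (a * Real.exp (-z₁ * t) - b * Real.exp (-p₁ * t)))
        ≤ ∫ t in Set.Ioi T, |a * Real.exp (-z₁ * t) - b * Real.exp (-p₁ * t)| := by
      rw [← integral_neg]
      apply setIntegral_mono_on ((intgOn hp hz a b T).neg) ((intgOn hp hz a b T).abs)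
        measurableSet_Ioi
      exact fun x _ => neg_le_abs _
    have := key a b
    have hle : a / z₁ * (1 - c) ≤ 1 := by
      rw [← this]
      calc _ ≤ (∫ t in Set.Ioc (0:ℝ) T, |a * Real.exp (-z₁ * t) - b * Real.exp (-p₁ * t)|)
          + ∫ t in Set.Ioi T, |a * Real.exp (-z₁ * t) - b * Real.exp (-p₁ * t)| := by
            linarith
        _ = ∫ t in Set.Ioi (0:ℝ), |a * Real.exp (-z₁ * t) - b * Real.exp (-p₁ * t)| :=
            (splitAbs hp hz a b T hT0.le).symm
        _ ≤ 1 := hab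
    rw [hMdef, le_div_iff₀ h1c]
    exact hle
  -- membership
  have mem : M ∈ S := by
    refine ⟨z₁ * M, c * (z₁ * M), ?_, by field_simp⟩
    have hfactor : ∀ t : ℝ, z₁ * M * Real.exp (-z₁ * t) - c * (z₁ * M) * Real.exp (-p₁ * t)
        = z₁ * M * Real.exp (-p₁ * t) * (Real.exp (-(z₁ - p₁) * t) - c) := by
      intro t
      have h : Real.exp (-z₁ * t) = Real.exp (-p₁ * t) * Real.exp (-(z₁ - p₁) * t) := by
        rw [← Real.exp_add]; ring_nf
      rw [h]; ring
    have hM0 : 0 < M := by positivity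
    have hzM : 0 ≤ z₁ * M := by positivity
    have hs1 : ∀ t ∈ Set.Ioc (0:ℝ) T,
        |z₁ * M * Real.exp (-z₁ * t) - c * (z₁ * M) * Real.exp (-p₁ * t)|
          = z₁ * M * Real.exp (-z₁ * t) - c * (z₁ * M) * Real.exp (-p₁ * t) := by
      rintro t ⟨_, ht2⟩
      apply abs_of_nonneg
      rw [hfactor t]
      have h1 : c ≤ Real.exp (-(z₁ - p₁) * t) := by
        rw [hcdef]
        apply Real.exp_le_exp.mpr
        nlinarith
      exact mul_nonneg (mul_nonneg hzM (Real.exp_pos _).le) (by linarith)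
    have hs2 : ∀ t ∈ Set.Ioi T,
        |z₁ * M * Real.exp (-z₁ * t) - c * (z₁ * M) * Real.exp (-p₁ * t)|
          = -(z₁ * M * Real.exp (-z₁ * t) - c * (z₁ * M) * Real.exp (-p₁ * t)) := by
      rintro t ht
      apply abs_of_nonpos
      rw [hfactor t]
      have h1 : Real.exp (-(z₁ - p₁) * t) ≤ c := by
        rw [hcdef]
        apply Real.exp_le_exp.mpr
        have := Set.mem_Ioi.mp ht
        nlinarith
      exact mul_nonpos_of_nonneg_of_nonpos (mul_nonneg hzM (Real.exp_pos _).le) (by linarith)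
    rw [integral_Ici_eq_integral_Ioi, splitAbs hp hz _ _ T hT0.le,
      setIntegral_congr_fun measurableSet_Ioc hs1, setIntegral_congr_fun measurableSet_Ioi hs2,
      integral_neg, ← sub_eq_add_neg]
    rw [key (z₁ * M) (c * (z₁ * M))]
    rw [show z₁ * M / z₁ = M by field_simp]
    rw [hMdef]
    field_simp
    exact le_rfl
  have hsup : sSup S = M := le_antisymm (csSup_le ⟨M, mem⟩ ub) (le_csSup ⟨M, ub⟩ mem)
  rw [hsup, hMdef, hcform]
end

section
/- Let 0 < p₁ < z₁ be real numbers and set h = p₁/(z₁ − p₁). Then the supremum of a/z₁ over all pairs (a, b) of real numbers such that ∫₀^∞ max(a e^{−z₁ t} − b e^{−p₁ t}, 0) dt ≤ 1/2 and ∫₀^∞ min(a e^{−z₁ t} − b e^{−p₁ t}, 0) dt ≥ −1/2, equals (h+1)^{h+1}/(2 h^h). -/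
open MeasureTheory

lemma fl_tail_integral {c : ℝ} (hc : 0 < c) (u : ℝ) :
    ∫ t in Set.Ioi u, Real.exp (-c * t) = Real.exp (-c * u) / c := by
  have hderiv : ∀ x ∈ Set.Ici u,
      HasDerivAt (fun t : ℝ => -Real.exp (-c * t) / c) (Real.exp (-c * x)) x := by
    intro x _
    have h1 : HasDerivAt (fun t : ℝ => -c * t) (-c) x := by
      simpa using (hasDerivAt_id x).const_mul (-c)
    have h2 := h1.exp.neg.div_const c
    exact h2.congr_deriv (by rw [div_eq_iff hc.ne']; ring)
  have htend : Filter.Tendsto (fun t : ℝ => -Real.exp (-c * t) / c)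
      Filter.atTop (nhds 0) := by
    have h3 : Filter.Tendsto (fun t : ℝ => c * t) Filter.atTop Filter.atTop :=
      Filter.Tendsto.const_mul_atTop hc Filter.tendsto_id
    have h4 : Filter.Tendsto (fun t : ℝ => Real.exp (-(c * t))) Filter.atTop (nhds 0) :=
      Real.tendsto_exp_neg_atTop_nhds_zero.comp h3
    have h5 := (h4.neg.div_const c)
    simpa [neg_mul] using h5
  have := integral_Ioi_of_hasDerivAt_of_tendsto' hderiv (exp_neg_integrableOn_Ioi u hc) htend
  rw [this]; ring

lemma fl_ioc_integral {c : ℝ} (hc : 0 < c) {u v : ℝ} (huv : u ≤ v) :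
    ∫ t in Set.Ioc u v, Real.exp (-c * t)
      = (Real.exp (-c * u) - Real.exp (-c * v)) / c := by
  rw [← intervalIntegral.integral_of_le huv]
  have hderiv : ∀ x ∈ Set.uIcc u v,
      HasDerivAt (fun t : ℝ => -Real.exp (-c * t) / c) (Real.exp (-c * x)) x := by
    intro x _
    have h1 : HasDerivAt (fun t : ℝ => -c * t) (-c) x := by
      simpa using (hasDerivAt_id x).const_mul (-c)
    have h2 := h1.exp.neg.div_const c
    exact h2.congr_deriv (by rw [div_eq_iff hc.ne']; ring)
  have hcont : Continuous fun t : ℝ => Real.exp (-c * t) :=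
    Real.continuous_exp.comp (continuous_const.mul continuous_id)
  rw [intervalIntegral.integral_eq_sub_of_hasDerivAt hderiv (hcont.intervalIntegrable u v)]
  ring

lemma fl_min_integrable {α : Type*} [MeasurableSpace α] {μ : Measure α} {f : α → ℝ}
    (hf : Integrable f μ) : Integrable (fun t => min (f t) 0) μ := by
  have heq : (fun t => min (f t) 0) = fun t => f t - max (f t) 0 := by
    funext t
    rcases le_total (f t) 0 with h' | h'
    · rw [min_eq_left h', max_eq_right h', sub_zero]
    · rw [min_eq_right h', max_eq_left h', sub_self]
  rw [heq]
  exact hf.sub hf.pos_part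

set_option maxHeartbeats 1000000 in
/-- (FL DUAL for a first-order plant.) Let `0 < p₁ < z₁` and `h = p₁/(z₁ - p₁)`.  The
supremum of `a/z₁` over all real pairs `(a, b)` such that
`∫₀^∞ max(a e^{-z₁ t} - b e^{-p₁ t}, 0) dt ≤ 1/2` and
`∫₀^∞ min(a e^{-z₁ t} - b e^{-p₁ t}, 0) dt ≥ -1/2`, equals `(h+1)^{h+1}/(2 h^h)`. -/
theorem fl_dual_first_order (p₁ z₁ : ℝ) (hp : 0 < p₁) (hz : p₁ < z₁) :
    sSup {v : ℝ | ∃ a b : ℝ,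
        (∫ t in Set.Ici (0 : ℝ), max (a * Real.exp (-z₁ * t) - b * Real.exp (-p₁ * t)) 0)
          ≤ 1 / 2 ∧
        -(1 / 2 : ℝ) ≤
          (∫ t in Set.Ici (0 : ℝ), min (a * Real.exp (-z₁ * t) - b * Real.exp (-p₁ * t)) 0) ∧
        v = a / z₁}
      = (p₁ / (z₁ - p₁) + 1) ^ (p₁ / (z₁ - p₁) + 1)
          / (2 * (p₁ / (z₁ - p₁)) ^ (p₁ / (z₁ - p₁))) := by
  have hz0 : 0 < z₁ := hp.trans hz
  set d : ℝ := z₁ - p₁ with hd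
  have hd0 : 0 < d := sub_pos.2 hz
  set h : ℝ := p₁ / d with hh
  have hh0 : 0 < h := div_pos hp hd0
  have hh1 : h + 1 = z₁ / d := by rw [hh]; field_simp [hd]; linarith
  set T : ℝ := Real.log (z₁ / p₁) / d with hT
  have hzp1 : 1 < z₁ / p₁ := (one_lt_div hp).2 hz
  have hT0 : 0 < T := div_pos (Real.log_pos hzp1) hd0
  set Ep : ℝ := Real.exp (-p₁ * T) with hEp
  set Ez : ℝ := Real.exp (-z₁ * T) with hEz
  set L : ℝ := (z₁ / p₁) ^ h with hL
  set M : ℝ := (p₁ / z₁) ^ h with hM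
  clear_value d h T Ep Ez L M
  have hL0 : 0 < L := hL ▸ Real.rpow_pos_of_pos (div_pos hz0 hp) h
  have hL1 : 1 ≤ L := hL ▸ Real.one_le_rpow hzp1.le hh0.le
  have hM0 : 0 < M := hM ▸ Real.rpow_pos_of_pos (div_pos hp hz0) h
  have hML : M * L = 1 := by
    rw [hM, hL]
    rw [show p₁ / z₁ = (z₁ / p₁)⁻¹ by rw [inv_div],
      Real.inv_rpow (div_pos hz0 hp).le]
    exact inv_mul_cancel₀ (Real.rpow_pos_of_pos (div_pos hz0 hp) h).ne'
  -- exp identities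
  have hEpM : Ep = M := by
    rw [hEp, hM, Real.rpow_def_of_pos (div_pos hp hz0)]
    congr 1
    rw [show p₁ / z₁ = (z₁ / p₁)⁻¹ by rw [inv_div], Real.log_inv]
    rw [hT, hh]
    ring
  have hEzM : Ez = M * (p₁ / z₁) := by
    have h1 : M * (p₁ / z₁) = (p₁ / z₁) ^ (h + 1) := by
      rw [Real.rpow_add (div_pos hp hz0), Real.rpow_one, hM]
    rw [hEz, h1, Real.rpow_def_of_pos (div_pos hp hz0)]
    congr 1
    rw [show p₁ / z₁ = (z₁ / p₁)⁻¹ by rw [inv_div], Real.log_inv]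
    rw [hT, hh1]
    ring
  set V : ℝ := (h + 1) * L / 2 with hV
  have hV0 : 0 < V := by positivity
  set c2 : ℝ := -((h + 1) * (L - 1)) with hc2
  clear_value V c2
  have hc2le : c2 ≤ 0 := by nlinarith
  have hq : (h + 1) * (1 - p₁ / z₁) = 1 := by
    rw [hh1, hd]; field_simp [sub_ne_zero.2 hz.ne', hz0.ne']
  have S2 : (h + 1) * (1 - Ep) + c2 * Ep = 0 := by
    rw [hEpM, hc2]; linear_combination (-(h+1)) * hML
  have S1 : (h + 1) * (1 - Ez) + c2 * Ez = 1 := by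
    rw [hEzM, hc2]
    linear_combination hq - ((h+1) * (p₁/z₁)) * hML
  have Vhalf : V * (Ep - Ez) = 1 / 2 := by
    rw [hEpM, hEzM, hV]
    linear_combination (1/2) * hq + ((h+1) * (1 - p₁/z₁) / 2) * hML
  -- integrability
  have intz : ∀ u : ℝ, IntegrableOn (fun t : ℝ => Real.exp (-z₁ * t)) (Set.Ioi u) :=
    fun u => exp_neg_integrableOn_Ioi u hz0
  have intp : ∀ u : ℝ, IntegrableOn (fun t : ℝ => Real.exp (-p₁ * t)) (Set.Ioi u) :=
    fun u => exp_neg_integrableOn_Ioi u hp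
  have hgIoi : ∀ a b : ℝ, IntegrableOn
      (fun t : ℝ => a * Real.exp (-z₁ * t) - b * Real.exp (-p₁ * t)) (Set.Ioi 0) :=
    fun a b => (((intz 0).const_mul a).sub ((intp 0).const_mul b))
  have hgIci : ∀ a b : ℝ, IntegrableOn
      (fun t : ℝ => a * Real.exp (-z₁ * t) - b * Real.exp (-p₁ * t)) (Set.Ici 0) :=
    fun a b => (integrableOn_Ici_iff_integrableOn_Ioi (by simp)).2 (hgIoi a b)
  have hgIoc : ∀ a b : ℝ, IntegrableOn
      (fun t : ℝ => a * Real.exp (-z₁ * t) - b * Real.exp (-p₁ * t)) (Set.Ioc 0 T) :=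
    fun a b => (hgIoi a b).mono_set Set.Ioc_subset_Ioi_self
  have hgIoiT : ∀ a b : ℝ, IntegrableOn
      (fun t : ℝ => a * Real.exp (-z₁ * t) - b * Real.exp (-p₁ * t)) (Set.Ioi T) :=
    fun a b => (hgIoi a b).mono_set (Set.Ioi_subset_Ioi hT0.le)
  -- integral formulas
  have IA : ∀ a b : ℝ,
      (∫ t in Set.Ioc 0 T, (a * Real.exp (-z₁ * t) - b * Real.exp (-p₁ * t)))
        = a * ((1 - Ez) / z₁) - b * ((1 - Ep) / p₁) := by
    intro a b
    rw [integral_sub (((intz 0).mono_set Set.Ioc_subset_Ioi_self).const_mul a)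
        (((intp 0).mono_set Set.Ioc_subset_Ioi_self).const_mul b),
      integral_const_mul, integral_const_mul,
      fl_ioc_integral hz0 hT0.le, fl_ioc_integral hp hT0.le, hEz, hEp]
    norm_num
  have IB : ∀ a b : ℝ,
      (∫ t in Set.Ioi T, (a * Real.exp (-z₁ * t) - b * Real.exp (-p₁ * t)))
        = a * (Ez / z₁) - b * (Ep / p₁) := by
    intro a b
    rw [integral_sub (((intz T)).const_mul a) (((intp T)).const_mul b),
      integral_const_mul, integral_const_mul,
      fl_tail_integral hz0 T, fl_tail_integral hp T, hEz, hEp]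
  -- sign lemmas
  have hsgn1 : ∀ t : ℝ, t ≤ T → p₁ * Real.exp (-p₁ * t) ≤ z₁ * Real.exp (-z₁ * t) := by
    intro t ht
    have e1 : z₁ * Real.exp (-z₁ * t) = Real.exp (Real.log z₁ + -z₁ * t) := by
      rw [Real.exp_add, Real.exp_log hz0]
    have e2 : p₁ * Real.exp (-p₁ * t) = Real.exp (Real.log p₁ + -p₁ * t) := by
      rw [Real.exp_add, Real.exp_log hp]
    rw [e1, e2, Real.exp_le_exp]
    have hlog : d * t ≤ Real.log (z₁ / p₁) := by
      rw [hT] at ht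
      calc d * t ≤ d * (Real.log (z₁ / p₁) / d) := by
            exact mul_le_mul_of_nonneg_left ht hd0.le
        _ = Real.log (z₁ / p₁) := by field_simp
    rw [Real.log_div hz0.ne' hp.ne'] at hlog
    rw [hd] at hlog
    nlinarith [hlog]
  have hsgn2 : ∀ t : ℝ, T ≤ t → z₁ * Real.exp (-z₁ * t) ≤ p₁ * Real.exp (-p₁ * t) := by
    intro t ht
    have e1 : z₁ * Real.exp (-z₁ * t) = Real.exp (Real.log z₁ + -z₁ * t) := by
      rw [Real.exp_add, Real.exp_log hz0]
    have e2 : p₁ * Real.exp (-p₁ * t) = Real.exp (Real.log p₁ + -p₁ * t) := by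
      rw [Real.exp_add, Real.exp_log hp]
    rw [e1, e2, Real.exp_le_exp]
    have hlog : Real.log (z₁ / p₁) ≤ d * t := by
      rw [hT] at ht
      calc Real.log (z₁ / p₁) = d * (Real.log (z₁ / p₁) / d) := by field_simp
        _ ≤ d * t := mul_le_mul_of_nonneg_left ht hd0.le
    rw [Real.log_div hz0.ne' hp.ne', hd] at hlog
    nlinarith [hlog]
  have hsplit : Set.Ioc (0:ℝ) T ∪ Set.Ioi T = Set.Ioi (0:ℝ) := Set.Ioc_union_Ioi_eq_Ioi hT0.le
  -- witness integrals
  have hwit_max : (∫ t in Set.Ici (0:ℝ),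
      max (z₁ * V * Real.exp (-z₁ * t) - p₁ * V * Real.exp (-p₁ * t)) 0) = 1/2 := by
    rw [integral_Ici_eq_integral_Ioi, ← hsplit,
      setIntegral_union (Set.Ioc_disjoint_Ioi le_rfl) measurableSet_Ioi
        ((hgIoc _ _).pos_part) ((hgIoiT _ _).pos_part)]
    have e1 : (∫ t in Set.Ioc (0:ℝ) T,
        max (z₁ * V * Real.exp (-z₁ * t) - p₁ * V * Real.exp (-p₁ * t)) 0)
        = ∫ t in Set.Ioc (0:ℝ) T, (z₁ * V * Real.exp (-z₁ * t) - p₁ * V * Real.exp (-p₁ * t)) :=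
      setIntegral_congr_fun measurableSet_Ioc (fun t ht => max_eq_left
        (by nlinarith [mul_nonneg hV0.le (sub_nonneg.2 (hsgn1 t ht.2))]))
    have e2 : (∫ t in Set.Ioi T,
        max (z₁ * V * Real.exp (-z₁ * t) - p₁ * V * Real.exp (-p₁ * t)) 0) = 0 := by
      rw [setIntegral_congr_fun measurableSet_Ioi (g := fun _ => (0:ℝ))
        (fun t ht => max_eq_right
          (by nlinarith [mul_nonneg hV0.le (sub_nonneg.2 (hsgn2 t (le_of_lt ht)))]))]
      simp
    rw [e1, e2, IA, add_zero]
    have e3 : z₁ * V * ((1 - Ez) / z₁) - p₁ * V * ((1 - Ep) / p₁) = V * (Ep - Ez) := by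
      field_simp
      ring
    rw [e3, Vhalf]
  have hwit_min : (∫ t in Set.Ici (0:ℝ),
      min (z₁ * V * Real.exp (-z₁ * t) - p₁ * V * Real.exp (-p₁ * t)) 0) = -(1/2) := by
    rw [integral_Ici_eq_integral_Ioi, ← hsplit,
      setIntegral_union (Set.Ioc_disjoint_Ioi le_rfl) measurableSet_Ioi
        (fl_min_integrable (hgIoc _ _)) (fl_min_integrable (hgIoiT _ _))]
    have e1 : (∫ t in Set.Ioc (0:ℝ) T,
        min (z₁ * V * Real.exp (-z₁ * t) - p₁ * V * Real.exp (-p₁ * t)) 0) = 0 := by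
      rw [setIntegral_congr_fun measurableSet_Ioc (g := fun _ => (0:ℝ))
        (fun t ht => min_eq_right
          (by nlinarith [mul_nonneg hV0.le (sub_nonneg.2 (hsgn1 t ht.2))]))]
      simp
    have e2 : (∫ t in Set.Ioi T,
        min (z₁ * V * Real.exp (-z₁ * t) - p₁ * V * Real.exp (-p₁ * t)) 0)
        = ∫ t in Set.Ioi T, (z₁ * V * Real.exp (-z₁ * t) - p₁ * V * Real.exp (-p₁ * t)) :=
      setIntegral_congr_fun measurableSet_Ioi (fun t ht => min_eq_left
        (by nlinarith [mul_nonneg hV0.le (sub_nonneg.2 (hsgn2 t (le_of_lt ht)))]))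
    rw [e1, e2, IB, zero_add]
    have e3 : z₁ * V * (Ez / z₁) - p₁ * V * (Ep / p₁) = -(V * (Ep - Ez)) := by
      field_simp
      ring
    rw [e3, Vhalf]
  have hmem3 : V = (z₁ * V) / z₁ := by field_simp
  -- upper bound
  have hub : ∀ x : ℝ, (∃ a b : ℝ,
      (∫ t in Set.Ici (0 : ℝ), max (a * Real.exp (-z₁ * t) - b * Real.exp (-p₁ * t)) 0)
        ≤ 1 / 2 ∧
      -(1 / 2 : ℝ) ≤
        (∫ t in Set.Ici (0 : ℝ), min (a * Real.exp (-z₁ * t) - b * Real.exp (-p₁ * t)) 0) ∧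
      x = a / z₁) → x ≤ V := by
    rintro x ⟨a, b, hC1, hC2, rfl⟩
    have hIA_le : (∫ t in Set.Ioc (0:ℝ) T,
        (a * Real.exp (-z₁ * t) - b * Real.exp (-p₁ * t))) ≤ 1/2 := by
      have s1 : (∫ t in Set.Ioc (0:ℝ) T, (a * Real.exp (-z₁ * t) - b * Real.exp (-p₁ * t)))
          ≤ ∫ t in Set.Ioc (0:ℝ) T,
            max (a * Real.exp (-z₁ * t) - b * Real.exp (-p₁ * t)) 0 :=
        setIntegral_mono (hgIoc a b) ((hgIoc a b).pos_part) (fun t => le_max_left _ _)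
      have s2 : (∫ t in Set.Ioc (0:ℝ) T,
            max (a * Real.exp (-z₁ * t) - b * Real.exp (-p₁ * t)) 0)
          ≤ ∫ t in Set.Ici (0:ℝ),
            max (a * Real.exp (-z₁ * t) - b * Real.exp (-p₁ * t)) 0 :=
        setIntegral_mono_set ((hgIci a b).pos_part)
          (Filter.Eventually.of_forall fun t => le_max_right _ _)
          ((show Set.Ioc (0:ℝ) T ⊆ Set.Ici (0:ℝ) from fun t ht => ht.1.le).eventuallyLE)
      linarith
    have hIB_ge : -(1/2:ℝ) ≤ (∫ t in Set.Ioi T,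
        (a * Real.exp (-z₁ * t) - b * Real.exp (-p₁ * t))) := by
      have s1 : (∫ t in Set.Ioi T,
            min (a * Real.exp (-z₁ * t) - b * Real.exp (-p₁ * t)) 0)
          ≤ ∫ t in Set.Ioi T, (a * Real.exp (-z₁ * t) - b * Real.exp (-p₁ * t)) :=
        setIntegral_mono (fl_min_integrable (hgIoiT a b)) (hgIoiT a b)
          (fun t => min_le_left _ _)
      have s2 : (∫ t in Set.Ici (0:ℝ),
            min (a * Real.exp (-z₁ * t) - b * Real.exp (-p₁ * t)) 0)
          ≤ ∫ t in Set.Ioi T,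
            min (a * Real.exp (-z₁ * t) - b * Real.exp (-p₁ * t)) 0 := by
        have s3 := setIntegral_mono_set
          (f := fun t => -(min (a * Real.exp (-z₁ * t) - b * Real.exp (-p₁ * t)) 0))
          (fl_min_integrable (hgIci a b)).neg
          (Filter.Eventually.of_forall fun t => neg_nonneg.2 (min_le_right _ _))
          ((show Set.Ioi T ⊆ Set.Ici (0:ℝ) from fun t ht => (hT0.trans ht).le).eventuallyLE)
        rw [integral_neg, integral_neg] at s3
        linarith
      linarith
    have key : a / z₁ = (h + 1) * (∫ t in Set.Ioc (0:ℝ) T,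
          (a * Real.exp (-z₁ * t) - b * Real.exp (-p₁ * t)))
        + c2 * (∫ t in Set.Ioi T, (a * Real.exp (-z₁ * t) - b * Real.exp (-p₁ * t))) := by
      rw [IA a b, IB a b]
      linear_combination (-(a / z₁)) * S1 + (b / p₁) * S2
    have b1 : (h + 1) * (∫ t in Set.Ioc (0:ℝ) T,
          (a * Real.exp (-z₁ * t) - b * Real.exp (-p₁ * t))) ≤ (h + 1) * (1/2) :=
      mul_le_mul_of_nonneg_left hIA_le (by positivity)
    have b2 : c2 * (∫ t in Set.Ioi T,
          (a * Real.exp (-z₁ * t) - b * Real.exp (-p₁ * t))) ≤ c2 * (-(1/2)) :=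
      mul_le_mul_of_nonpos_left hIB_ge hc2le
    have hVc : (h + 1) * (1/2) + c2 * (-(1/2)) = V := by
      rw [hc2, hV]; ring
    linarith
  -- final value identity
  have hVRHS : V = (h + 1) ^ (h + 1) / (2 * h ^ h) := by
    have hzp : z₁ / p₁ = (h + 1) / h := by
      rw [hh1, hh, hd]
      field_simp [sub_ne_zero.2 hz.ne', hp.ne', hz0.ne']
    have hh0' : (0:ℝ) < h ^ h := Real.rpow_pos_of_pos hh0 h
    rw [hV, hL, hzp, Real.div_rpow (by positivity) hh0.le,
      Real.rpow_add (by positivity : (0:ℝ) < h + 1), Real.rpow_one]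
    field_simp
  rw [← hVRHS]
  refine le_antisymm (csSup_le ⟨V, ?_⟩ fun x hx => hub x hx) (le_csSup ⟨V, fun x hx => hub x hx⟩ ?_)
  · exact ⟨z₁ * V, p₁ * V, le_of_eq hwit_max, hwit_min.ge, hmem3⟩
  · exact ⟨z₁ * V, p₁ * V, le_of_eq hwit_max, hwit_min.ge, hmem3⟩
end

section
/- Let 0 < p₁ < z₁ be real numbers. Then the supremum of a/z₁ over all pairs (a, b) of real numbers such that a e^{−z₁ t} − b e^{−p₁ t} ≥ 0 for all t ≥ 0 and ∫₀^∞ (a e^{−z₁ t} − b e^{−p₁ t}) dt ≤ 1, equals 1. -/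
open MeasureTheory Real Set Filter

lemma exp_int (b : ℝ) (hb : 0 < b) : ∫ x in Set.Ioi (0:ℝ), Real.exp (-b * x) = 1 / b := by
  have h : ∀ x ∈ Set.Ici (0:ℝ), HasDerivAt (fun y => -Real.exp (-b * y) / b) (Real.exp (-b * x)) x := by
    intro x _
    have : HasDerivAt (fun y => -b * y) (-b) x := by simpa using (hasDerivAt_id x).const_mul (-b)
    have := (this.exp).neg.div_const b
    exact this.congr_deriv (by rw [div_eq_iff hb.ne']; ring)
  have htend : Tendsto (fun y => -Real.exp (-b * y) / b) atTop (nhds 0) := by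
    have : Tendsto (fun y : ℝ => -b * y) atTop atBot := by
      simpa using (tendsto_id (α := ℝ)).const_mul_atTop_of_neg (neg_neg_iff_pos.mpr hb)
    have := (Real.tendsto_exp_atBot.comp this).neg.div_const b
    simpa using this
  have := MeasureTheory.integral_Ioi_of_hasDerivAt_of_tendsto'
    (fun x hx => h x hx) ((exp_neg_integrableOn_Ioi 0 hb)) htend
  simpa [neg_div, neg_mul] using this

/-- (POS DUAL for a first-order plant.) Let `0 < p₁ < z₁`.  The supremum of `a/z₁` over
all real pairs `(a, b)` such that `a e^{-z₁ t} - b e^{-p₁ t} ≥ 0` for all `t ≥ 0` and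
`∫₀^∞ (a e^{-z₁ t} - b e^{-p₁ t}) dt ≤ 1`, equals `1`. -/
theorem pos_dual_first_order (p₁ z₁ : ℝ) (hp : 0 < p₁) (hz : p₁ < z₁) :
    sSup {v : ℝ | ∃ a b : ℝ,
        (∀ t : ℝ, 0 ≤ t → 0 ≤ a * Real.exp (-z₁ * t) - b * Real.exp (-p₁ * t)) ∧
        (∫ t in Set.Ici (0 : ℝ), (a * Real.exp (-z₁ * t) - b * Real.exp (-p₁ * t))) ≤ 1 ∧
        v = a / z₁} = 1 := by
  have hz0 : 0 < z₁ := hp.trans hz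
  set S : Set ℝ := {v : ℝ | ∃ a b : ℝ,
        (∀ t : ℝ, 0 ≤ t → 0 ≤ a * Real.exp (-z₁ * t) - b * Real.exp (-p₁ * t)) ∧
        (∫ t in Set.Ici (0 : ℝ), (a * Real.exp (-z₁ * t) - b * Real.exp (-p₁ * t))) ≤ 1 ∧
        v = a / z₁} with hS
  have hmem : (1 : ℝ) ∈ S := by
    refine ⟨z₁, 0, ?_, ?_, ?_⟩
    · intro t _; simp only [zero_mul, sub_zero]; positivity
    · have : (∫ t in Set.Ici (0 : ℝ), (z₁ * Real.exp (-z₁ * t) - 0 * Real.exp (-p₁ * t)))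
          = z₁ * (1 / z₁) := by
        rw [MeasureTheory.integral_Ici_eq_integral_Ioi]
        simp only [zero_mul, sub_zero]
        rw [MeasureTheory.integral_const_mul, exp_int z₁ hz0]
      rw [this]; rw [mul_one_div, div_self hz0.ne']
    · rw [div_self hz0.ne']
  have hub : ∀ v ∈ S, v ≤ 1 := by
    rintro v ⟨a, b, hpt, hint, rfl⟩
    -- b ≤ 0
    have hle : ∀ t : ℝ, 0 ≤ t → b ≤ a * Real.exp ((p₁ - z₁) * t) := by
      intro t ht
      have h := hpt t ht
      have hep : 0 < Real.exp (-p₁ * t) := Real.exp_pos _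
      have hsplit : a * Real.exp (-z₁ * t) = a * Real.exp ((p₁ - z₁) * t) * Real.exp (-p₁ * t) := by
        rw [mul_assoc, ← Real.exp_add]; ring_nf
      rw [hsplit] at h
      nlinarith
    have hlim : Tendsto (fun t : ℝ => a * Real.exp ((p₁ - z₁) * t)) atTop (nhds 0) := by
      have h1 : Tendsto (fun t : ℝ => (p₁ - z₁) * t) atTop atBot := by
        simpa using (tendsto_id (α := ℝ)).const_mul_atTop_of_neg (by linarith : p₁ - z₁ < 0)
      have := (Real.tendsto_exp_atBot.comp h1).const_mul a
      simpa using this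
    have hb : b ≤ 0 :=
      ge_of_tendsto hlim ((eventually_ge_atTop 0).mono fun t ht => hle t ht)
    -- compute integral
    have hi1 : IntegrableOn (fun t : ℝ => a * Real.exp (-z₁ * t)) (Set.Ioi 0) :=
      (exp_neg_integrableOn_Ioi 0 hz0).const_mul a
    have hi2 : IntegrableOn (fun t : ℝ => b * Real.exp (-p₁ * t)) (Set.Ioi 0) :=
      (exp_neg_integrableOn_Ioi 0 hp).const_mul b
    have hval : (∫ t in Set.Ici (0 : ℝ), (a * Real.exp (-z₁ * t) - b * Real.exp (-p₁ * t)))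
        = a * (1 / z₁) - b * (1 / p₁) := by
      rw [MeasureTheory.integral_Ici_eq_integral_Ioi,
        MeasureTheory.integral_sub hi1 hi2,
        MeasureTheory.integral_const_mul, MeasureTheory.integral_const_mul,
        exp_int z₁ hz0, exp_int p₁ hp]
    rw [hval] at hint
    have hbp : b * (1 / p₁) ≤ 0 := mul_nonpos_of_nonpos_of_nonneg hb (by positivity)
    have h1 : a * (1 / z₁) ≤ 1 := by linarith
    rw [mul_one_div] at h1
    exact h1
  exact le_antisymm (Real.sSup_le hub zero_le_one) (le_csSup ⟨1, hub⟩ hmem)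
end

section
/- For every real number h > 0, the following chain of inequalities holds: max(1, h) ≤ 1/(1 − 2^{−1/h}) ≤ (h+1)^{h+1}/h^h ≤ 2/(1 − 2^{−1/h}). -/
open Real

/-- Chord bound from concavity of `log`: for `t ∈ [0,1]`, `t·log 2 ≤ log (1+t)`. -/
private lemma log_two_chord_le {t : ℝ} (ht0 : 0 ≤ t) (ht1 : t ≤ 1) :
    t * Real.log 2 ≤ Real.log (1 + t) := by
  have hc := strictConcaveOn_log_Ioi.concaveOn
  have h := hc.2 (Set.mem_Ioi.2 one_pos : (1:ℝ) ∈ Set.Ioi 0)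
    (Set.mem_Ioi.2 two_pos : (2:ℝ) ∈ Set.Ioi 0)
    (show (0:ℝ) ≤ 1 - t by linarith) ht0 (show (1 - t) + t = 1 by ring)
  simp only [smul_eq_mul, Real.log_one, mul_zero, mul_one] at h
  have he : 1 - t + t * 2 = 1 + t := by ring
  rw [he] at h
  linarith

/-- Beyond the chord: for `t ≥ 1`, `log (1+t) ≤ t·log 2`. -/
private lemma log_two_chord_ge {t : ℝ} (ht : 1 ≤ t) :
    Real.log (1 + t) ≤ t * Real.log 2 := by
  have ht0 : 0 < t := lt_of_lt_of_le one_pos ht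
  have hc := strictConcaveOn_log_Ioi.concaveOn
  have h := hc.2 (Set.mem_Ioi.2 (by linarith : (0:ℝ) < 1 + t))
    (Set.mem_Ioi.2 one_pos : (1:ℝ) ∈ Set.Ioi 0)
    (show (0:ℝ) ≤ 1/t by positivity)
    (show (0:ℝ) ≤ 1 - 1/t by rw [sub_nonneg]; exact (div_le_one ht0).2 ht)
    (show 1/t + (1 - 1/t) = 1 by ring)
  simp only [smul_eq_mul, Real.log_one, mul_zero, mul_one, add_zero] at h
  have he : 1/t * (1 + t) + (1 - 1/t) = 2 := by field_simp; ring
  rw [he] at h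
  have h2 := mul_le_mul_of_nonneg_left h ht0.le
  calc Real.log (1 + t) = t * (1/t * Real.log (1 + t)) := by field_simp
    _ ≤ t * Real.log 2 := h2

private lemma two_rpow_le {t : ℝ} (ht0 : 0 ≤ t) (ht1 : t ≤ 1) : (2:ℝ) ^ t ≤ 1 + t := by
  have h1t : (0:ℝ) < 1 + t := by linarith
  rw [Real.rpow_def_of_pos (by norm_num : (0:ℝ) < 2)]
  calc Real.exp (Real.log 2 * t) ≤ Real.exp (Real.log (1 + t)) := by
        apply Real.exp_le_exp.2
        rw [mul_comm]
        exact log_two_chord_le ht0 ht1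
    _ = 1 + t := Real.exp_log h1t

private lemma two_rpow_ge {t : ℝ} (ht : 1 ≤ t) : 1 + t ≤ (2:ℝ) ^ t := by
  have h1t : (0:ℝ) < 1 + t := by linarith
  rw [Real.rpow_def_of_pos (by norm_num : (0:ℝ) < 2)]
  calc (1:ℝ) + t = Real.exp (Real.log (1 + t)) := (Real.exp_log h1t).symm
    _ ≤ Real.exp (Real.log 2 * t) := by
        apply Real.exp_le_exp.2
        rw [mul_comm]
        exact log_two_chord_ge ht

/-- For every real `h > 0`,
`max(1, h) ≤ 1/(1 - 2^{-1/h}) ≤ (h+1)^{h+1}/h^h ≤ 2/(1 - 2^{-1/h})`,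
where the powers are real powers. -/
theorem performance_chain_of_inequalities (h : ℝ) (hh : 0 < h) :
    max 1 h ≤ 1 / (1 - (2 : ℝ) ^ (-1 / h)) ∧
    1 / (1 - (2 : ℝ) ^ (-1 / h)) ≤ (h + 1) ^ (h + 1) / h ^ h ∧
    (h + 1) ^ (h + 1) / h ^ h ≤ 2 / (1 - (2 : ℝ) ^ (-1 / h)) := by
  have hh1 : (0:ℝ) < h + 1 := by linarith
  set β : ℝ := (2:ℝ) ^ (1/h) with hβdef
  have hβ1 : 1 < β := by
    rw [hβdef, show (1:ℝ) = (2:ℝ) ^ (0:ℝ) from (Real.rpow_zero 2).symm]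
    exact (Real.rpow_lt_rpow_left_iff one_lt_two).2 (by positivity)
  have hβ0 : (0:ℝ) < β := lt_trans one_pos hβ1
  have hβm : (0:ℝ) < β - 1 := by linarith
  have hβh : β ^ h = 2 := by
    rw [hβdef, ← Real.rpow_mul (by norm_num : (0:ℝ) ≤ 2), one_div_mul_cancel hh.ne',
      Real.rpow_one]
  have hneg : (2:ℝ) ^ (-1/h) = β⁻¹ := by
    rw [hβdef, neg_div, Real.rpow_neg (by norm_num : (0:ℝ) ≤ 2)]
  have hD : 1 - (2:ℝ) ^ (-1/h) = (β - 1)/β := by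
    rw [hneg]; field_simp
  have h1D : 1 / (1 - (2:ℝ) ^ (-1/h)) = β/(β - 1) := by
    rw [hD, one_div_div]
  have h2D : 2 / (1 - (2:ℝ) ^ (-1/h)) = 2 * β/(β - 1) := by
    rw [hD, div_div_eq_mul_div]
  have hhh : (0:ℝ) < h ^ h := Real.rpow_pos_of_pos hh h
  have hp1 : (0:ℝ) < (h + 1) ^ (h + 1) := Real.rpow_pos_of_pos hh1 (h + 1)
  have hph : (0:ℝ) < (h + 1) ^ h := Real.rpow_pos_of_pos hh1 h
  have hsplit : (h + 1) ^ (h + 1) = (h + 1) ^ h * (h + 1) :=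
    Real.rpow_add_one hh1.ne' h
  -- bound available when h ≥ 1 : β ≤ (h+1)/h
  have hβle : 1 ≤ h → β ≤ (h + 1)/h := by
    intro hc
    have ht1 : (1:ℝ)/h ≤ 1 := by rw [div_le_one hh]; linarith
    have := two_rpow_le (t := 1/h) (by positivity) ht1
    rw [hβdef]
    calc (2:ℝ) ^ (1/h) ≤ 1 + 1/h := this
      _ = (h + 1)/h := by field_simp
  -- bound available when h ≤ 1 : (h+1)/h ≤ β
  have hβge : h ≤ 1 → (h + 1)/h ≤ β := by
    intro hc
    have ht1 : (1:ℝ) ≤ 1/h := (one_le_div hh).2 hc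
    have := two_rpow_ge (t := 1/h) ht1
    rw [hβdef]
    calc (h + 1)/h = 1 + 1/h := by field_simp
      _ ≤ (2:ℝ) ^ (1/h) := this
  refine ⟨?_, ?_, ?_⟩
  · -- max 1 h ≤ β/(β-1)
    rw [h1D]
    apply max_le
    · rw [le_div_iff₀ hβm]; linarith
    · rw [le_div_iff₀ hβm]
      rcases le_or_gt h 1 with hc | hc
      · nlinarith
      · have hb : β * h ≤ h + 1 := (le_div_iff₀ hh).1 (hβle hc.le)
        nlinarith
  · -- β/(β-1) ≤ (h+1)^(h+1)/h^h
    rw [h1D, div_le_div_iff₀ hβm hhh]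
    -- goal : β * h^h ≤ (h+1)^(h+1) * (β-1)
    have hmono : h ^ h ≤ (h + 1) ^ h :=
      Real.rpow_le_rpow hh.le (by linarith) hh.le
    rcases le_or_gt h 1 with hc | hc
    · have hb : h + 1 ≤ β * h := (div_le_iff₀ hh).1 (hβge hc)
      have key : β ≤ (h + 1) * (β - 1) := by nlinarith
      calc β * h ^ h ≤ ((h + 1) * (β - 1)) * h ^ h :=
            mul_le_mul_of_nonneg_right key hhh.le
        _ ≤ ((h + 1) * (β - 1)) * (h + 1) ^ h := by
            apply mul_le_mul_of_nonneg_left hmono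
            positivity
        _ = (h + 1) ^ (h + 1) * (β - 1) := by rw [hsplit]; ring
    · have hb : β ≤ (h + 1)/h := hβle hc.le
      have hβexp : 1 + Real.log 2 / h ≤ β := by
        rw [hβdef, Real.rpow_def_of_pos (by norm_num : (0:ℝ) < 2)]
        calc 1 + Real.log 2 / h = Real.log 2 * (1/h) + 1 := by ring
          _ ≤ Real.exp (Real.log 2 * (1/h)) := Real.add_one_le_exp _
      have hA : (2:ℝ) * h ^ h ≤ (h + 1) ^ h := by
        have ht1 : (1:ℝ)/h ≤ 1 := by rw [div_le_one hh]; linarith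
        have hl := log_two_chord_le (t := 1/h) (by positivity) ht1
        have h2 : (2:ℝ) ≤ ((h + 1)/h) ^ h := by
          rw [Real.rpow_def_of_pos (by positivity)]
          have heq : Real.log ((h + 1)/h) = Real.log (1 + 1/h) := by
            rw [show (h + 1)/h = 1 + 1/h from by field_simp]
          have hlog : Real.log 2 ≤ Real.log ((h + 1)/h) * h := by
            rw [heq]
            have h3 := mul_le_mul_of_nonneg_left hl hh.le
            calc Real.log 2 = h * (1/h * Real.log 2) := by field_simp
              _ ≤ h * Real.log (1 + 1/h) := h3
              _ = Real.log (1 + 1/h) * h := by ring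
          calc (2:ℝ) = Real.exp (Real.log 2) := (Real.exp_log two_pos).symm
            _ ≤ Real.exp (Real.log ((h + 1)/h) * h) := Real.exp_le_exp.2 hlog
        rw [Real.div_rpow (by linarith) hh.le, le_div_iff₀ hhh] at h2
        linarith
      have hlog2 : (1:ℝ) ≤ 2 * Real.log 2 := by
        nlinarith [Real.log_two_gt_d9]
      have hlogpos : (0:ℝ) < Real.log 2 := by nlinarith [Real.log_two_gt_d9]
      have hfrac : (0:ℝ) ≤ (h + 1) * (Real.log 2 / h) := by positivity
      calc β * h ^ h ≤ ((h + 1)/h) * h ^ h := mul_le_mul_of_nonneg_right hb hhh.le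
        _ ≤ (2 * Real.log 2) * (((h + 1)/h) * h ^ h) := by
            nlinarith [mul_pos (div_pos hh1 hh) hhh]
        _ = ((h + 1) * (Real.log 2 / h)) * (2 * h ^ h) := by ring
        _ ≤ ((h + 1) * (Real.log 2 / h)) * (h + 1) ^ h :=
            mul_le_mul_of_nonneg_left hA hfrac
        _ ≤ ((h + 1) * (β - 1)) * (h + 1) ^ h := by
            apply mul_le_mul_of_nonneg_right _ hph.le
            apply mul_le_mul_of_nonneg_left _ hh1.le
            linarith
        _ = (h + 1) ^ (h + 1) * (β - 1) := by rw [hsplit]; ring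
  · -- (h+1)^(h+1)/h^h ≤ 2β/(β-1)
    rw [h2D, div_le_div_iff₀ hhh hβm]
    -- goal : (h+1)^(h+1) * (β-1) ≤ 2*β * h^h
    set x : ℝ := h * (β - 1) with hxdef
    have hx0 : (0:ℝ) < x := mul_pos hh hβm
    have amgm : x ^ (1/(h + 1)) * (1:ℝ) ^ (h/(h + 1)) ≤
        (1/(h + 1)) * x + (h/(h + 1)) * 1 :=
      Real.geom_mean_le_arith_mean2_weighted (by positivity) (by positivity)
        hx0.le zero_le_one (by field_simp; ring)
    rw [Real.one_rpow, mul_one, mul_one] at amgm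
    have amgm2 : x ^ (1/(h + 1)) ≤ (x + h)/(h + 1) := by
      calc x ^ (1/(h + 1)) ≤ (1/(h + 1)) * x + h/(h + 1) := amgm
        _ = (x + h)/(h + 1) := by ring
    have step : x ≤ ((x + h)/(h + 1)) ^ (h + 1) := by
      have h1 : (x ^ (1/(h + 1))) ^ (h + 1) ≤ ((x + h)/(h + 1)) ^ (h + 1) :=
        Real.rpow_le_rpow (by positivity) amgm2 (by linarith)
      rwa [← Real.rpow_mul hx0.le, one_div_mul_cancel hh1.ne', Real.rpow_one] at h1
    have hxh : x + h = h * β := by rw [hxdef]; ring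
    have hrhs : ((x + h)/(h + 1)) ^ (h + 1) = (h ^ h * h) * (2 * β) / (h + 1) ^ (h + 1) := by
      rw [hxh, Real.div_rpow (by positivity) hh1.le,
        Real.mul_rpow hh.le hβ0.le, Real.rpow_add_one hh.ne' h,
        Real.rpow_add_one hβ0.ne' h, hβh]
    rw [hrhs, le_div_iff₀ hp1, hxdef] at step
    -- step : h * (β - 1) * (h+1)^(h+1) ≤ h^h * h * (2*β)
    have hmul : ((h + 1) ^ (h + 1) * (β - 1)) * h ≤ (2 * β * h ^ h) * h := by
      linarith [step]
    exact le_of_mul_le_mul_right hmul hh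
end
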